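/- arXiv:2409.09498 — 4 statements merged into one kernel-verified Lean document; each statement's English description precedes it below -/
import Mathlib

section
/- Let M_n = max(Δ_1, …, Δ_n). Then for any r > 0 and 0 < α ≤ 1, sup_{n ≥ 1} E[((M_n + 1)/b_n)^{-r}] < ∞. -/
open MeasureTheory ProbabilityTheory Filter Set Topology
open scoped ENNReal ProbabilityTheory

private lemma aux_pow_rpow (c : ℝ) (hc : 0 ≤ c) (s : ℝ) (k : ℕ) :
    (c ^ k) ^ s = (c ^ s) ^ k := by
  rw [← Real.rpow_natCast c k, ← Real.rpow_mul hc, mul_comm, Real.rpow_mul hc,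
    Real.rpow_natCast]

private lemma aux_div_rpow_neg (r : ℝ) (hr : 0 < r) (a c : ℝ) (ha : 0 < a) (hc : 0 ≤ c) :
    (a / c) ^ (-r) = (c / a) ^ r := by
  rcases eq_or_lt_of_le hc with h | h
  · rw [← h, div_zero, zero_div, Real.zero_rpow (neg_ne_zero.mpr hr.ne'),
      Real.zero_rpow hr.ne']
  · rw [Real.rpow_neg (by positivity), ← Real.inv_rpow (by positivity), inv_div]

set_option maxHeartbeats 4000000 in
/-- Let `Δ 0, Δ 1, …` be i.i.d. positive random variables with
`P(Δ ≥ x) = x^{-α} ℓ(x)` for `x ≥ 1`, `0 < α ≤ 1`, `ℓ` slowly varying, and let `b n` be the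
quantile of order `1 - 1/n`. With `Mₙ = max(Δ 0, …, Δ (n-1))`, for any `r > 0`,
`sup_{n ≥ 1} E[((Mₙ + 1)/bₙ)^{-r}] < ∞`. -/
theorem stmt0 {Ω : Type*} [MeasureSpace Ω] [IsProbabilityMeasure (ℙ : Measure Ω)]
    (Δ : ℕ → Ω → ℝ) (hmeas : ∀ i, Measurable (Δ i))
    (hindep : iIndepFun Δ ℙ)
    (hident : ∀ i, IdentDistrib (Δ i) (Δ 0) ℙ ℙ)
    (hpos : ∀ i ω, 0 < Δ i ω)
    (α : ℝ) (hα0 : 0 < α) (hα1 : α ≤ 1)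
    (ℓ : ℝ → ℝ)
    (hslow : ∀ lam : ℝ, 0 < lam → Tendsto (fun x => ℓ (lam * x) / ℓ x) atTop (𝓝 1))
    (htail : ∀ x : ℝ, 1 ≤ x → (ℙ {ω | x ≤ Δ 0 ω}).toReal = x ^ (-α) * ℓ x)
    (b : ℕ → ℝ)
    (hb : ∀ n : ℕ, 1 ≤ n → (ℙ {ω | Δ 0 ω ≤ b n}).toReal = 1 - 1 / n)
    (r : ℝ) (hr : 0 < r) :
    ∃ C : ℝ≥0∞, C < ⊤ ∧ ∀ n : ℕ, 1 ≤ n →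
      ∫⁻ ω, ENNReal.ofReal ((((⨆ i : Fin n, Δ i ω) + 1) / b n) ^ (-r)) ∂ℙ ≤ C := by
  classical
  set T : ℝ → ℝ := fun x => (ℙ {ω | x ≤ Δ 0 ω}).toReal with hTdef
  set F : ℝ → ℝ := fun x => (ℙ {ω | Δ 0 ω ≤ x}).toReal with hFdef
  have hmeasIci : ∀ x : ℝ, MeasurableSet {ω | x ≤ Δ 0 ω} := fun x =>
    (hmeas 0) measurableSet_Ici
  have hmeasIic : ∀ x : ℝ, MeasurableSet {ω | Δ 0 ω ≤ x} := fun x =>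
    (hmeas 0) measurableSet_Iic
  have hT0 : ∀ x, 0 ≤ T x := fun x => ENNReal.toReal_nonneg
  have hT1 : ∀ x, T x ≤ 1 := fun x => by
    simpa using ENNReal.toReal_mono (by norm_num) (prob_le_one (μ := ℙ))
  have hF0 : ∀ x, 0 ≤ F x := fun x => ENNReal.toReal_nonneg
  have hTanti : ∀ x y : ℝ, x ≤ y → T y ≤ T x := by
    intro x y hxy
    exact ENNReal.toReal_mono (measure_ne_top _ _)
      (measure_mono (fun ω hω => le_trans hxy hω))
  have hFmono : ∀ x y : ℝ, x ≤ y → F x ≤ F y := by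
    intro x y hxy
    exact ENNReal.toReal_mono (measure_ne_top _ _)
      (measure_mono (fun ω hω => le_trans hω hxy))
  have hsum : ∀ x y : ℝ, x < y → F x + T y ≤ 1 := by
    intro x y hxy
    have hdisj : Disjoint {ω | Δ 0 ω ≤ x} {ω | y ≤ Δ 0 ω} := by
      rw [Set.disjoint_left]
      intro ω h1 h2
      simp only [Set.mem_setOf_eq] at h1 h2
      linarith
    have hun := measure_union (μ := ℙ) hdisj (hmeasIci y)
    have hle : ℙ ({ω | Δ 0 ω ≤ x} ∪ {ω | y ≤ Δ 0 ω}) ≤ 1 := prob_le_one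
    rw [hun] at hle
    have := ENNReal.toReal_mono (by norm_num) hle
    rwa [ENNReal.toReal_add (measure_ne_top _ _) (measure_ne_top _ _),
      ENNReal.toReal_one] at this
  have hTb : ∀ n : ℕ, 1 ≤ n → 1 / (n : ℝ) ≤ T (b n) := by
    intro n hn
    have hcompl : ℙ {ω | Δ 0 ω ≤ b n}ᶜ = 1 - ℙ {ω | Δ 0 ω ≤ b n} :=
      prob_compl_eq_one_sub (hmeasIic (b n))
    have hsubset : {ω | Δ 0 ω ≤ b n}ᶜ ⊆ {ω | b n ≤ Δ 0 ω} := by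
      intro ω hω
      simp only [Set.mem_compl_iff, Set.mem_setOf_eq, not_le] at hω ⊢
      exact hω.le
    have h1 : (ℙ {ω | Δ 0 ω ≤ b n}ᶜ).toReal ≤ T (b n) :=
      ENNReal.toReal_mono (measure_ne_top _ _) (measure_mono hsubset)
    have h2 : (ℙ {ω | Δ 0 ω ≤ b n}ᶜ).toReal = 1 / (n : ℝ) := by
      rw [hcompl, ENNReal.toReal_sub_of_le prob_le_one (by norm_num), ENNReal.toReal_one]
      rw [hb n hn]
      ring
    linarith
  have hl_eq : ∀ x : ℝ, 1 ≤ x → ℓ x = x ^ α * T x := by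
    intro x hx
    have hx0 : (0:ℝ) < x := lt_of_lt_of_le one_pos hx
    have h := htail x hx
    simp only [hTdef]
    rw [h, ← mul_assoc, ← Real.rpow_add hx0]
    norm_num
  have hl_nonneg : ∀ x : ℝ, 1 ≤ x → 0 ≤ ℓ x := by
    intro x hx
    rw [hl_eq x hx]
    have : (0:ℝ) < x := lt_of_lt_of_le one_pos hx
    positivity
  -- slow variation: choose threshold X
  have hq1 : (1:ℝ) < 2 ^ (α / 2) := by
    rw [show (1:ℝ) = 2 ^ (0:ℝ) by simp]
    exact Real.rpow_lt_rpow_of_exponent_lt one_lt_two (by linarith)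
  have hqinv_lt : (2:ℝ) ^ (-(α / 2)) < 1 :=
    Real.rpow_lt_one_of_one_lt_of_neg one_lt_two (by linarith)
  have hqinv_pos : (0:ℝ) < 2 ^ (-(α / 2)) := Real.rpow_pos_of_pos two_pos _
  have hE1 : ∀ᶠ x in atTop, (2:ℝ) ^ (-(α/2)) ≤ ℓ (1/2 * x) / ℓ x :=
    (hslow (1/2) (by norm_num)).eventually (eventually_ge_nhds hqinv_lt)
  have hE2 : ∀ᶠ x in atTop, ℓ (2 * x) / ℓ x ≤ 2 ^ (α/2) :=
    (hslow 2 (by norm_num)).eventually (eventually_le_nhds hq1)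
  obtain ⟨X₀, hX₀⟩ := (hE1.and hE2).exists_forall_of_atTop
  set X : ℝ := max X₀ 2 with hXdef
  have hX2 : (2:ℝ) ≤ X := le_max_right _ _
  have hX0 : (0:ℝ) < X := by linarith
  have hX1 : (1:ℝ) ≤ X := by linarith
  have hE1' : ∀ x : ℝ, X ≤ x → (2:ℝ) ^ (-(α/2)) ≤ ℓ (x/2) / ℓ x := by
    intro x hx
    have := (hX₀ x (le_trans (le_max_left _ _) hx)).1
    rwa [show (1:ℝ)/2 * x = x/2 by ring] at this
  have hE2' : ∀ x : ℝ, X ≤ x → ℓ (2 * x) / ℓ x ≤ 2 ^ (α/2) := fun x hx =>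
    (hX₀ x (le_trans (le_max_left _ _) hx)).2
  have hlpos : ∀ x : ℝ, X ≤ x → 0 < ℓ x := by
    intro x hx
    have hge : 0 ≤ ℓ x := hl_nonneg x (by linarith)
    rcases eq_or_lt_of_le hge with h | h
    · exfalso
      have := hE1' x hx
      rw [← h, div_zero] at this
      linarith
    · exact h
  set q : ℝ := 2 ^ (α / 2) with hqdef
  have hqpos : (0:ℝ) < q := Real.rpow_pos_of_pos two_pos _
  have hTdown : ∀ x : ℝ, X ≤ x → q * T x ≤ T (x / 2) := by
    intro x hx
    have hx1 : (1:ℝ) ≤ x := by linarith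
    have hx0 : (0:ℝ) < x := by linarith
    have hx2 : (1:ℝ) ≤ x / 2 := by linarith
    have hlx : 0 < ℓ x := hlpos x hx
    have hl : (2:ℝ) ^ (-(α/2)) * ℓ x ≤ ℓ (x/2) := (le_div_iff₀ hlx).mp (hE1' x hx)
    have hTx : T x = x ^ (-α) * ℓ x := htail x hx1
    have hTx2 : T (x/2) = (x/2) ^ (-α) * ℓ (x/2) := htail _ hx2
    have e1 : (x/2) ^ (-α) = x ^ (-α) * (2:ℝ) ^ α := by
      rw [Real.div_rpow hx0.le (by norm_num : (0:ℝ) ≤ 2), Real.rpow_neg (by norm_num : (0:ℝ) ≤ 2),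
        div_eq_mul_inv, inv_inv]
    have e2 : (2:ℝ) ^ α * 2 ^ (-(α/2)) = q := by
      rw [hqdef, ← Real.rpow_add two_pos]
      ring_nf
    calc q * T x = q * (x ^ (-α) * ℓ x) := by rw [hTx]
      _ = (x ^ (-α) * (2:ℝ) ^ α) * ((2:ℝ) ^ (-(α/2)) * ℓ x) := by rw [← e2]; ring
      _ ≤ (x ^ (-α) * (2:ℝ) ^ α) * ℓ (x/2) := by
          apply mul_le_mul_of_nonneg_left hl
          positivity
      _ = T (x/2) := by rw [hTx2, e1]
  have hTup : ∀ x : ℝ, X ≤ x → q * T (2 * x) ≤ T x := by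
    intro x hx
    have hx1 : (1:ℝ) ≤ x := by linarith
    have hx0 : (0:ℝ) < x := by linarith
    have h2x1 : (1:ℝ) ≤ 2 * x := by linarith
    have hlx : 0 < ℓ x := hlpos x hx
    have hl2 : ℓ (2 * x) ≤ q * ℓ x := by
      have := (div_le_iff₀ hlx).mp (hE2' x hx)
      rw [hqdef]
      linarith
    have hTx : T x = x ^ (-α) * ℓ x := htail x hx1
    have hT2x : T (2 * x) = (2 * x) ^ (-α) * ℓ (2 * x) := htail _ h2x1
    have e1 : ((2:ℝ) * x) ^ (-α) = (2:ℝ) ^ (-α) * x ^ (-α) :=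
      Real.mul_rpow (by norm_num) hx0.le
    have e2 : q * q = (2:ℝ) ^ α := by
      rw [hqdef, ← Real.rpow_add two_pos]
      ring_nf
    have e3 : (2:ℝ) ^ α * (2:ℝ) ^ (-α) = 1 := by
      rw [← Real.rpow_add two_pos]
      norm_num
    calc q * T (2 * x) = q * ((2 * x) ^ (-α) * ℓ (2 * x)) := by rw [hT2x]
      _ ≤ q * ((2 * x) ^ (-α) * (q * ℓ x)) := by
          apply mul_le_mul_of_nonneg_left _ hqpos.le
          apply mul_le_mul_of_nonneg_left hl2
          positivity
      _ = (q * q) * ((2:ℝ) ^ (-α) * (x ^ (-α) * ℓ x)) := by rw [e1]; ring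
      _ = ((2:ℝ) ^ α * (2:ℝ) ^ (-α)) * (x ^ (-α) * ℓ x) := by rw [e2]; ring
      _ = T x := by rw [e3, hTx, one_mul]
  have hiter : ∀ (j : ℕ) (x : ℝ), (2:ℝ) ^ j * X ≤ 2 * x → q ^ j * T x ≤ T (x / 2 ^ j) := by
    intro j
    induction j with
    | zero => intro x _; simp
    | succ j ih =>
      intro x hx
      have hp : (0:ℝ) < 2 ^ j := by positivity
      have h2 : (2:ℝ) ^ (j+1) = 2 ^ j * 2 := pow_succ 2 j
      have hXpos : (0:ℝ) < X := hX0
      have hjX : (2:ℝ) ^ j * X ≤ x := by nlinarith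
      have hxX : X ≤ x / 2 ^ j := (le_div_iff₀ hp).mpr (by linarith)
      have hx' : (2:ℝ) ^ j * X ≤ 2 * x := by nlinarith
      have e : x / 2 ^ (j+1) = (x / 2 ^ j) / 2 := by
        rw [div_div, ← h2]
      calc q ^ (j+1) * T x = q * (q ^ j * T x) := by ring
        _ ≤ q * T (x / 2 ^ j) := by
            apply mul_le_mul_of_nonneg_left (ih x hx') hqpos.le
        _ ≤ T ((x / 2 ^ j) / 2) := hTdown _ hxX
        _ = T (x / 2 ^ (j+1)) := by rw [e]
  have hiter2 : ∀ m : ℕ, q ^ m * T (2 ^ m * X) ≤ 1 := by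
    intro m
    induction m with
    | zero => simpa using hT1 X
    | succ m ih =>
      have h1 : (1:ℝ) ≤ 2 ^ m := one_le_pow₀ (by norm_num)
      have hXle : X ≤ 2 ^ m * X := le_mul_of_one_le_left hX0.le h1
      have e : (2:ℝ) ^ (m+1) * X = 2 * (2 ^ m * X) := by ring
      calc q ^ (m+1) * T (2 ^ (m+1) * X) = q ^ m * (q * T (2 * (2 ^ m * X))) := by
            rw [e]; ring
        _ ≤ q ^ m * T (2 ^ m * X) := by
            apply mul_le_mul_of_nonneg_left (hTup _ hXle) (by positivity)
        _ ≤ 1 := ih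
  set c₃ : ℝ := (2 * X) ^ (α/2) with hc₃def
  have hc₃pos : (0:ℝ) < c₃ := Real.rpow_pos_of_pos (by linarith) _
  have hTupper : ∀ x : ℝ, X ≤ x → T x ≤ c₃ * x ^ (-(α/2)) := by
    intro x hx
    have hx0 : (0:ℝ) < x := by linarith
    have hdiv1 : (1:ℝ) ≤ x / X := (one_le_div hX0).mpr hx
    set t : ℕ := ⌊x / X⌋₊ with htdef
    have ht1 : 1 ≤ t := Nat.le_floor (by exact_mod_cast hdiv1)
    set m : ℕ := Nat.log 2 t with hmdef
    have hm1 : ((2:ℝ)) ^ m ≤ x / X := by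
      have h := Nat.pow_log_le_self 2 (by omega : t ≠ 0)
      have h2 : ((2 ^ m : ℕ) : ℝ) ≤ (t : ℝ) := by exact_mod_cast h
      have h3 : (t : ℝ) ≤ x / X := Nat.floor_le (by positivity)
      push_cast at h2
      linarith
    have hm2 : x / X < 2 ^ (m+1) := by
      have h := Nat.lt_pow_succ_log_self (by norm_num : 1 < 2) t
      have h2 : (t:ℕ) + 1 ≤ 2 ^ (m+1) := h
      have h3 : x / X < (t : ℝ) + 1 := Nat.lt_floor_add_one _
      have h4 : ((t:ℝ) + 1) ≤ ((2:ℝ)) ^ (m+1) := by exact_mod_cast h2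
      linarith
    have h2mX : (2:ℝ) ^ m * X ≤ x := (le_div_iff₀ hX0).mp hm1
    have hqm : (0:ℝ) < q ^ m := by positivity
    have hT2m : T (2 ^ m * X) ≤ (q ^ m)⁻¹ := by
      calc T (2 ^ m * X) = (q ^ m)⁻¹ * (q ^ m * T (2 ^ m * X)) := by field_simp
        _ ≤ (q ^ m)⁻¹ * 1 := mul_le_mul_of_nonneg_left (hiter2 m) (by positivity)
        _ = (q ^ m)⁻¹ := mul_one _
    have hbase : x / (2 * X) ≤ 2 ^ m := by
      rw [div_le_iff₀ (by linarith : (0:ℝ) < 2 * X)]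
      have : ((2:ℝ)) ^ (m+1) = 2 ^ m * 2 := pow_succ 2 m
      have := (div_lt_iff₀ hX0).mp hm2
      nlinarith
    have hbpos : (0:ℝ) < x / (2 * X) := by positivity
    have hrpow : (x / (2 * X)) ^ (α/2) ≤ q ^ m := by
      have h1 : (x / (2 * X)) ^ (α/2) ≤ ((2:ℝ) ^ m) ^ (α/2) :=
        Real.rpow_le_rpow hbpos.le hbase (by linarith)
      rwa [aux_pow_rpow 2 (by norm_num) (α/2) m, ← hqdef] at h1
    have hrpos : (0:ℝ) < (x / (2 * X)) ^ (α/2) := Real.rpow_pos_of_pos hbpos _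
    have hinv : (q ^ m)⁻¹ ≤ ((x / (2 * X)) ^ (α/2))⁻¹ :=
      inv_anti₀ hrpos hrpow
    have e : ((x / (2 * X)) ^ (α/2))⁻¹ = c₃ * x ^ (-(α/2)) := by
      rw [Real.div_rpow hx0.le (by linarith : (0:ℝ) ≤ 2 * X), inv_div, hc₃def,
        Real.rpow_neg hx0.le, div_eq_mul_inv]
    calc T x ≤ T (2 ^ m * X) := hTanti _ _ h2mX
      _ ≤ (q ^ m)⁻¹ := hT2m
      _ ≤ ((x / (2 * X)) ^ (α/2))⁻¹ := hinv
      _ = c₃ * x ^ (-(α/2)) := e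
  set c₁ : ℝ := T (2 * X) with hc₁def
  have hc₁pos : (0:ℝ) < c₁ := by
    have h2X1 : (1:ℝ) ≤ 2 * X := by linarith
    have := htail (2 * X) h2X1
    rw [hc₁def]
    show (0:ℝ) < T (2 * X)
    rw [show T (2 * X) = (2*X) ^ (-α) * ℓ (2*X) from this]
    have hl2X : 0 < ℓ (2 * X) := hlpos _ (by linarith)
    positivity
  have hc₁le1 : c₁ ≤ 1 := hT1 _
  have hbub : ∀ n : ℕ, 1 ≤ n → X ≤ b n → b n ≤ (c₃ * n) ^ (2/α) := by
    intro n hn hXb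
    have hbp : (0:ℝ) < b n := by linarith
    have hn0 : (0:ℝ) < (n:ℝ) := by exact_mod_cast hn
    have h1 : 1/(n:ℝ) ≤ c₃ * (b n) ^ (-(α/2)) := le_trans (hTb n hn) (hTupper _ hXb)
    have e : (b n) ^ (-(α/2)) * (b n) ^ (α/2) = 1 := by
      rw [← Real.rpow_add hbp]
      norm_num
    have h3 := mul_le_mul_of_nonneg_right h1
      (show (0:ℝ) ≤ (n:ℝ) * (b n) ^ (α/2) by positivity)
    have h2 : (b n) ^ (α/2) ≤ c₃ * n := by
      calc (b n) ^ (α/2) = 1/(n:ℝ) * ((n:ℝ) * (b n) ^ (α/2)) := by field_simp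
        _ ≤ c₃ * (b n) ^ (-(α/2)) * ((n:ℝ) * (b n) ^ (α/2)) := h3
        _ = c₃ * (n:ℝ) * ((b n) ^ (-(α/2)) * (b n) ^ (α/2)) := by ring
        _ = c₃ * n := by rw [e, mul_one]
    have e2 : ((b n) ^ (α/2)) ^ (2/α) = b n := by
      rw [← Real.rpow_mul hbp.le, show α/2 * (2/α) = 1 by field_simp, Real.rpow_one]
    calc b n = ((b n) ^ (α/2)) ^ (2/α) := e2.symm
      _ ≤ (c₃ * n) ^ (2/α) := Real.rpow_le_rpow (by positivity) h2 (by positivity)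
  set N : ℕ := max 2 (⌈1/c₁⌉₊ + 1) with hNdef
  have hN2 : 2 ≤ N := le_max_left _ _
  have hNb : ∀ n : ℕ, N ≤ n → X ≤ b n := by
    intro n hn
    by_contra hcon
    push_neg at hcon
    have hn1 : 1 ≤ n := by omega
    have hF : F (b n) ≤ F X := hFmono _ _ hcon.le
    have hFX : F X ≤ 1 - c₁ := by
      have := hsum X (2*X) (by linarith)
      rw [hc₁def]
      linarith
    have hFbn : F (b n) = 1 - 1/(n:ℝ) := hb n hn1
    have hn0 : (0:ℝ) < (n:ℝ) := by exact_mod_cast hn1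
    have h1 : c₁ ≤ 1/(n:ℝ) := by rw [hFbn] at hF; linarith
    have h2 : (n:ℝ) * c₁ ≤ 1 := by
      have := (le_div_iff₀ hn0).mp h1
      linarith
    have h3 : (1:ℝ)/c₁ ≤ ⌈1/c₁⌉₊ := Nat.le_ceil _
    have h4 : ((⌈1/c₁⌉₊ + 1 : ℕ) : ℝ) ≤ (N:ℝ) := by
      exact_mod_cast Nat.cast_le.mpr (le_max_right 2 (⌈1/c₁⌉₊ + 1))
    have h5 : ((N:ℕ):ℝ) ≤ (n:ℝ) := Nat.cast_le.mpr hn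
    have h6 : (n:ℝ) ≤ 1/c₁ := by
      rw [le_div_iff₀ hc₁pos]
      linarith
    push_cast at h4
    linarith
  set c₅ : ℝ := c₁ / (2 * c₃) with hc₅def
  have hc₅pos : (0:ℝ) < c₅ := by positivity
  set c₆ : ℝ := min ((2:ℝ) ^ (-(α/2))) c₅ with hc₆def
  have hc₆pos : (0:ℝ) < c₆ := lt_min hqinv_pos hc₅pos
  have hc₆c₅ : c₆ ≤ c₅ := min_le_right _ _
  have hc₆q : c₆ * q ≤ 1 := by
    have h1 : c₆ ≤ 2 ^ (-(α/2)) := min_le_left _ _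
    have e : (2:ℝ) ^ (-(α/2)) * q = 1 := by
      rw [hqdef, ← Real.rpow_add two_pos]
      norm_num
    calc c₆ * q ≤ (2:ℝ) ^ (-(α/2)) * q := mul_le_mul_of_nonneg_right h1 hqpos.le
      _ = 1 := e
  set u : ℕ → ℝ := fun n => (2 * (c₃ * n) ^ (2/α)) ^ r * Real.exp (-(c₁/2 * n)) with hudef
  have hutend : Tendsto u atTop (𝓝 0) := by
    have h0 : Tendsto (fun x : ℝ => x ^ (2*r/α) * Real.exp (-(c₁/2) * x)) atTop (𝓝 0) :=
      tendsto_rpow_mul_exp_neg_mul_atTop_nhds_zero _ _ (by positivity)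
    have h1 : Tendsto (fun x : ℝ =>
        ((2:ℝ)^r * c₃ ^ (2*r/α)) * (x ^ (2*r/α) * Real.exp (-(c₁/2) * x))) atTop (𝓝 0) := by
      have h0' := h0.const_mul ((2:ℝ)^r * c₃ ^ (2*r/α))
      rw [mul_zero] at h0'
      exact h0'
    have h2 := h1.comp tendsto_natCast_atTop_atTop
    apply h2.congr
    intro n
    show ((2:ℝ)^r * c₃ ^ (2*r/α)) * (((n:ℝ)) ^ (2*r/α) * Real.exp (-(c₁/2) * n)) = u n
    have e1 : (2 * (c₃ * (n:ℝ)) ^ (2/α)) ^ r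
        = (2:ℝ)^r * (c₃ ^ (2*r/α) * (n:ℝ) ^ (2*r/α)) := by
      rw [Real.mul_rpow (by norm_num : (0:ℝ) ≤ 2) (by positivity),
        ← Real.rpow_mul (by positivity : (0:ℝ) ≤ c₃ * (n:ℝ)),
        show (2/α) * r = 2*r/α by ring,
        Real.mul_rpow hc₃pos.le (Nat.cast_nonneg n)]
    rw [hudef]
    simp only
    rw [e1]
    ring_nf
  obtain ⟨D, hD⟩ := hutend.bddAbove_range
  have hDle : ∀ n : ℕ, u n ≤ D := fun n => hD ⟨n, rfl⟩
  set Abig : ℝ≥0∞ := ENNReal.ofReal (max (max D 1) (Real.exp c₆)) with hAdef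
  have hA1 : (1:ℝ≥0∞) ≤ Abig := by
    rw [hAdef]
    exact ENNReal.one_le_ofReal.mpr (le_trans (le_max_right D 1) (le_max_left _ _))
  have hAtop : Abig ≠ ⊤ := ENNReal.ofReal_ne_top
  set ρ : ℝ≥0∞ := ENNReal.ofReal ((2:ℝ) ^ r) with hρdef
  have h2r1 : (1:ℝ) ≤ (2:ℝ) ^ r := Real.one_le_rpow one_le_two hr.le
  have hρ1 : (1:ℝ≥0∞) ≤ ρ := ENNReal.one_le_ofReal.mpr h2r1
  set s : ℕ → ℝ := fun k => ((2:ℝ)^r) ^ (k+1) * Real.exp (-(c₆ * q ^ k)) with hsdef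
  have hspos : ∀ k, 0 < s k := fun k => by
    have h2 : (0:ℝ) < (2:ℝ)^r := by linarith
    rw [hsdef]
    positivity
  have hssummable : Summable s := by
    apply summable_of_ratio_norm_eventually_le (r := 1/2) (by norm_num)
    have hqk : Tendsto (fun k : ℕ => q ^ k) atTop atTop :=
      tendsto_pow_atTop_atTop_of_one_lt hq1
    have h1 : Tendsto (fun k : ℕ => c₆ * (q - 1) * q ^ k) atTop atTop :=
      hqk.const_mul_atTop (by nlinarith [hc₆pos, hq1])
    have h2 : Tendsto (fun k : ℕ => Real.exp (-(c₆ * (q - 1) * q ^ k))) atTop (𝓝 0) := by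
      have := Real.tendsto_exp_neg_atTop_nhds_zero.comp h1
      exact this
    have htend0 : Tendsto (fun k : ℕ =>
        (2:ℝ)^r * Real.exp (-(c₆ * (q - 1) * q ^ k))) atTop (𝓝 0) := by
      have h3 := h2.const_mul ((2:ℝ)^r)
      rw [mul_zero] at h3
      exact h3
    have hev : ∀ᶠ k : ℕ in atTop,
        (2:ℝ)^r * Real.exp (-(c₆ * (q - 1) * q ^ k)) ≤ 1/2 :=
      htend0.eventually (eventually_le_nhds (by norm_num))
    filter_upwards [hev] with k hk
    have e : s (k+1) = s k * ((2:ℝ)^r * Real.exp (-(c₆ * (q - 1) * q ^ k))) := by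
      rw [hsdef]
      simp only
      rw [pow_succ q k,
        show -(c₆ * (q ^ k * q)) = -(c₆ * q ^ k) + -(c₆ * (q-1) * q ^ k) by ring,
        Real.exp_add]
      ring
    rw [Real.norm_eq_abs, Real.norm_eq_abs, abs_of_pos (hspos _), abs_of_pos (hspos _), e]
    calc s k * ((2:ℝ)^r * Real.exp (-(c₆ * (q - 1) * q ^ k)))
        ≤ s k * (1/2) := mul_le_mul_of_nonneg_left hk (hspos k).le
      _ = 1/2 * s k := by ring
  set w : ℕ → ℝ≥0∞ := fun k => ρ ^ (k+1) * ENNReal.ofReal (Real.exp (-(c₆ * q ^ k))) with hwdef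
  have hw_eq : ∀ k, w k = ENNReal.ofReal (s k) := by
    intro k
    rw [hwdef, hsdef]
    simp only
    rw [hρdef, ← ENNReal.ofReal_pow (by linarith), ← ENNReal.ofReal_mul (by positivity)]
  have hWsum : ∑' k, w k = ENNReal.ofReal (∑' k, s k) := by
    rw [ENNReal.ofReal_tsum_of_nonneg (fun k => (hspos k).le) hssummable]
    exact tsum_congr hw_eq
  have hWfin : ∑' k, w k ≠ ⊤ := by
    rw [hWsum]
    exact ENNReal.ofReal_ne_top
  -- crude bound valid for every n ≥ 1
  have hcrude : ∀ n : ℕ, 1 ≤ n →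
      ∫⁻ ω, ENNReal.ofReal ((((⨆ i : Fin n, Δ i ω) + 1) / b n) ^ (-r)) ∂ℙ
        ≤ ENNReal.ofReal ((max 1 |b n|) ^ r) := by
    intro n hn
    have hpt : ∀ ω : Ω, ENNReal.ofReal ((((⨆ i : Fin n, Δ i ω) + 1) / b n) ^ (-r))
        ≤ ENNReal.ofReal ((max 1 |b n|) ^ r) := by
      intro ω
      apply ENNReal.ofReal_le_ofReal
      set x : ℝ := (⨆ i : Fin n, Δ i ω) + 1 with hxdef
      have hx1 : (1:ℝ) ≤ x := by
        have h0 : (0:ℝ) < Δ 0 ω := hpos 0 ω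
        have h1 : Δ ((⟨0, hn⟩ : Fin n) : ℕ) ω ≤ ⨆ j : Fin n, Δ (j:ℕ) ω :=
          le_ciSup (Set.Finite.bddAbove (Set.finite_range (fun j : Fin n => Δ (j:ℕ) ω)))
            (⟨0, hn⟩ : Fin n)
        simp only [Fin.val_mk] at h1
        rw [hxdef]
        linarith
      have hx0 : (0:ℝ) < x := by linarith
      calc (x / b n) ^ (-r) ≤ |(x / b n) ^ (-r)| := le_abs_self _
        _ ≤ |x / b n| ^ (-r) := Real.abs_rpow_le_abs_rpow _ _
        _ = (x / |b n|) ^ (-r) := by rw [abs_div, abs_of_pos hx0]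
        _ = (|b n| / x) ^ r := aux_div_rpow_neg r hr x |b n| hx0 (abs_nonneg _)
        _ ≤ (max 1 |b n|) ^ r := by
            apply Real.rpow_le_rpow (by positivity) _ hr.le
            exact le_trans (div_le_self (abs_nonneg _) hx1) (le_max_right _ _)
    calc ∫⁻ ω, ENNReal.ofReal ((((⨆ i : Fin n, Δ i ω) + 1) / b n) ^ (-r)) ∂ℙ
        ≤ ∫⁻ _ω, ENNReal.ofReal ((max 1 |b n|) ^ r) ∂ℙ := lintegral_mono hpt
      _ = ENNReal.ofReal ((max 1 |b n|) ^ r) := by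
          rw [lintegral_const, measure_univ, mul_one]
  -- main bound for n ≥ N
  have hmain : ∀ n : ℕ, N ≤ n →
      ∫⁻ ω, ENNReal.ofReal ((((⨆ i : Fin n, Δ i ω) + 1) / b n) ^ (-r)) ∂ℙ
        ≤ 1 + Abig * ∑' k, w k := by
    intro n hnN
    have hn1 : 1 ≤ n := by omega
    have hn0R : (0:ℝ) < (n:ℝ) := by exact_mod_cast hn1
    have hXbn : X ≤ b n := hNb n hnN
    have hbpos : (0:ℝ) < b n := by linarith
    have hbn_ub : b n ≤ (c₃ * n) ^ (2/α) := hbub n hn1 hXbn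
    set A : ℕ → Set Ω := fun k => ⋂ i ∈ Finset.range n, (Δ i) ⁻¹' (Iic (b n / 2 ^ k - 1))
      with hACdef
    have hAmeas : ∀ k, MeasurableSet (A k) := fun k =>
      MeasurableSet.biInter (Finset.range n).countable_toSet
        (fun i _ => (hmeas i) measurableSet_Iic)
    have hAprob : ∀ k, ℙ (A k) = (ℙ ((Δ 0) ⁻¹' (Iic (b n / 2 ^ k - 1)))) ^ n := by
      intro k
      rw [hACdef]
      simp only
      rw [hindep.meas_biInter (fun i _ => ⟨Iic _, measurableSet_Iic, rfl⟩)]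
      rw [Finset.prod_congr rfl
        (fun i _ => (hident i).measure_mem_eq measurableSet_Iic)]
      simp
    have hpoint : ∀ ω : Ω, ENNReal.ofReal ((((⨆ i : Fin n, Δ i ω) + 1) / b n) ^ (-r))
        ≤ 1 + ∑' k, (A k).indicator (fun _ => ρ ^ (k+1)) ω := by
      intro ω
      set x : ℝ := (⨆ i : Fin n, Δ i ω) + 1 with hxdef
      have hsupmem : ∀ i : Fin n, Δ (i:ℕ) ω ≤ ⨆ j : Fin n, Δ (j:ℕ) ω := fun i =>
        le_ciSup (Set.Finite.bddAbove (Set.finite_range (fun j : Fin n => Δ (j:ℕ) ω))) i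
      have hx1 : (1:ℝ) < x := by
        have h0 : (0:ℝ) < Δ 0 ω := hpos 0 ω
        have h1 := hsupmem (⟨0, hn1⟩ : Fin n)
        simp only [Fin.val_mk] at h1
        rw [hxdef]
        linarith
      have hx0 : (0:ℝ) < x := by linarith
      by_cases hxb : b n ≤ x
      · have h1 : (1:ℝ) ≤ x / b n := (one_le_div hbpos).mpr hxb
        have h2 : (x / b n) ^ (-r) ≤ 1 :=
          Real.rpow_le_one_of_one_le_of_nonpos h1 (by linarith)
        calc ENNReal.ofReal ((x / b n) ^ (-r)) ≤ ENNReal.ofReal 1 :=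
              ENNReal.ofReal_le_ofReal h2
          _ = 1 := ENNReal.ofReal_one
          _ ≤ 1 + ∑' k, (A k).indicator (fun _ => ρ ^ (k+1)) ω := le_self_add
      · push_neg at hxb
        set t : ℝ := b n / x with htdef'
        have ht1 : (1:ℝ) < t := (one_lt_div hx0).mpr hxb
        set tn : ℕ := ⌊t⌋₊ with htndef
        have htn1 : 1 ≤ tn := Nat.le_floor (by exact_mod_cast ht1.le)
        set k : ℕ := Nat.log 2 tn with hkdef
        have h2k : ((2:ℝ)) ^ k ≤ t := by
          have h := Nat.pow_log_le_self 2 (by omega : tn ≠ 0)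
          have h2 : ((2 ^ k : ℕ) : ℝ) ≤ (tn : ℝ) := by exact_mod_cast h
          have h3 : (tn : ℝ) ≤ t := Nat.floor_le (by positivity)
          push_cast at h2
          linarith
        have h2k' : t < 2 ^ (k+1) := by
          have h2 : (tn:ℕ) + 1 ≤ 2 ^ (k+1) := Nat.lt_pow_succ_log_self (by norm_num) tn
          have h3 : t < (tn : ℝ) + 1 := Nat.lt_floor_add_one _
          have h4 : ((tn:ℝ) + 1) ≤ ((2:ℝ)) ^ (k+1) := by exact_mod_cast h2
          linarith
        have hmemA : ω ∈ A k := by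
          rw [hACdef]
          simp only [Set.mem_iInter, Set.mem_preimage, Set.mem_Iic]
          intro i hi
          have hxle : x ≤ b n / 2 ^ k := by
            rw [le_div_iff₀ (by positivity : (0:ℝ) < (2:ℝ)^k)]
            have h5 := (le_div_iff₀ hx0).mp h2k
            linarith
          have h6 : Δ i ω ≤ x - 1 := by
            have h7 : Δ i ω ≤ ⨆ j : Fin n, Δ (j:ℕ) ω :=
              hsupmem (⟨i, Finset.mem_range.mp hi⟩ : Fin n)
            rw [hxdef]
            simpa using h7
          linarith
        have hLHS : ENNReal.ofReal ((x / b n) ^ (-r)) ≤ ρ ^ (k+1) := by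
          have e1 : (x / b n) ^ (-r) = t ^ r := by
            rw [htdef']
            exact aux_div_rpow_neg r hr x (b n) hx0 hbpos.le
          have e3 : (((2:ℝ)) ^ (k+1)) ^ r = ((2:ℝ) ^ r) ^ (k+1) :=
            aux_pow_rpow 2 (by norm_num) r (k+1)
          have e2 : t ^ r ≤ ((2:ℝ) ^ r) ^ (k+1) := by
            rw [← e3]
            exact Real.rpow_le_rpow (by positivity) h2k'.le hr.le
          calc ENNReal.ofReal ((x / b n) ^ (-r)) = ENNReal.ofReal (t ^ r) := by rw [e1]
            _ ≤ ENNReal.ofReal (((2:ℝ)^r) ^ (k+1)) := ENNReal.ofReal_le_ofReal e2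
            _ = ρ ^ (k+1) := by rw [hρdef, ENNReal.ofReal_pow (by linarith)]
        have hterm : ρ ^ (k+1) ≤ ∑' j, (A j).indicator (fun _ => ρ ^ (j+1)) ω := by
          have h8 : (A k).indicator (fun _ => ρ ^ (k+1)) ω = ρ ^ (k+1) :=
            Set.indicator_of_mem hmemA _
          rw [← h8]
          exact ENNReal.le_tsum k
        calc ENNReal.ofReal ((x / b n) ^ (-r)) ≤ ρ ^ (k+1) := hLHS
          _ ≤ ∑' j, (A j).indicator (fun _ => ρ ^ (j+1)) ω := hterm
          _ ≤ 1 + ∑' j, (A j).indicator (fun _ => ρ ^ (j+1)) ω := le_add_self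
    have hint : ∫⁻ ω, ENNReal.ofReal ((((⨆ i : Fin n, Δ i ω) + 1) / b n) ^ (-r)) ∂ℙ
        ≤ 1 + ∑' k, ρ ^ (k+1) * ℙ (A k) := by
      calc ∫⁻ ω, ENNReal.ofReal ((((⨆ i : Fin n, Δ i ω) + 1) / b n) ^ (-r)) ∂ℙ
          ≤ ∫⁻ ω, (1 + ∑' k, (A k).indicator (fun _ => ρ ^ (k+1)) ω) ∂ℙ :=
            lintegral_mono hpoint
        _ = ∫⁻ _ω, (1:ℝ≥0∞) ∂ℙ + ∫⁻ ω, ∑' k, (A k).indicator (fun _ => ρ ^ (k+1)) ω ∂ℙ :=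
            lintegral_add_left measurable_const _
        _ = 1 + ∑' k, ρ ^ (k+1) * ℙ (A k) := by
            rw [lintegral_one, measure_univ]
            congr 1
            rw [lintegral_tsum (fun k => ((measurable_const.indicator (hAmeas k))).aemeasurable)]
            exact tsum_congr (fun k => lintegral_indicator_const (hAmeas k) _)
    have hkey : ∀ k : ℕ, ρ ^ (k+1) * ℙ (A k) ≤ Abig * w k := by
      intro k
      have h2kpos : (0:ℝ) < 2 ^ k := by positivity
      set y : ℝ := b n / 2 ^ k with hydef
      have hypos : 0 < y := by positivity
      rcases le_or_gt y 1 with hy1 | hy1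
      · have hempty : (Δ 0) ⁻¹' (Iic (b n / 2 ^ k - 1)) = ∅ := by
          ext ω
          simp only [Set.mem_preimage, Set.mem_Iic, Set.mem_empty_iff_false, iff_false, not_le]
          have h0 : (0:ℝ) < Δ 0 ω := hpos 0 ω
          have : b n / 2 ^ k ≤ 1 := hy1
          linarith
        have hA0 : ℙ (A k) = 0 := by
          have hsub : A k ⊆ (Δ 0) ⁻¹' (Iic (b n / 2 ^ k - 1)) := by
            rw [hACdef]
            exact Set.biInter_subset_of_mem (Finset.mem_range.mpr (by omega))
          apply measure_mono_null hsub
          rw [hempty]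
          exact measure_empty
        rw [hA0, mul_zero]
        exact bot_le
      · have h2kb : (2:ℝ) ^ k < b n := by
          have := (one_lt_div h2kpos).mp hy1
          exact this
        have hρk : ρ ^ (k+1) = ENNReal.ofReal (((2:ℝ) ^ (k+1)) ^ r) := by
          rw [hρdef, ← ENNReal.ofReal_pow (by linarith),
            aux_pow_rpow 2 (by norm_num) r (k+1)]
        have hqkc : q ^ k ≤ c₃ * n := by
          have h1 : ((2:ℝ) ^ k) ^ (α/2) ≤ (b n) ^ (α/2) :=
            Real.rpow_le_rpow (by positivity) h2kb.le (by linarith)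
          have h2 : (b n) ^ (α/2) ≤ ((c₃ * n) ^ (2/α)) ^ (α/2) :=
            Real.rpow_le_rpow hbpos.le hbn_ub (by linarith)
          have h3 : ((c₃ * (n:ℝ)) ^ (2/α)) ^ (α/2) = c₃ * n := by
            rw [← Real.rpow_mul (by positivity), show (2/α) * (α/2) = 1 by field_simp,
              Real.rpow_one]
          have h4 : ((2:ℝ) ^ k) ^ (α/2) = q ^ k := by
            rw [aux_pow_rpow 2 (by norm_num) (α/2) k]
          linarith
        have heqP : ∀ c : ℝ, ℙ ((Δ 0) ⁻¹' (Iic c)) = ENNReal.ofReal (F c) := fun c =>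
          (ENNReal.ofReal_toReal (measure_ne_top _ _)).symm
        rcases le_or_gt y X with hyX | hyX
        · -- middle regime
          have hFy : F (b n / 2 ^ k - 1) ≤ 1 - c₁ := by
            have h1 : F (b n / 2 ^ k - 1) ≤ F X := hFmono _ _ (by
              have : b n / 2 ^ k ≤ X := hyX
              linarith)
            have h2 := hsum X (2 * X) (by linarith)
            linarith
          have hPle : ℙ ((Δ 0) ⁻¹' (Iic (b n / 2 ^ k - 1)))
              ≤ ENNReal.ofReal (Real.exp (-c₁)) := by
            rw [heqP]
            apply ENNReal.ofReal_le_ofReal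
            calc F (b n / 2 ^ k - 1) ≤ 1 - c₁ := hFy
              _ ≤ Real.exp (-c₁) := Real.one_sub_le_exp_neg c₁
          have hqA : ℙ (A k) ≤ ENNReal.ofReal (Real.exp (-(c₁ * n))) := by
            rw [hAprob k]
            calc (ℙ ((Δ 0) ⁻¹' (Iic (b n / 2 ^ k - 1)))) ^ n
                ≤ (ENNReal.ofReal (Real.exp (-c₁))) ^ n := pow_le_pow_left' hPle n
              _ = ENNReal.ofReal ((Real.exp (-c₁)) ^ n) :=
                  (ENNReal.ofReal_pow (Real.exp_nonneg _) n).symm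
              _ = ENNReal.ofReal (Real.exp (-(c₁ * n))) := by
                  rw [← Real.exp_nat_mul, show ((n:ℝ)) * -c₁ = -(c₁ * n) by ring]
          have hstep : ρ ^ (k+1) * ℙ (A k)
              ≤ ENNReal.ofReal ((2 * b n) ^ r * Real.exp (-(c₁ * n))) := by
            rw [hρk]
            calc ENNReal.ofReal (((2:ℝ) ^ (k+1)) ^ r) * ℙ (A k)
                ≤ ENNReal.ofReal (((2:ℝ) ^ (k+1)) ^ r)
                  * ENNReal.ofReal (Real.exp (-(c₁ * n))) := mul_le_mul_right hqA _
              _ ≤ ENNReal.ofReal ((2 * b n) ^ r)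
                  * ENNReal.ofReal (Real.exp (-(c₁ * n))) := by
                  apply mul_le_mul_left
                  apply ENNReal.ofReal_le_ofReal
                  apply Real.rpow_le_rpow (by positivity) _ hr.le
                  rw [pow_succ]
                  nlinarith
              _ = ENNReal.ofReal ((2 * b n) ^ r * Real.exp (-(c₁ * n))) :=
                  (ENNReal.ofReal_mul (by positivity)).symm
          have hreal : (2 * b n) ^ r * Real.exp (-(c₁ * n))
              ≤ max (max D 1) (Real.exp c₆) * Real.exp (-(c₆ * q ^ k)) := by
            have h1 : (2 * b n) ^ r ≤ (2 * (c₃ * n) ^ (2/α)) ^ r := by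
              apply Real.rpow_le_rpow (by positivity) _ hr.le
              linarith
            have h2 : Real.exp (-(c₁/2 * n)) ≤ Real.exp (-(c₆ * q ^ k)) := by
              apply Real.exp_le_exp.mpr
              have h2a : c₅ * q ^ k ≤ c₁/2 * n := by
                rw [hc₅def]
                calc c₁ / (2 * c₃) * q ^ k ≤ c₁ / (2 * c₃) * (c₃ * n) :=
                      mul_le_mul_of_nonneg_left hqkc (by positivity)
                  _ = c₁/2 * n := by field_simp
              have h2b : c₆ * q ^ k ≤ c₅ * q ^ k :=
                mul_le_mul_of_nonneg_right hc₆c₅ (by positivity)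
              linarith
            have e : Real.exp (-(c₁ * n)) = Real.exp (-(c₁/2 * n)) * Real.exp (-(c₁/2 * n)) := by
              rw [← Real.exp_add]
              ring_nf
            have hun : u n = (2 * (c₃ * n) ^ (2/α)) ^ r * Real.exp (-(c₁/2 * n)) := rfl
            calc (2 * b n) ^ r * Real.exp (-(c₁ * n))
                = ((2 * b n) ^ r * Real.exp (-(c₁/2 * n))) * Real.exp (-(c₁/2 * n)) := by
                  rw [e]; ring
              _ ≤ u n * Real.exp (-(c₆ * q ^ k)) := by
                  apply mul_le_mul _ h2 (Real.exp_nonneg _) _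
                  · rw [hun]
                    exact mul_le_mul_of_nonneg_right h1 (Real.exp_nonneg _)
                  · rw [hun]
                    positivity
              _ ≤ max (max D 1) (Real.exp c₆) * Real.exp (-(c₆ * q ^ k)) := by
                  apply mul_le_mul_of_nonneg_right _ (Real.exp_nonneg _)
                  exact le_trans (hDle n) (le_trans (le_max_left D 1) (le_max_left _ _))
          calc ρ ^ (k+1) * ℙ (A k)
              ≤ ENNReal.ofReal ((2 * b n) ^ r * Real.exp (-(c₁ * n))) := hstep
            _ ≤ ENNReal.ofReal (max (max D 1) (Real.exp c₆) * Real.exp (-(c₆ * q ^ k))) :=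
                ENNReal.ofReal_le_ofReal hreal
            _ = Abig * ENNReal.ofReal (Real.exp (-(c₆ * q ^ k))) := by
                rw [hAdef, ← ENNReal.ofReal_mul]
                exact le_trans zero_le_one (le_trans (le_max_right D 1) (le_max_left _ _))
            _ ≤ Abig * w k := by
                apply mul_le_mul_right
                rw [hwdef]
                simp only
                calc ENNReal.ofReal (Real.exp (-(c₆ * q ^ k)))
                    = 1 * ENNReal.ofReal (Real.exp (-(c₆ * q ^ k))) := (one_mul _).symm
                  _ ≤ ρ ^ (k+1) * ENNReal.ofReal (Real.exp (-(c₆ * q ^ k))) :=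
                      mul_le_mul_left (one_le_pow_of_one_le' hρ1 (k+1)) _
        · -- large regime
          rcases Nat.eq_zero_or_pos k with hk0 | hkpos
          · subst hk0
            have hP1 : ℙ (A 0) ≤ 1 := prob_le_one
            have hw0 : ρ ≤ Abig * w 0 := by
              have hwe : w 0 = ρ * ENNReal.ofReal (Real.exp (-c₆)) := by
                rw [hwdef]
                simp only [pow_zero, pow_one, mul_one, zero_add]
              rw [hwe]
              have he1 : (1:ℝ≥0∞) ≤ Abig * ENNReal.ofReal (Real.exp (-c₆)) := by
                rw [hAdef, ← ENNReal.ofReal_mul]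
                · apply ENNReal.one_le_ofReal.mpr
                  have he2 : Real.exp c₆ * Real.exp (-c₆) = 1 := by
                    rw [← Real.exp_add]
                    norm_num
                  calc (1:ℝ) = Real.exp c₆ * Real.exp (-c₆) := he2.symm
                    _ ≤ max (max D 1) (Real.exp c₆) * Real.exp (-c₆) := by
                        apply mul_le_mul_of_nonneg_right (le_max_right _ _) (Real.exp_nonneg _)
                · exact le_trans zero_le_one (le_trans (le_max_right D 1) (le_max_left _ _))
              calc ρ = ρ * 1 := (mul_one _).symm
                _ ≤ ρ * (Abig * ENNReal.ofReal (Real.exp (-c₆))) :=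
                    mul_le_mul_right he1 _
                _ = Abig * (ρ * ENNReal.ofReal (Real.exp (-c₆))) := by ring
            calc ρ ^ (0+1) * ℙ (A 0) ≤ ρ ^ (0+1) * 1 := mul_le_mul_right hP1 _
              _ = ρ := by rw [pow_one, mul_one]
              _ ≤ Abig * w 0 := hw0
          · obtain ⟨j, rfl⟩ : ∃ j, k = j + 1 := ⟨k - 1, by omega⟩
            have hcond : (2:ℝ) ^ j * X ≤ 2 * b n := by
              have h1 : X * 2 ^ (j+1) < b n :=
                (lt_div_iff₀ (by positivity : (0:ℝ) < (2:ℝ)^(j+1))).mp hyX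
              have h2 : (2:ℝ)^(j+1) = 2^j * 2 := pow_succ 2 j
              nlinarith [pow_pos (show (0:ℝ) < 2 by norm_num) j, hX0]
            have hTlow : q ^ j * T (b n) ≤ T (b n / 2 ^ j) := hiter j (b n) hcond
            have hsval0 : 0 ≤ q ^ j * T (b n) :=
              mul_nonneg (pow_nonneg hqpos.le j) (hT0 _)
            have hFy2 : F (b n / 2 ^ (j+1) - 1) ≤ 1 - q ^ j * T (b n) := by
              have h1 : F (b n / 2 ^ (j+1) - 1) ≤ F y := hFmono _ _ (by
                rw [hydef]; linarith)
              have h2 : F y + T (2 * y) ≤ 1 := hsum y (2*y) (by linarith)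
              have h3 : 2 * y = b n / 2 ^ j := by
                rw [hydef, pow_succ]
                field_simp
              have h4 : q ^ j * T (b n) ≤ T (2 * y) := by
                rw [h3]
                exact hTlow
              linarith
            have hPle : ℙ ((Δ 0) ⁻¹' (Iic (b n / 2 ^ (j+1) - 1)))
                ≤ ENNReal.ofReal (Real.exp (-(q ^ j * T (b n)))) := by
              rw [heqP]
              apply ENNReal.ofReal_le_ofReal
              calc F (b n / 2 ^ (j+1) - 1) ≤ 1 - q ^ j * T (b n) := hFy2
                _ ≤ Real.exp (-(q ^ j * T (b n))) := Real.one_sub_le_exp_neg _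
            have hqA : ℙ (A (j+1)) ≤ ENNReal.ofReal (Real.exp (-(q ^ j))) := by
              rw [hAprob]
              calc (ℙ ((Δ 0) ⁻¹' (Iic (b n / 2 ^ (j+1) - 1)))) ^ n
                  ≤ (ENNReal.ofReal (Real.exp (-(q ^ j * T (b n))))) ^ n :=
                    pow_le_pow_left' hPle n
                _ = ENNReal.ofReal ((Real.exp (-(q ^ j * T (b n)))) ^ n) :=
                    (ENNReal.ofReal_pow (Real.exp_nonneg _) n).symm
                _ ≤ ENNReal.ofReal (Real.exp (-(q ^ j))) := by
                    apply ENNReal.ofReal_le_ofReal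
                    rw [← Real.exp_nat_mul]
                    apply Real.exp_le_exp.mpr
                    have h5 : 1/(n:ℝ) ≤ T (b n) := hTb n hn1
                    have h6 : (1:ℝ) ≤ (n:ℝ) * T (b n) := by
                      rw [show (1:ℝ) = (n:ℝ) * (1/(n:ℝ)) by field_simp]
                      exact mul_le_mul_of_nonneg_left h5 hn0R.le
                    have h7 : q ^ j ≤ (n:ℝ) * (q ^ j * T (b n)) := by
                      calc q ^ j = q ^ j * 1 := (mul_one _).symm
                        _ ≤ q ^ j * ((n:ℝ) * T (b n)) :=
                            mul_le_mul_of_nonneg_left h6 (by positivity)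
                        _ = (n:ℝ) * (q ^ j * T (b n)) := by ring
                    nlinarith
            have hexp : Real.exp (-(q ^ j)) ≤ Real.exp (-(c₆ * q ^ (j+1))) := by
              apply Real.exp_le_exp.mpr
              have h8 : c₆ * q ^ (j+1) ≤ q ^ j := by
                rw [pow_succ]
                calc c₆ * (q ^ j * q) = (c₆ * q) * q ^ j := by ring
                  _ ≤ 1 * q ^ j := mul_le_mul_of_nonneg_right hc₆q (by positivity)
                  _ = q ^ j := one_mul _
              linarith
            calc ρ ^ (j+1+1) * ℙ (A (j+1))
                ≤ ρ ^ (j+1+1) * ENNReal.ofReal (Real.exp (-(c₆ * q ^ (j+1)))) := by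
                  apply mul_le_mul_right
                  exact le_trans hqA (ENNReal.ofReal_le_ofReal hexp)
              _ = w (j+1) := by rw [hwdef]
              _ ≤ Abig * w (j+1) := le_mul_of_one_le_left' hA1
    calc ∫⁻ ω, ENNReal.ofReal ((((⨆ i : Fin n, Δ i ω) + 1) / b n) ^ (-r)) ∂ℙ
        ≤ 1 + ∑' k, ρ ^ (k+1) * ℙ (A k) := hint
      _ ≤ 1 + ∑' k, Abig * w k := add_le_add le_rfl (ENNReal.tsum_le_tsum hkey)
      _ = 1 + Abig * ∑' k, w k := by rw [ENNReal.tsum_mul_left]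
  -- final assembly
  have hC₀top : (1 + Abig * ∑' k, w k) ≠ ⊤ := by
    apply ENNReal.add_ne_top.mpr
    constructor
    · exact ENNReal.one_ne_top
    · exact ENNReal.mul_ne_top hAtop hWfin
  set Csup : ℝ≥0∞ := (Finset.range N).sup (fun m => ENNReal.ofReal ((max 1 |b m|) ^ r))
    with hCsupdef
  have hCsuptop : Csup < ⊤ := by
    rw [hCsupdef]
    apply (Finset.sup_lt_iff (by simp : (⊥:ℝ≥0∞) < ⊤)).mpr
    intro m _
    exact ENNReal.ofReal_lt_top
  refine ⟨max (1 + Abig * ∑' k, w k) Csup, ?_, ?_⟩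
  · exact max_lt (lt_top_iff_ne_top.mpr hC₀top) hCsuptop
  · intro n hn
    rcases lt_or_ge n N with hnN | hnN
    · have h1 : ENNReal.ofReal ((max 1 |b n|) ^ r) ≤ Csup := by
        rw [hCsupdef]
        exact Finset.le_sup (f := fun m => ENNReal.ofReal ((max 1 |b m|) ^ r))
          (Finset.mem_range.mpr hnN)
      exact le_trans (hcrude n hn) (le_trans h1 (le_max_right _ _))
    · exact le_trans (hmain n hnN) (le_max_left _ _)
end

section
/- If α = 1 and E(Δ_1) = ∞, then (T_n/b_n) · (ℓ(b_n)/ℓ*(b_n)) converges to 1 in probability as n → ∞. -/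
open MeasureTheory ProbabilityTheory Filter Set Topology
open scoped ENNReal ProbabilityTheory

section Aux

variable {G ℓ : ℝ → ℝ}

lemma tail_pos (hG : Antitone G) (hG0 : ∀ x, 0 ≤ G x)
    (hℓ : ∀ x : ℝ, 1 ≤ x → ℓ x = x * G x)
    (hslow : ∀ lam : ℝ, 0 < lam → Tendsto (fun x => ℓ (lam * x) / ℓ x) atTop (𝓝 1)) :
    ∀ x : ℝ, 1 ≤ x → 0 < G x := by
  by_contra h
  push_neg at h
  obtain ⟨x₀, hx₀, hx₀le⟩ := h
  have hx0 : G x₀ = 0 := le_antisymm hx₀le (hG0 x₀)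
  have hz : ∀ x : ℝ, x₀ ≤ x → ℓ x = 0 := by
    intro x hx
    have : G x = 0 := le_antisymm ((hG hx).trans_eq hx0) (hG0 x)
    rw [hℓ x (hx₀.trans hx), this, mul_zero]
  have h1 := hslow 1 one_pos
  have hev : ∀ᶠ x : ℝ in atTop, ℓ (1 * x) / ℓ x = 0 := by
    filter_upwards [eventually_ge_atTop x₀] with x hx
    rw [one_mul, hz x hx, div_zero]
  have h0 : Tendsto (fun _ : ℝ => (0:ℝ)) atTop (𝓝 1) :=
    h1.congr' hev
  have := tendsto_nhds_unique h0 tendsto_const_nhds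
  norm_num at this

lemma ell_pos (hG : Antitone G) (hG0 : ∀ x, 0 ≤ G x)
    (hℓ : ∀ x : ℝ, 1 ≤ x → ℓ x = x * G x)
    (hslow : ∀ lam : ℝ, 0 < lam → Tendsto (fun x => ℓ (lam * x) / ℓ x) atTop (𝓝 1)) :
    ∀ x : ℝ, 1 ≤ x → 0 < ℓ x := by
  intro x hx
  rw [hℓ x hx]
  exact mul_pos (lt_of_lt_of_le one_pos hx) (tail_pos hG hG0 hℓ hslow x hx)

end Aux

section Aux2
variable {G ℓ : ℝ → ℝ}

lemma integral_ge_const (hG : Antitone G) {a c : ℝ} (hac : a ≤ c) :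
    (c - a) * G c ≤ ∫ t in a..c, G t := by
  have h := intervalIntegral.integral_mono_on (μ := volume) (f := fun _ => G c) (g := G) hac
    (intervalIntegrable_const) hG.intervalIntegrable (fun t ht => hG ht.2)
  simpa [intervalIntegral.integral_const, smul_eq_mul] using h

lemma integral_le_const (hG : Antitone G) {a c : ℝ} (hac : a ≤ c) :
    ∫ t in a..c, G t ≤ (c - a) * G a := by
  have h := intervalIntegral.integral_mono_on (μ := volume) (f := G) (g := fun _ => G a) hac
    hG.intervalIntegrable (intervalIntegrable_const) (fun t ht => hG ht.1)
  simpa [intervalIntegral.integral_const, smul_eq_mul] using h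

lemma seg_lower (hG : Antitone G) (hG0 : ∀ x, 0 ≤ G x)
    (hℓ : ∀ x : ℝ, 1 ≤ x → ℓ x = x * G x)
    (hslow : ∀ lam : ℝ, 0 < lam → Tendsto (fun x => ℓ (lam * x) / ℓ x) atTop (𝓝 1)) :
    ∀ m : ℕ, ∀ᶠ x : ℝ in atTop, (m : ℝ) / 4 * ℓ x ≤ ∫ t in (1:ℝ)..x, G t := by
  intro m
  have hrat : ∀ᶠ x : ℝ in atTop, ∀ j ∈ Finset.range m, ℓ x / 2 ≤ ℓ ((1/2:ℝ)^j * x) := by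
    rw [eventually_all_finset]
    intro j _
    have hpos : (0:ℝ) < (1/2:ℝ)^j := by positivity
    have h1 := (hslow ((1/2:ℝ)^j) hpos).eventually (eventually_ge_nhds
      (show (1:ℝ)/2 < 1 by norm_num))
    filter_upwards [h1, eventually_ge_atTop (1:ℝ)] with x hx hx1
    have hℓpos : 0 < ℓ x := ell_pos hG hG0 hℓ hslow x hx1
    rw [le_div_iff₀ hℓpos] at hx
    linarith
  filter_upwards [hrat, eventually_ge_atTop ((2:ℝ)^m)] with x hx hxm
  have h2m : (1:ℝ) ≤ (2:ℝ)^m := one_le_pow₀ (by norm_num)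
  have hx1 : (1:ℝ) ≤ x := h2m.trans hxm
  have hxpos : (0:ℝ) < x := lt_of_lt_of_le one_pos hx1
  have hhalf : ∀ k : ℕ, (1/2:ℝ)^k * x = x / 2^k := by
    intro k; rw [div_pow, one_pow]; ring
  -- key induction
  have key : ∀ k : ℕ, k ≤ m → (k : ℝ)/4 * ℓ x ≤ ∫ t in (x/2^k)..x, G t := by
    intro k
    induction k with
    | zero => intro _; simp
    | succ k ih =>
      intro hkm
      have hk : k ≤ m := Nat.le_of_succ_le hkm
      have ih' := ih hk
      have hbk : (1:ℝ) ≤ x / 2^(k+1) := by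
        rw [le_div_iff₀ (by positivity)]
        calc (1:ℝ) * 2^(k+1) = 2^(k+1) := one_mul _
        _ ≤ 2^m := pow_le_pow_right₀ (by norm_num) hkm
        _ ≤ x := hxm
      have hle1 : x / 2^(k+1) ≤ x / 2^k := by
        apply div_le_div_of_nonneg_left hxpos.le (by positivity)
        exact pow_le_pow_right₀ (by norm_num) (Nat.le_succ k)
      have hbk' : (1:ℝ) ≤ x / 2^k := hbk.trans hle1
      have hsplit : (∫ t in (x/2^(k+1))..(x/2^k), G t) + (∫ t in (x/2^k)..x, G t)
          = ∫ t in (x/2^(k+1))..x, G t :=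
        intervalIntegral.integral_add_adjacent_intervals hG.intervalIntegrable
          hG.intervalIntegrable
      have hseg : ℓ x / 4 ≤ ∫ t in (x/2^(k+1))..(x/2^k), G t := by
        have h1 : (x/2^k - x/2^(k+1)) * G (x/2^k) ≤ ∫ t in (x/2^(k+1))..(x/2^k), G t :=
          integral_ge_const hG hle1
        have hGk : G (x/2^k) = ℓ (x/2^k) / (x/2^k) := by
          rw [hℓ _ hbk']
          field_simp
        have hj : ℓ x / 2 ≤ ℓ (x/2^k) := by
          have h2 := hx k (Finset.mem_range.mpr (lt_of_lt_of_le (Nat.lt_succ_self k) hkm))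
          rwa [hhalf k] at h2
        have hxk : (0:ℝ) < x/2^k := lt_of_lt_of_le one_pos hbk'
        have harith : (x/2^k - x/2^(k+1)) * G (x/2^k) = ℓ (x/2^k) / 2 := by
          rw [hGk]
          have h2 : x/2^k - x/2^(k+1) = (x/2^k)/2 := by
            field_simp; ring
          rw [h2]
          field_simp
        rw [harith] at h1
        linarith
      calc ((k+1 : ℕ) : ℝ)/4 * ℓ x = ℓ x / 4 + (k:ℝ)/4 * ℓ x := by push_cast; ring
      _ ≤ (∫ t in (x/2^(k+1))..(x/2^k), G t) + (∫ t in (x/2^k)..x, G t) :=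
          add_le_add hseg ih'
      _ = ∫ t in (x/2^(k+1))..x, G t := hsplit
  have hxm1 : (1:ℝ) ≤ x / 2^m := by
    rw [le_div_iff₀ (by positivity)]
    linarith
  have h0 : (0:ℝ) ≤ ∫ t in (1:ℝ)..(x/2^m), G t :=
    intervalIntegral.integral_nonneg hxm1 (fun t _ => hG0 t)
  have hsplit : (∫ t in (1:ℝ)..(x/2^m), G t) + (∫ t in (x/2^m)..x, G t)
      = ∫ t in (1:ℝ)..x, G t :=
    intervalIntegral.integral_add_adjacent_intervals hG.intervalIntegrable
      hG.intervalIntegrable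
  have := key m le_rfl
  linarith

end Aux2

section Aux3
variable {G ℓ : ℝ → ℝ}

lemma ell_div_L_tendsto (hG : Antitone G) (hG0 : ∀ x, 0 ≤ G x)
    (hℓ : ∀ x : ℝ, 1 ≤ x → ℓ x = x * G x)
    (hslow : ∀ lam : ℝ, 0 < lam → Tendsto (fun x => ℓ (lam * x) / ℓ x) atTop (𝓝 1)) :
    Tendsto (fun x => ℓ x / ∫ t in (1:ℝ)..x, G t) atTop (𝓝 0) := by
  rw [NormedAddCommGroup.tendsto_nhds_zero]
  intro ε hε
  obtain ⟨m, hm⟩ : ∃ m : ℕ, 4 / ε < m := exists_nat_gt _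
  have hm0 : (0:ℝ) < m := lt_of_le_of_lt (by positivity) hm
  filter_upwards [seg_lower hG hG0 hℓ hslow m, eventually_ge_atTop (1:ℝ)] with x hx hx1
  have hℓpos : 0 < ℓ x := ell_pos hG hG0 hℓ hslow x hx1
  have hLpos : 0 < ∫ t in (1:ℝ)..x, G t := lt_of_lt_of_le (by positivity) hx
  rw [Real.norm_eq_abs, abs_of_pos (div_pos hℓpos hLpos)]
  have h1 : ℓ x / ∫ t in (1:ℝ)..x, G t ≤ ℓ x / ((m:ℝ)/4 * ℓ x) :=
    div_le_div_of_nonneg_left hℓpos.le (by positivity) hx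
  have h2 : ℓ x / ((m:ℝ)/4 * ℓ x) = 4 / m := by
    field_simp
  rw [h2] at h1
  have h3 : 4 / (m:ℝ) < ε := by
    rw [div_lt_iff₀ hm0]
    rw [div_lt_iff₀ hε] at hm
    linarith
  linarith

end Aux3

section Aux4
variable {G : ℝ → ℝ}

lemma L_top (hG : Antitone G) (hG0 : ∀ x, 0 ≤ G x)
    (hdiv : ∫⁻ t in Ioi (1:ℝ), ENNReal.ofReal (G t) = ⊤) :
    Tendsto (fun y => ∫ t in (1:ℝ)..y, G t) atTop atTop := by
  have hGm : Measurable G := hG.measurable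
  have hunb : ∀ C : ℝ, ∃ y : ℝ, 1 ≤ y ∧ C ≤ ∫ t in (1:ℝ)..y, G t := by
    by_contra h
    push_neg at h
    obtain ⟨C, hC⟩ := h
    have key : ∀ n : ℕ, ∫⁻ t in Ioc (1:ℝ) (n+1 : ℝ), ENNReal.ofReal (G t)
        ≤ ENNReal.ofReal C := by
      intro n
      have h1n : (1:ℝ) ≤ (n:ℝ)+1 := by
        have : (0:ℝ) ≤ (n:ℝ) := Nat.cast_nonneg n
        linarith
      have hint : IntegrableOn G (Ioc (1:ℝ) ((n:ℝ)+1)) volume :=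
        (intervalIntegrable_iff_integrableOn_Ioc_of_le h1n).mp hG.intervalIntegrable
      rw [← ofReal_integral_eq_lintegral_ofReal hint
        (Filter.Eventually.of_forall (fun t => hG0 t))]
      apply ENNReal.ofReal_le_ofReal
      rw [← intervalIntegral.integral_of_le h1n]
      exact (hC _ h1n).le
    set f : ℕ → ℝ → ℝ≥0∞ := fun n => (Ioc (1:ℝ) ((n:ℝ)+1)).indicator
      (fun t => ENNReal.ofReal (G t)) with hf
    have hmono : Monotone f := by
      intro a b hab
      apply Set.indicator_le_indicator_of_subset
      · apply Ioc_subset_Ioc_right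
        exact add_le_add_left (Nat.cast_le.mpr hab) 1
      · intro t; exact zero_le
    have hmeas : ∀ n, Measurable (f n) := by
      intro n
      exact (ENNReal.measurable_ofReal.comp hGm).indicator measurableSet_Ioc
    have hsup : (fun t => ⨆ n, f n t) = (Ioi (1:ℝ)).indicator
        (fun t => ENNReal.ofReal (G t)) := by
      funext t
      by_cases ht : t ∈ Ioi (1:ℝ)
      · obtain ⟨n, hn⟩ : ∃ n : ℕ, t ≤ (n:ℝ)+1 := by
          obtain ⟨n, hn⟩ := exists_nat_ge t
          exact ⟨n, hn.trans (by linarith)⟩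
        rw [Set.indicator_of_mem ht]
        apply le_antisymm
        · apply iSup_le; intro k
          by_cases hk : t ∈ Ioc (1:ℝ) ((k:ℝ)+1)
          · simp only [hf, Set.indicator_of_mem hk]
            exact le_refl _
          · simp only [hf, Set.indicator_of_notMem hk]
            exact zero_le
        · refine le_trans (le_of_eq ?_) (le_iSup (fun k => f k t) n)
          simp only [hf, Set.indicator_of_mem (mem_Ioc.mpr ⟨mem_Ioi.mp ht, hn⟩)]
      · rw [Set.indicator_of_notMem ht]
        apply le_antisymm _ (zero_le)
        apply iSup_le; intro k
        have hk : t ∉ Ioc (1:ℝ) ((k:ℝ)+1) := fun hmem => ht hmem.1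
        simp only [hf, Set.indicator_of_notMem hk]
        exact le_refl _
    have hfin : ∫⁻ t in Ioi (1:ℝ), ENNReal.ofReal (G t) ≤ ENNReal.ofReal C := by
      rw [← lintegral_indicator measurableSet_Ioi, ← hsup, lintegral_iSup hmeas hmono]
      apply iSup_le
      intro n
      simp only [hf]
      rw [lintegral_indicator measurableSet_Ioc]
      exact key n
    rw [hdiv] at hfin
    exact (ENNReal.ofReal_lt_top.not_ge hfin).elim
  rw [tendsto_atTop]
  intro C
  obtain ⟨y₀, hy₀1, hy₀C⟩ := hunb C
  filter_upwards [eventually_ge_atTop y₀] with y hy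
  have hsplit : (∫ t in (1:ℝ)..y₀, G t) + (∫ t in y₀..y, G t) = ∫ t in (1:ℝ)..y, G t :=
    intervalIntegral.integral_add_adjacent_intervals hG.intervalIntegrable
      hG.intervalIntegrable
  have h0 : (0:ℝ) ≤ ∫ t in y₀..y, G t :=
    intervalIntegral.integral_nonneg hy (fun t _ => hG0 t)
  linarith

end Aux4
set_option maxHeartbeats 3000000 in
/-- If `α = 1` (tail `P(Δ ≥ x) = x⁻¹ ℓ(x)` for `x ≥ 1`) and `E(Δ) = ∞`, then
`(Tₙ/bₙ) · (ℓ(bₙ)/ℓ*(bₙ)) → 1` in probability as `n → ∞`. -/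
theorem stmt6 {Ω : Type*} [MeasureSpace Ω] [IsProbabilityMeasure (ℙ : Measure Ω)]
    (Δ : ℕ → Ω → ℝ) (hmeas : ∀ i, Measurable (Δ i))
    (hindep : iIndepFun Δ ℙ)
    (hident : ∀ i, IdentDistrib (Δ i) (Δ 0) ℙ ℙ)
    (hpos : ∀ i ω, 0 < Δ i ω)
    (T : ℕ → Ω → ℝ) (hT : ∀ k ω, T k ω = ∑ i ∈ Finset.range k, Δ i ω)
    (ℓ : ℝ → ℝ)
    (hslow : ∀ lam : ℝ, 0 < lam → Tendsto (fun x => ℓ (lam * x) / ℓ x) atTop (𝓝 1))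
    (htail : ∀ x : ℝ, 1 ≤ x → (ℙ {ω | x ≤ Δ 0 ω}).toReal = x ^ (-(1:ℝ)) * ℓ x)
    (hEΔ : ∫⁻ ω, ENNReal.ofReal (Δ 0 ω) ∂ℙ = ⊤)
    (b : ℕ → ℝ)
    (hb : ∀ n : ℕ, 1 ≤ n → (ℙ {ω | Δ 0 ω ≤ b n}).toReal = 1 - 1 / n)
    (ℓs : ℝ → ℝ) (hℓs : ∀ y : ℝ, ℓs y = ∫ x in (1:ℝ)..y, ℓ x / x) :
    ∀ ε : ℝ, 0 < ε →
      Tendsto (fun n : ℕ =>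
        ℙ {ω | ε < |T n ω / b n * (ℓ (b n) / ℓs (b n)) - 1|}) atTop (𝓝 0) := by
  classical
  intro ε hε
  set G : ℝ → ℝ := fun x => (ℙ {ω | x ≤ Δ 0 ω}).toReal with hGdef
  set Hs : ℝ → ℝ := fun x => (ℙ {ω | x < Δ 0 ω}).toReal with hHdef
  have hGanti : Antitone G := by
    intro x y hxy
    exact ENNReal.toReal_mono (measure_ne_top _ _)
      (measure_mono (fun ω hω => le_trans hxy hω))
  have hHanti : Antitone Hs := by
    intro x y hxy
    exact ENNReal.toReal_mono (measure_ne_top _ _)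
      (measure_mono (fun ω hω => lt_of_le_of_lt hxy hω))
  have hG0 : ∀ x, 0 ≤ G x := fun x => ENNReal.toReal_nonneg
  have hH0 : ∀ x, 0 ≤ Hs x := fun x => ENNReal.toReal_nonneg
  have hG1 : ∀ x, G x ≤ 1 := by
    intro x
    rw [hGdef]
    simp only []
    rw [← ENNReal.toReal_one]
    exact ENNReal.toReal_mono ENNReal.one_ne_top prob_le_one
  have hH1 : ∀ x, Hs x ≤ 1 := by
    intro x
    rw [hHdef]
    simp only []
    rw [← ENNReal.toReal_one]
    exact ENNReal.toReal_mono ENNReal.one_ne_top prob_le_one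
  have hHleG : ∀ x, Hs x ≤ G x := by
    intro x
    exact ENNReal.toReal_mono (measure_ne_top _ _)
      (measure_mono (fun ω hω => (le_of_lt hω : _ ≤ Δ 0 ω)))
  have hGleH : ∀ x y : ℝ, x < y → G y ≤ Hs x := by
    intro x y hxy
    exact ENNReal.toReal_mono (measure_ne_top _ _)
      (measure_mono (fun ω hω => lt_of_lt_of_le hxy hω))
  have hlG : ∀ x : ℝ, 1 ≤ x → ℓ x = x * G x := by
    intro x hx
    have hx0 : (0:ℝ) < x := lt_of_lt_of_le one_pos hx
    have h : G x = x⁻¹ * ℓ x := by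
      rw [hGdef]
      simpa [Real.rpow_neg hx0.le, Real.rpow_one] using htail x hx
    rw [h]
    field_simp
  have hGpos := tail_pos hGanti hG0 hlG hslow
  have hlp := ell_pos hGanti hG0 hlG hslow
  set L : ℝ → ℝ := fun y => ∫ t in (1:ℝ)..y, G t with hLdef
  have hlsL : ∀ y : ℝ, 1 ≤ y → ℓs y = L y := by
    intro y hy
    rw [hℓs y, hLdef]
    apply intervalIntegral.integral_congr
    intro t ht
    rw [uIcc_of_le hy] at ht
    have ht1 : 1 ≤ t := ht.1
    have ht0 : t ≠ 0 := by intro h; rw [h] at ht1; norm_num at ht1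
    show ℓ t / t = G t
    rw [hlG t ht1]
    field_simp
  have hHb : ∀ n : ℕ, 1 ≤ n → Hs (b n) = 1 / n := by
    intro n hn
    have hms : MeasurableSet {ω | Δ 0 ω ≤ b n} := measurableSet_le (hmeas 0) measurable_const
    have hcompl : {ω | b n < Δ 0 ω} = {ω | Δ 0 ω ≤ b n}ᶜ := by
      ext ω; simp [not_le]
    have h1 : ℙ {ω | b n < Δ 0 ω} = 1 - ℙ {ω | Δ 0 ω ≤ b n} := by
      rw [hcompl, prob_compl_eq_one_sub hms]
    rw [hHdef]
    simp only []
    rw [h1, ENNReal.toReal_sub_of_le prob_le_one ENNReal.one_ne_top, ENNReal.toReal_one,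
      hb n hn]
    ring
  have hbtop : Tendsto b atTop atTop := by
    rw [tendsto_atTop]
    intro M
    have hM'1 : (1:ℝ) ≤ max M 1 := le_max_right _ _
    have hpos2 : 0 < G (max M 1 + 1) := hGpos _ (by linarith)
    have hev : ∀ᶠ n : ℕ in atTop, (1:ℝ)/n < G (max M 1 + 1) :=
      tendsto_one_div_atTop_nhds_zero_nat.eventually (eventually_lt_nhds hpos2)
    filter_upwards [hev, eventually_ge_atTop 1] with n hn hn1
    by_contra h
    push_neg at h
    have hble : b n ≤ max M 1 := le_trans h.le (le_max_left _ _)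
    have h3 : Hs (max M 1) ≤ Hs (b n) := hHanti hble
    have h2 : G (max M 1 + 1) ≤ Hs (max M 1) := hGleH _ _ (by linarith)
    rw [hHb n hn1] at h3
    linarith
  have hb1 : ∀ᶠ n : ℕ in atTop, 1 ≤ b n := hbtop.eventually (eventually_ge_atTop 1)
  have hdiv : ∫⁻ t in Ioi (1:ℝ), ENNReal.ofReal (G t) = ⊤ := by
    have hlay : ∫⁻ t in Ioi (0:ℝ), ℙ {ω | t < Δ 0 ω} = ⊤ := by
      rw [← lintegral_eq_lintegral_meas_lt ℙ (Eventually.of_forall (fun ω => (hpos 0 ω).le))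
        (hmeas 0).aemeasurable]
      exact hEΔ
    have hsplit : Ioc (0:ℝ) 1 ∪ Ioi (1:ℝ) = Ioi (0:ℝ) := Ioc_union_Ioi_eq_Ioi zero_le_one
    have hdisj : Disjoint (Ioc (0:ℝ) 1) (Ioi (1:ℝ)) := Ioc_disjoint_Ioi le_rfl
    have hadd : (∫⁻ t in Ioc (0:ℝ) 1, ℙ {ω | t < Δ 0 ω})
        + (∫⁻ t in Ioi (1:ℝ), ℙ {ω | t < Δ 0 ω}) = ⊤ := by
      rw [← lintegral_union measurableSet_Ioi hdisj, hsplit]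
      exact hlay
    have hsmall : (∫⁻ t in Ioc (0:ℝ) 1, ℙ {ω | t < Δ 0 ω}) ≤ 1 := by
      calc ∫⁻ t in Ioc (0:ℝ) 1, ℙ {ω | t < Δ 0 ω} ≤ ∫⁻ _ in Ioc (0:ℝ) 1, 1 :=
        lintegral_mono (fun t => prob_le_one)
      _ = volume (Ioc (0:ℝ) 1) := setLIntegral_one _
      _ = 1 := by rw [Real.volume_Ioc]; norm_num
    have htop1 : (∫⁻ t in Ioi (1:ℝ), ℙ {ω | t < Δ 0 ω}) = ⊤ := by
      by_contra h
      have h1 : (∫⁻ t in Ioc (0:ℝ) 1, ℙ {ω | t < Δ 0 ω}) ≠ ⊤ :=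
        ne_top_of_le_ne_top ENNReal.one_ne_top hsmall
      exact (ENNReal.add_ne_top.mpr ⟨h1, h⟩) hadd
    rw [eq_top_iff, ← htop1]
    apply lintegral_mono
    intro t
    calc ℙ {ω | t < Δ 0 ω} ≤ ℙ {ω | t ≤ Δ 0 ω} :=
      measure_mono (fun ω hω => (le_of_lt hω : _ ≤ Δ 0 ω))
    _ = ENNReal.ofReal (G t) := by
      rw [hGdef]
      simp only []
      rw [ENNReal.ofReal_toReal (measure_ne_top _ _)]
  have hLtop : Tendsto L atTop atTop := L_top hGanti hG0 hdiv
  have hLbtop : Tendsto (fun n => L (b n)) atTop atTop := hLtop.comp hbtop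
  have hwn : Tendsto (fun n => ℓ (b n) / L (b n)) atTop (𝓝 0) :=
    (ell_div_L_tendsto hGanti hG0 hlG hslow).comp hbtop
  have hA : Tendsto (fun n : ℕ => (n : ℝ) * ℓ (b n) / b n) atTop (𝓝 1) := by
    have key : ∀ e : ℝ, 0 < e → ∀ᶠ n : ℕ in atTop, |(n:ℝ) * ℓ (b n) / b n - 1| < e := by
      intro e he
      set lam : ℝ := 1 + e/4 with hlamdef
      have hlam1 : 1 < lam := by rw [hlamdef]; linarith
      have hlam0 : (0:ℝ) < lam := by linarith
      have hratio : Tendsto (fun n => ℓ (lam * b n) / ℓ (b n)) atTop (𝓝 1) :=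
        (hslow lam hlam0).comp hbtop
      have hc : lam / (1 + e/2) < 1 := by
        rw [div_lt_one (by linarith)]
        rw [hlamdef]; linarith
      have hev1 := hratio.eventually (eventually_gt_nhds hc)
      filter_upwards [hev1, hb1, eventually_ge_atTop 1] with n hn hbn hn1
      have hbpos : (0:ℝ) < b n := lt_of_lt_of_le one_pos hbn
      have hnpos : (0:ℝ) < n := by exact_mod_cast hn1
      have hℓb : 0 < ℓ (b n) := hlp _ hbn
      have hlb : 1 ≤ (n:ℝ) * ℓ (b n) / b n := by
        have h2 : 1/(n:ℝ) ≤ G (b n) := (hHb n hn1) ▸ hHleG (b n)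
        have h3 : ℓ (b n) = b n * G (b n) := hlG _ hbn
        rw [h3, le_div_iff₀ hbpos]
        have h4 : (n:ℝ) * (1/n) ≤ (n:ℝ) * G (b n) :=
          mul_le_mul_of_nonneg_left h2 hnpos.le
        have h5 : (n:ℝ) * (1/n) = 1 := by field_simp
        nlinarith
      have hub : (n:ℝ) * ℓ (b n) / b n ≤ 1 + e/2 := by
        have hlb1 : (1:ℝ) ≤ lam * b n := by nlinarith
        have h4 : G (lam * b n) ≤ Hs (b n) := hGleH _ _ (by nlinarith)
        rw [hHb n hn1] at h4
        have h5 : ℓ (lam * b n) = (lam * b n) * G (lam * b n) := hlG _ hlb1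
        have h6 : (n:ℝ) * ℓ (lam * b n) ≤ lam * b n := by
          rw [h5]
          have h7 : (n:ℝ) * ((lam * b n) * G (lam * b n)) ≤ (n:ℝ) * ((lam * b n) * (1/n)) := by
            apply mul_le_mul_of_nonneg_left _ hnpos.le
            exact mul_le_mul_of_nonneg_left h4 (by positivity)
          have h8 : (n:ℝ) * ((lam * b n) * (1/n)) = lam * b n := by
            field_simp
          exact h7.trans (le_of_eq h8)
        have hℓlb : 0 < ℓ (lam * b n) := hlp _ hlb1
        have h9 : lam * ℓ (b n) < ℓ (lam * b n) * (1 + e/2) := by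
          rw [div_lt_div_iff₀ (by linarith) hℓb] at hn
          linarith
        rw [div_le_iff₀ hbpos]
        have h10 : (n:ℝ) * (lam * ℓ (b n)) ≤ (n:ℝ) * (ℓ (lam * b n) * (1+e/2)) :=
          mul_le_mul_of_nonneg_left h9.le hnpos.le
        have h12 : (1+e/2) * ((n:ℝ) * ℓ (lam * b n)) ≤ (1+e/2) * (lam * b n) :=
          mul_le_mul_of_nonneg_left h6 (by linarith)
        have h13 : lam * ((n:ℝ) * ℓ (b n)) ≤ lam * ((1 + e/2) * b n) := by nlinarith
        exact le_of_mul_le_mul_left h13 hlam0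
      rw [abs_lt]
      constructor <;> linarith
    rw [Metric.tendsto_nhds]
    intro e he
    filter_upwards [key e he] with n hn
    rw [Real.dist_eq]
    exact hn
  have hmubound : ∀ s : ℝ, 1 ≤ s →
      L s - L 2 ≤ (∫ ω, min (Δ 0 ω) s ∂ℙ) ∧ (∫ ω, min (Δ 0 ω) s ∂ℙ) ≤ 1 + L s := by
    intro s hs
    have hs0 : (0:ℝ) < s := lt_of_lt_of_le one_pos hs
    have hintmin : Integrable (fun ω => min (Δ 0 ω) s) ℙ := by
      apply Integrable.mono' (integrable_const s)
        (((hmeas 0).min measurable_const).aestronglyMeasurable)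
      apply Eventually.of_forall
      intro ω
      rw [Real.norm_eq_abs, abs_of_pos (lt_min (hpos 0 ω) hs0)]
      exact min_le_right _ _
    have hlay := hintmin.integral_eq_integral_meas_lt
      (Eventually.of_forall (fun ω => (lt_min (hpos 0 ω) hs0).le))
    have heq : ∀ t : ℝ, (ℙ {a | t < min (Δ 0 a) s}).toReal = (Iio s).indicator Hs t := by
      intro t
      by_cases ht : t < s
      · rw [Set.indicator_of_mem (mem_Iio.mpr ht)]
        rw [hHdef]
        simp only []
        congr 2
        ext ω
        rw [mem_setOf_eq, mem_setOf_eq, lt_min_iff, and_iff_left ht]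
      · rw [Set.indicator_of_notMem (fun hmem => ht (mem_Iio.mp hmem))]
        have hempty : {a | t < min (Δ 0 a) s} = ∅ := by
          ext ω
          simp only [mem_setOf_eq, mem_empty_iff_false, iff_false, not_lt]
          exact le_trans (min_le_right _ _) (not_lt.mp ht)
        rw [hempty]
        simp
    have h2 : ∫ ω, min (Δ 0 ω) s ∂ℙ = ∫ t in (0:ℝ)..s, Hs t := by
      rw [hlay]
      rw [show (fun t : ℝ => (ℙ : Measure Ω).real {a | t < min (Δ 0 a) s})
        = (Iio s).indicator Hs from funext heq]
      rw [setIntegral_indicator measurableSet_Iio]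
      rw [intervalIntegral.integral_of_le hs0.le, integral_Ioc_eq_integral_Ioo]
      congr 1
    have hHint : ∀ a c : ℝ, IntervalIntegrable Hs volume a c := fun a c =>
      hHanti.intervalIntegrable
    have hsplit01 : (∫ t in (0:ℝ)..1, Hs t) + (∫ t in (1:ℝ)..s, Hs t)
        = ∫ t in (0:ℝ)..s, Hs t :=
      intervalIntegral.integral_add_adjacent_intervals (hHint _ _) (hHint _ _)
    have hup01 : ∫ t in (0:ℝ)..1, Hs t ≤ 1 := by
      have h3 := integral_le_const hHanti (show (0:ℝ) ≤ 1 by norm_num)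
      have h4 := hH1 0
      nlinarith
    have hlo01 : 0 ≤ ∫ t in (0:ℝ)..1, Hs t :=
      intervalIntegral.integral_nonneg (by norm_num) (fun t _ => hH0 t)
    have hup1s : ∫ t in (1:ℝ)..s, Hs t ≤ L s := by
      apply intervalIntegral.integral_mono_on hs (hHint _ _) hGanti.intervalIntegrable
      intro t _
      exact hHleG t
    have hGshift : Antitone (fun t : ℝ => G (t+1)) := fun a c hac => hGanti (by linarith)
    have hlo1s : (∫ t in (1:ℝ)..s, G (t+1)) ≤ ∫ t in (1:ℝ)..s, Hs t := by
      apply intervalIntegral.integral_mono_on hs hGshift.intervalIntegrable (hHint _ _)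
      intro t _
      exact hGleH t (t+1) (by linarith)
    have hcomp : (∫ t in (1:ℝ)..s, G (t+1)) = ∫ t in (2:ℝ)..(s+1), G t := by
      have h5 : (∫ t in (1:ℝ)..s, G (t+1)) = ∫ t in ((1:ℝ)+1)..(s+1), G t :=
        intervalIntegral.integral_comp_add_right G 1
      rw [show (1:ℝ)+1 = 2 by norm_num] at h5
      exact h5
    have hLs1 : L s ≤ L (s+1) := by
      have h6 : (∫ t in (1:ℝ)..s, G t) + (∫ t in s..(s+1), G t) = ∫ t in (1:ℝ)..(s+1), G t :=
        intervalIntegral.integral_add_adjacent_intervals hGanti.intervalIntegrable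
          hGanti.intervalIntegrable
      have h7 : 0 ≤ ∫ t in s..(s+1), G t :=
        intervalIntegral.integral_nonneg (by linarith) (fun t _ => hG0 t)
      rw [hLdef]
      simp only []
      linarith
    have hL2s : (∫ t in (2:ℝ)..(s+1), G t) = L (s+1) - L 2 := by
      have h8 : (∫ t in (1:ℝ)..2, G t) + (∫ t in (2:ℝ)..(s+1), G t)
          = ∫ t in (1:ℝ)..(s+1), G t :=
        intervalIntegral.integral_add_adjacent_intervals hGanti.intervalIntegrable
          hGanti.intervalIntegrable
      rw [hLdef]
      simp only []
      linarith
    constructor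
    · rw [h2]
      have h9 : L s - L 2 ≤ ∫ t in (1:ℝ)..s, Hs t := by
        calc L s - L 2 ≤ L (s+1) - L 2 := by linarith
        _ = ∫ t in (2:ℝ)..(s+1), G t := hL2s.symm
        _ = ∫ t in (1:ℝ)..s, G (t+1) := hcomp.symm
        _ ≤ _ := hlo1s
      linarith
    · rw [h2]
      linarith
  have main : ∀ δ : ℝ, 0 < δ → ∀ᶠ n : ℕ in atTop,
      ℙ {ω | ε < |T n ω / b n * (ℓ (b n) / ℓs (b n)) - 1|} ≤ ENNReal.ofReal δ := by
    intro δ hδ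
    set K : ℝ := max 1 (4/δ) with hKdef
    have hK1 : (1:ℝ) ≤ K := le_max_left _ _
    have hK0 : (0:ℝ) < K := lt_of_lt_of_le one_pos hK1
    have hKδ : 1/K ≤ δ/4 := by
      rw [div_le_iff₀ hK0]
      have h1 : 4/δ ≤ K := le_max_right _ _
      rw [div_le_iff₀ hδ] at h1
      nlinarith
    set μn : ℕ → ℝ := fun n => ∫ ω, min (Δ 0 ω) (K * b n) ∂ℙ with hμdef
    have hKb1 : ∀ᶠ n : ℕ in atTop, 1 ≤ K * b n := by
      filter_upwards [hb1] with n hbn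
      nlinarith
    have hLbpos : ∀ᶠ n : ℕ in atTop, 0 < L (b n) :=
      hLbtop.eventually (eventually_gt_atTop 0)
    have hLKb : ∀ᶠ n : ℕ in atTop,
        L (b n) ≤ L (K * b n) ∧ L (K * b n) ≤ L (b n) + (K-1) * ℓ (b n) := by
      filter_upwards [hb1] with n hbn
      have h1 : b n ≤ K * b n := by nlinarith
      have hsplit : (∫ t in (1:ℝ)..(b n), G t) + (∫ t in (b n)..(K * b n), G t)
          = ∫ t in (1:ℝ)..(K * b n), G t :=
        intervalIntegral.integral_add_adjacent_intervals hGanti.intervalIntegrable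
          hGanti.intervalIntegrable
      have hLb : L (b n) = ∫ t in (1:ℝ)..(b n), G t := rfl
      have hLKb' : L (K * b n) = ∫ t in (1:ℝ)..(K * b n), G t := rfl
      constructor
      · have h2 : 0 ≤ ∫ t in (b n)..(K * b n), G t :=
          intervalIntegral.integral_nonneg h1 (fun t _ => hG0 t)
        rw [hLb, hLKb']
        linarith
      · have h2 := integral_le_const hGanti h1
        have h3 : (K * b n - b n) * G (b n) = (K - 1) * ℓ (b n) := by
          rw [hlG _ hbn]
          ring
        rw [hLb, hLKb']
        linarith
    have hrn : Tendsto (fun n => μn n / L (b n)) atTop (𝓝 1) := by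
      have hlow : Tendsto (fun n => 1 - L 2 / L (b n)) atTop (𝓝 (1 - 0)) :=
        tendsto_const_nhds.sub (tendsto_const_nhds.div_atTop hLbtop)
      rw [sub_zero] at hlow
      have hup : Tendsto (fun n => 1 / L (b n) + 1 + (K-1) * (ℓ (b n) / L (b n)))
          atTop (𝓝 (0 + 1 + (K-1) * 0)) :=
        ((tendsto_const_nhds.div_atTop hLbtop).add tendsto_const_nhds).add
          (tendsto_const_nhds.mul hwn)
      rw [show (0:ℝ) + 1 + (K-1) * 0 = 1 by ring] at hup
      apply tendsto_of_tendsto_of_tendsto_of_le_of_le' hlow hup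
      · filter_upwards [hb1, hKb1, hLbpos, hLKb] with n hbn hKbn hLbp hLK
        have hmu := hmubound (K * b n) hKbn
        have h1 : L (b n) - L 2 ≤ μn n := by
          have := hmu.1
          have := hLK.1
          simp only [hμdef]
          linarith
        calc 1 - L 2 / L (b n) = (L (b n) - L 2) / L (b n) := by field_simp
        _ ≤ μn n / L (b n) := by gcongr
      · filter_upwards [hb1, hKb1, hLbpos, hLKb] with n hbn hKbn hLbp hLK
        have hmu := hmubound (K * b n) hKbn
        have h1 : μn n ≤ 1 + L (b n) + (K-1) * ℓ (b n) := by
          have := hmu.2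
          have := hLK.2
          simp only [hμdef]
          linarith
        calc μn n / L (b n) ≤ (1 + L (b n) + (K-1) * ℓ (b n)) / L (b n) := by gcongr
        _ = 1 / L (b n) + 1 + (K-1) * (ℓ (b n) / L (b n)) := by field_simp
    have hslowK : Tendsto (fun n => ℓ (K * b n) / ℓ (b n)) atTop (𝓝 1) :=
      (hslow K hK0).comp hbtop
    have hun : Tendsto (fun n : ℕ => (n:ℝ) * G (K * b n)) atTop (𝓝 (1/K)) := by
      have h1 : Tendsto (fun n : ℕ => ((n:ℝ) * ℓ (b n) / b n) * (ℓ (K * b n) / ℓ (b n)) * (1/K))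
          atTop (𝓝 (1 * 1 * (1/K))) := (hA.mul hslowK).mul tendsto_const_nhds
      rw [one_mul, one_mul] at h1
      apply h1.congr'
      filter_upwards [hb1, hKb1] with n hbn hKbn
      have hbpos : (0:ℝ) < b n := lt_of_lt_of_le one_pos hbn
      have hℓb : 0 < ℓ (b n) := hlp _ hbn
      have hGK : G (K * b n) = ℓ (K * b n) / (K * b n) := by
        rw [hlG _ hKbn]
        field_simp
      show ((n:ℝ) * ℓ (b n) / b n) * (ℓ (K * b n) / ℓ (b n)) * (1/K) = (n:ℝ) * G (K * b n)
      rw [hGK]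
      field_simp
    have hAub : ∀ᶠ n : ℕ in atTop, (n:ℝ) * Hs (K * b n) ≤ δ/2 := by
      have h1 := hun.eventually (eventually_le_nhds (show 1/K < 1/K + δ/4 by linarith))
      filter_upwards [h1, eventually_ge_atTop 1] with n hn hn1
      have hnn : (0:ℝ) ≤ n := Nat.cast_nonneg n
      calc (n:ℝ) * Hs (K * b n) ≤ (n:ℝ) * G (K * b n) :=
        mul_le_mul_of_nonneg_left (hHleG _) hnn
      _ ≤ 1/K + δ/4 := hn
      _ ≤ δ/2 := by linarith
    have hchebub : ∀ᶠ n : ℕ in atTop,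
        ((n:ℝ) * ((K * b n) * μn n)) / ((ε/2) * (b n * L (b n) / ℓ (b n)))^2 ≤ δ/2 := by
      have hprod : Tendsto (fun n : ℕ => (4*K/ε^2) *
          (((n:ℝ) * ℓ (b n) / b n) * ((μn n / L (b n)) * (ℓ (b n) / L (b n)))))
          atTop (𝓝 ((4*K/ε^2) * (1 * (1 * 0)))) :=
        tendsto_const_nhds.mul (hA.mul (hrn.mul hwn))
      rw [show (4*K/ε^2) * (1 * (1 * 0)) = 0 by ring] at hprod
      have heq : ∀ᶠ n : ℕ in atTop, (4*K/ε^2) *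
          (((n:ℝ) * ℓ (b n) / b n) * ((μn n / L (b n)) * (ℓ (b n) / L (b n))))
          = ((n:ℝ) * ((K * b n) * μn n)) / ((ε/2) * (b n * L (b n) / ℓ (b n)))^2 := by
        filter_upwards [hb1, hLbpos] with n hbn hLbp
        have hbpos : (0:ℝ) < b n := lt_of_lt_of_le one_pos hbn
        have hℓb : 0 < ℓ (b n) := hlp _ hbn
        field_simp
        ring
      have h2 := hprod.congr' heq
      exact h2.eventually (eventually_le_nhds (by linarith))
    have hcen : ∀ᶠ n : ℕ in atTop,
        |((n:ℝ) * μn n) * (ℓ (b n) / (b n * L (b n))) - 1| ≤ ε/2 := by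
      have hcenter : Tendsto (fun n : ℕ => ((n:ℝ) * ℓ (b n) / b n) * (μn n / L (b n)))
          atTop (𝓝 (1*1)) := hA.mul hrn
      rw [one_mul] at hcenter
      have h1 := (Metric.tendsto_nhds.mp hcenter) (ε/2) (half_pos hε)
      filter_upwards [h1, hb1, hLbpos] with n hn hbn hLbp
      have hbpos : (0:ℝ) < b n := lt_of_lt_of_le one_pos hbn
      have hℓb : 0 < ℓ (b n) := hlp _ hbn
      rw [Real.dist_eq] at hn
      have heq : ((n:ℝ) * μn n) * (ℓ (b n) / (b n * L (b n)))
          = ((n:ℝ) * ℓ (b n) / b n) * (μn n / L (b n)) := by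
        field_simp
      rw [heq]
      exact hn.le
    filter_upwards [hb1, hKb1, hLbpos, hAub, hchebub, hcen, eventually_ge_atTop 1]
      with n hbn hKbn hLb hAu hch hce hn1
    have hbpos : (0:ℝ) < b n := lt_of_lt_of_le one_pos hbn
    have hℓb : 0 < ℓ (b n) := hlp _ hbn
    set s : ℝ := K * b n with hsdef
    have hs1 : (1:ℝ) ≤ s := hKbn
    have hs0 : (0:ℝ) < s := lt_of_lt_of_le one_pos hs1
    set Y : ℕ → Ω → ℝ := fun i ω => min (Δ i ω) s with hYdef
    have hYmeas : ∀ i, Measurable (Y i) := fun i => (hmeas i).min measurable_const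
    have hYpos : ∀ i ω, 0 < Y i ω := fun i ω => lt_min (hpos i ω) hs0
    have hYle : ∀ i ω, Y i ω ≤ s := fun i ω => min_le_right _ _
    have hYmem : ∀ i, MemLp (Y i) 2 ℙ := by
      intro i
      apply MemLp.of_bound (hYmeas i).aestronglyMeasurable s
      apply Eventually.of_forall
      intro ω
      rw [Real.norm_eq_abs, abs_of_pos (hYpos i ω)]
      exact hYle i ω
    have hYint : ∀ i, Integrable (Y i) ℙ := fun i => (hYmem i).integrable one_le_two
    have hYid : ∀ i, IdentDistrib (Y i) (Y 0) ℙ ℙ := fun i =>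
      (hident i).comp (measurable_id.min measurable_const)
    have hYmean : ∀ i, ∫ ω, Y i ω ∂ℙ = μn n := by
      intro i
      have h1 : ∫ ω, Y i ω ∂ℙ = ∫ ω, Y 0 ω ∂ℙ := (hYid i).integral_eq
      rw [h1]
    set SY : Ω → ℝ := ∑ i ∈ Finset.range n, Y i with hSdef
    have hSapp : ∀ ω, SY ω = ∑ i ∈ Finset.range n, Y i ω := by
      intro ω
      rw [hSdef]
      exact Finset.sum_apply ω _ _
    have hES : ∫ ω, SY ω ∂ℙ = n * μn n := by
      calc ∫ ω, SY ω ∂ℙ = ∫ ω, (∑ i ∈ Finset.range n, Y i ω) ∂ℙ :=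
        integral_congr_ae (Eventually.of_forall hSapp)
      _ = ∑ i ∈ Finset.range n, ∫ ω, Y i ω ∂ℙ := integral_finset_sum _ (fun i _ => hYint i)
      _ = ∑ i ∈ Finset.range n, μn n := Finset.sum_congr rfl (fun i _ => hYmean i)
      _ = n * μn n := by rw [Finset.sum_const, Finset.card_range, nsmul_eq_mul]
    have hSmem : MemLp SY 2 ℙ := memLp_finset_sum' _ (fun i _ => hYmem i)
    have hpair : Set.Pairwise ↑(Finset.range n) (fun i j => IndepFun (Y i) (Y j) ℙ) := by
      intro i _ j _ hij
      exact (hindep.comp (fun _ => fun x => min x s)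
        (fun _ => measurable_id.min measurable_const)).indepFun hij
    have hVarS : Var[SY] ≤ n * (s * μn n) := by
      rw [hSdef, IndepFun.variance_sum (fun i _ => hYmem i) hpair]
      have hvi : ∀ i ∈ Finset.range n, Var[Y i] ≤ s * μn n := by
        intro i _
        rw [(hYid i).variance_eq]
        have h1 : Var[Y 0] ≤ ∫ ω, (Y 0 ^ 2) ω ∂ℙ :=
          variance_le_expectation_sq (hYmeas 0).aestronglyMeasurable
        have h2 : ∫ ω, (Y 0 ^ 2) ω ∂ℙ ≤ ∫ ω, s * Y 0 ω ∂ℙ := by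
          apply integral_mono (hYmem 0).integrable_sq ((hYint 0).const_mul s)
          intro ω
          show (Y 0 ^ 2) ω ≤ s * Y 0 ω
          rw [Pi.pow_apply]
          have hp := hYpos 0 ω
          have hl := hYle 0 ω
          nlinarith
        have h3 : ∫ ω, s * Y 0 ω ∂ℙ = s * μn n := by
          rw [integral_const_mul, hYmean 0]
        linarith
      calc ∑ i ∈ Finset.range n, Var[Y i] ≤ ∑ i ∈ Finset.range n, (s * μn n) :=
        Finset.sum_le_sum hvi
      _ = n * (s * μn n) := by rw [Finset.sum_const, Finset.card_range, nsmul_eq_mul]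
    set c' : ℝ := (ε/2) * (b n * L (b n) / ℓ (b n)) with hc'def
    have hc'pos : 0 < c' := by
      rw [hc'def]
      exact mul_pos (half_pos hε) (div_pos (mul_pos hbpos hLb) hℓb)
    have hAbound : ℙ (⋃ i ∈ Finset.range n, {ω | s < Δ i ω}) ≤ ENNReal.ofReal (δ/2) := by
      calc ℙ (⋃ i ∈ Finset.range n, {ω | s < Δ i ω})
          ≤ ∑ i ∈ Finset.range n, ℙ {ω | s < Δ i ω} := measure_biUnion_finset_le _ _
      _ = ∑ i ∈ Finset.range n, ℙ {ω | s < Δ 0 ω} := by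
          apply Finset.sum_congr rfl
          intro i _
          exact (hident i).measure_mem_eq (measurableSet_Ioi (a := s))
      _ = (n : ℝ≥0∞) * ℙ {ω | s < Δ 0 ω} := by
          rw [Finset.sum_const, Finset.card_range, nsmul_eq_mul]
      _ = ENNReal.ofReal ((n:ℝ) * Hs s) := by
          have h1 : ENNReal.ofReal (Hs s) = ℙ {ω | s < Δ 0 ω} := by
            rw [hHdef]
            exact ENNReal.ofReal_toReal (measure_ne_top _ _)
          rw [ENNReal.ofReal_mul (Nat.cast_nonneg n), h1, ENNReal.ofReal_natCast]
      _ ≤ ENNReal.ofReal (δ/2) := ENNReal.ofReal_le_ofReal hAu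
    have hBbound : ℙ {ω | c' ≤ |SY ω - ∫ ω', SY ω' ∂ℙ|} ≤ ENNReal.ofReal (δ/2) := by
      have h1 := meas_ge_le_variance_div_sq hSmem hc'pos
      refine le_trans h1 ?_
      apply ENNReal.ofReal_le_ofReal
      calc Var[SY]/c'^2 ≤ ((n:ℝ) * (s * μn n))/c'^2 := by gcongr
      _ ≤ δ/2 := hch
    have hsubset : {ω | ε < |T n ω / b n * (ℓ (b n) / ℓs (b n)) - 1|} ⊆
        (⋃ i ∈ Finset.range n, {ω | s < Δ i ω}) ∪ {ω | c' ≤ |SY ω - ∫ ω', SY ω' ∂ℙ|} := by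
      intro ω hω
      by_contra hcon
      rw [Set.mem_union] at hcon
      push_neg at hcon
      obtain ⟨hA', hB'⟩ := hcon
      have hTS : T n ω = SY ω := by
        rw [hT n ω, hSapp ω]
        apply Finset.sum_congr rfl
        intro i hi
        have hile : ¬ (s < Δ i ω) := by
          intro hlt
          exact hA' (Set.mem_biUnion hi hlt)
        show Δ i ω = min (Δ i ω) s
        rw [min_eq_left (not_lt.mp hile)]
      have hB'' : |SY ω - ∫ ω', SY ω' ∂ℙ| < c' := not_le.mp hB'
      rw [hES] at hB''
      have hρ : (0:ℝ) < ℓ (b n) / (b n * L (b n)) := div_pos hℓb (mul_pos hbpos hLb)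
      have hεformula : c' * (ℓ (b n) / (b n * L (b n))) = ε/2 := by
        rw [hc'def]
        field_simp
      have hexpr : T n ω / b n * (ℓ (b n) / ℓs (b n)) = SY ω * (ℓ (b n) / (b n * L (b n))) := by
        rw [hlsL (b n) hbn, hTS]
        ring
      have hmem2 : ε < |SY ω * (ℓ (b n) / (b n * L (b n))) - 1| := by
        rw [← hexpr]
        exact hω
      have htri : |SY ω * (ℓ (b n) / (b n * L (b n))) - 1| ≤
          |SY ω - (n:ℝ) * μn n| * (ℓ (b n) / (b n * L (b n)))
          + |((n:ℝ) * μn n) * (ℓ (b n) / (b n * L (b n))) - 1| := by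
        have hid : SY ω * (ℓ (b n) / (b n * L (b n))) - 1
            = (SY ω - (n:ℝ) * μn n) * (ℓ (b n) / (b n * L (b n)))
              + (((n:ℝ) * μn n) * (ℓ (b n) / (b n * L (b n))) - 1) := by ring
        rw [hid]
        refine (abs_add_le _ _).trans ?_
        rw [abs_mul, abs_of_pos hρ]
      have hlast : |SY ω - (n:ℝ) * μn n| * (ℓ (b n) / (b n * L (b n))) < ε/2 := by
        calc |SY ω - (n:ℝ) * μn n| * (ℓ (b n) / (b n * L (b n)))
            < c' * (ℓ (b n) / (b n * L (b n))) := mul_lt_mul_of_pos_right hB'' hρ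
        _ = ε/2 := hεformula
      linarith [hce, hmem2, htri, hlast]
    calc ℙ {ω | ε < |T n ω / b n * (ℓ (b n) / ℓs (b n)) - 1|}
        ≤ ℙ ((⋃ i ∈ Finset.range n, {ω | s < Δ i ω})
            ∪ {ω | c' ≤ |SY ω - ∫ ω', SY ω' ∂ℙ|}) := measure_mono hsubset
    _ ≤ ℙ (⋃ i ∈ Finset.range n, {ω | s < Δ i ω})
        + ℙ {ω | c' ≤ |SY ω - ∫ ω', SY ω' ∂ℙ|} := measure_union_le _ _
    _ ≤ ENNReal.ofReal (δ/2) + ENNReal.ofReal (δ/2) := add_le_add hAbound hBbound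
    _ = ENNReal.ofReal δ := by
        rw [← ENNReal.ofReal_add (by linarith) (by linarith)]
        norm_num
  rw [ENNReal.tendsto_nhds_zero]
  intro δ hδ
  have h1 : (0:ℝ) < (min δ 1).toReal := by
    rw [ENNReal.toReal_pos_iff]
    constructor
    · exact lt_min hδ one_pos
    · exact lt_of_le_of_lt (min_le_right _ _) ENNReal.one_lt_top
  filter_upwards [main _ h1] with n hn
  refine hn.trans ?_
  rw [ENNReal.ofReal_toReal (by
    exact ne_top_of_le_ne_top ENNReal.one_ne_top (min_le_right _ _))]
  exact min_le_left _ _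
end

section
/- Let U_1, U_2, … be i.i.d. random variables uniformly distributed on (0,1). Then (ln n) · E[ n / (1/U_1 + ⋯ + 1/U_n) ] → 1 as n → ∞. -/
open MeasureTheory ProbabilityTheory Filter Set Topology intervalIntegral
open scoped ENNReal ProbabilityTheory

noncomputable def tr (c : ℝ) (x : ℝ) : ℝ := max (min x⁻¹ c) 0

lemma tr_meas (c : ℝ) : Measurable (tr c) :=
  (measurable_inv.min measurable_const).max measurable_const

lemma tr_nonneg (c x : ℝ) : 0 ≤ tr c x := le_max_right _ _

lemma tr_le (c x : ℝ) (hc : 0 ≤ c) : tr c x ≤ c := max_le (min_le_right _ _) hc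

lemma tr_eq_of_mem {c : ℝ} (hc : 1 ≤ c) {x : ℝ} (hx : x ∈ Set.Ioo (0:ℝ) 1) :
    tr c x = min x⁻¹ c := by
  have h1 : (1:ℝ) ≤ x⁻¹ := (one_le_inv_iff₀).2 ⟨hx.1, hx.2.le⟩
  have : (1:ℝ) ≤ min x⁻¹ c := le_min h1 hc
  exact max_eq_left (le_trans zero_le_one this)

lemma tr_le_inv {c : ℝ} {x : ℝ} (hx : 0 < x) : tr c x ≤ x⁻¹ :=
  max_le (min_le_left _ _) (inv_nonneg.2 hx.le)

lemma tr_m1 {c : ℝ} (hc : 1 ≤ c) :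
    ∫ x in Set.Ioo (0:ℝ) 1, tr c x = 1 + Real.log c := by
  have hc0 : (0:ℝ) < c := lt_of_lt_of_le zero_lt_one hc
  have hb0 : (0:ℝ) < c⁻¹ := inv_pos.2 hc0
  have hb1 : c⁻¹ ≤ 1 := inv_le_one_of_one_le₀ hc
  have h1 : ∫ x in Set.Ioo (0:ℝ) 1, tr c x = ∫ x in (0:ℝ)..1, tr c x := by
    rw [intervalIntegral.integral_of_le zero_le_one,
      Measure.restrict_congr_set MeasureTheory.Ioo_ae_eq_Ioc]
  have e1 : Set.EqOn (tr c) (fun _ => c) (Set.Ioc 0 c⁻¹) := by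
    intro x hx
    have hx1 : x ≤ 1 := le_trans hx.2 hb1
    have hxi : c ≤ x⁻¹ := (le_inv_comm₀ hx.1 hc0).1 hx.2
    simp only [tr, min_eq_right hxi, max_eq_left hc0.le]
  have e2 : Set.EqOn (tr c) (fun x => x⁻¹) (Set.Ioc c⁻¹ 1) := by
    intro x hx
    have hx0 : 0 < x := lt_trans hb0 hx.1
    have hxi : x⁻¹ ≤ c := by
      rw [inv_le_comm₀ hx0 hc0]; exact hx.1.le
    have h1x : (1:ℝ) ≤ x⁻¹ := (one_le_inv_iff₀).2 ⟨hx0, hx.2⟩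
    simp only [tr, min_eq_left hxi, max_eq_left (le_trans zero_le_one h1x)]
  have i1 : IntervalIntegrable (tr c) volume 0 c⁻¹ := by
    rw [intervalIntegrable_iff_integrableOn_Ioc_of_le hb0.le]
    exact (integrableOn_const (C := c) measure_Ioc_lt_top.ne).congr_fun e1.symm measurableSet_Ioc
  have hne : ∀ x : ℝ, x ∈ Set.uIcc c⁻¹ 1 → x ≠ 0 := by
    intro x hx
    rw [Set.uIcc_of_le hb1] at hx
    exact (lt_of_lt_of_le hb0 hx.1).ne'
  have iinv : IntervalIntegrable (fun x : ℝ => x⁻¹) volume c⁻¹ 1 :=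
    intervalIntegrable_inv hne continuousOn_id
  have i2 : IntervalIntegrable (tr c) volume c⁻¹ 1 := by
    rw [intervalIntegrable_iff_integrableOn_Ioc_of_le hb1]
    rw [intervalIntegrable_iff_integrableOn_Ioc_of_le hb1] at iinv
    exact iinv.congr_fun e2.symm measurableSet_Ioc
  rw [h1, ← intervalIntegral.integral_add_adjacent_intervals i1 i2]
  have v1 : ∫ x in (0:ℝ)..c⁻¹, tr c x = 1 := by
    rw [intervalIntegral.integral_of_le hb0.le,
      MeasureTheory.setIntegral_congr_fun measurableSet_Ioc e1]
    simp [Real.volume_Ioc, ENNReal.toReal_ofReal hb0.le,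
      inv_mul_cancel₀ hc0.ne']
    rw [max_eq_left hb0.le, inv_mul_cancel₀ hc0.ne']
  have v2 : ∫ x in c⁻¹..1, tr c x = Real.log c := by
    rw [intervalIntegral.integral_of_le hb1,
      MeasureTheory.setIntegral_congr_fun measurableSet_Ioc e2,
      ← intervalIntegral.integral_of_le hb1, integral_inv_of_pos hb0 zero_lt_one]
    rw [one_div, inv_inv]
  rw [v1, v2]

lemma tr_m2 {c : ℝ} (hc : 1 ≤ c) :
    ∫ x in Set.Ioo (0:ℝ) 1, (tr c x) ^ 2 = 2 * c - 1 := by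
  have hc0 : (0:ℝ) < c := lt_of_lt_of_le zero_lt_one hc
  have hb0 : (0:ℝ) < c⁻¹ := inv_pos.2 hc0
  have hb1 : c⁻¹ ≤ 1 := inv_le_one_of_one_le₀ hc
  have h1 : ∫ x in Set.Ioo (0:ℝ) 1, (tr c x) ^ 2 = ∫ x in (0:ℝ)..1, (tr c x) ^ 2 := by
    rw [intervalIntegral.integral_of_le zero_le_one,
      Measure.restrict_congr_set MeasureTheory.Ioo_ae_eq_Ioc]
  have e1 : Set.EqOn (fun x => (tr c x) ^ 2) (fun _ => c ^ 2) (Set.Ioc 0 c⁻¹) := by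
    intro x hx
    have hxi : c ≤ x⁻¹ := (le_inv_comm₀ hx.1 hc0).1 hx.2
    simp only [tr, min_eq_right hxi, max_eq_left hc0.le]
  have e2 : Set.EqOn (fun x => (tr c x) ^ 2) (fun x : ℝ => x ^ (-2 : ℤ)) (Set.Ioc c⁻¹ 1) := by
    intro x hx
    have hx0 : 0 < x := lt_trans hb0 hx.1
    have hxi : x⁻¹ ≤ c := by rw [inv_le_comm₀ hx0 hc0]; exact hx.1.le
    have h1x : (1:ℝ) ≤ x⁻¹ := (one_le_inv_iff₀).2 ⟨hx0, hx.2⟩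
    simp only [tr, min_eq_left hxi, max_eq_left (le_trans zero_le_one h1x)]
    rw [zpow_neg, inv_pow]
    simp only [zpow_two, sq]
  have hne : (0:ℝ) ∉ Set.uIcc c⁻¹ 1 := by
    rw [Set.uIcc_of_le hb1]
    intro h; exact absurd h.1 (not_le.2 hb0)
  have izpow : IntervalIntegrable (fun x : ℝ => x ^ (-2 : ℤ)) volume c⁻¹ 1 :=
    intervalIntegrable_zpow (Or.inr hne)
  have i1 : IntervalIntegrable (fun x => (tr c x) ^ 2) volume 0 c⁻¹ := by
    rw [intervalIntegrable_iff_integrableOn_Ioc_of_le hb0.le]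
    exact (integrableOn_const (C := c ^ 2) measure_Ioc_lt_top.ne).congr_fun e1.symm measurableSet_Ioc
  have i2 : IntervalIntegrable (fun x => (tr c x) ^ 2) volume c⁻¹ 1 := by
    rw [intervalIntegrable_iff_integrableOn_Ioc_of_le hb1]
    rw [intervalIntegrable_iff_integrableOn_Ioc_of_le hb1] at izpow
    exact izpow.congr_fun e2.symm measurableSet_Ioc
  rw [h1, ← intervalIntegral.integral_add_adjacent_intervals i1 i2]
  have v1 : ∫ x in (0:ℝ)..c⁻¹, (tr c x) ^ 2 = c := by
    rw [intervalIntegral.integral_of_le hb0.le,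
      MeasureTheory.setIntegral_congr_fun measurableSet_Ioc e1]
    simp [Real.volume_Ioc, ENNReal.toReal_ofReal hb0.le, sq]
    field_simp
    rw [max_eq_left (by positivity), mul_one_div_cancel hc0.ne']
  have v2 : ∫ x in c⁻¹..1, (tr c x) ^ 2 = c - 1 := by
    rw [intervalIntegral.integral_of_le hb1,
      MeasureTheory.setIntegral_congr_fun measurableSet_Ioc e2,
      ← intervalIntegral.integral_of_le hb1, integral_zpow (Or.inr ⟨by norm_num, hne⟩)]
    norm_num
    field_simp
    ring
  rw [v1, v2]; ring

section main
set_option linter.unusedSectionVars false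
variable {Ω : Type*} [MeasureSpace Ω] [IsProbabilityMeasure (ℙ : Measure Ω)]
  {U : ℕ → Ω → ℝ}

lemma Eg (hmeas : ∀ i, Measurable (U i))
    (hunif : ∀ i, Measure.map (U i) ℙ = volume.restrict (Set.Ioo (0:ℝ) 1))
    (g : ℝ → ℝ) (hg : Measurable g) (i : ℕ) :
    ∫ ω, g (U i ω) ∂ℙ = ∫ x in Set.Ioo (0:ℝ) 1, g x := by
  rw [← MeasureTheory.integral_map (hmeas i).aemeasurable hg.aestronglyMeasurable, hunif i]

lemma EY (hmeas : ∀ i, Measurable (U i))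
    (hunif : ∀ i, Measure.map (U i) ℙ = volume.restrict (Set.Ioo (0:ℝ) 1))
    {c : ℝ} (hc : 1 ≤ c) (i : ℕ) :
    ∫ ω, tr c (U i ω) ∂ℙ = 1 + Real.log c := by
  rw [Eg hmeas hunif _ (tr_meas c) i, tr_m1 hc]

lemma memY (hmeas : ∀ i, Measurable (U i)) {c : ℝ} (hc : 1 ≤ c) (i : ℕ) :
    MemLp (fun ω => tr c (U i ω)) 2 ℙ := by
  refine MemLp.of_bound ((tr_meas c).comp (hmeas i)).aestronglyMeasurable c ?_
  filter_upwards with ω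
  rw [Real.norm_eq_abs, abs_of_nonneg (tr_nonneg _ _)]
  exact tr_le _ _ (le_trans zero_le_one hc)

lemma varY (hmeas : ∀ i, Measurable (U i))
    (hunif : ∀ i, Measure.map (U i) ℙ = volume.restrict (Set.Ioo (0:ℝ) 1))
    {c : ℝ} (hc : 1 ≤ c) (i : ℕ) :
    Var[fun ω => tr c (U i ω)] ≤ 2 * c := by
  refine le_trans (variance_le_expectation_sq ((tr_meas c).comp (hmeas i)).aestronglyMeasurable) ?_
  have : (𝔼[(fun ω => tr c (U i ω)) ^ 2] : ℝ) = ∫ ω, (tr c (U i ω))^2 ∂ℙ := by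
    congr 1
  rw [this, Eg hmeas hunif _ ((tr_meas c).pow_const 2) i, tr_m2 hc]
  linarith

lemma varT (hmeas : ∀ i, Measurable (U i))
    (hindep : iIndepFun U ℙ)
    (hunif : ∀ i, Measure.map (U i) ℙ = volume.restrict (Set.Ioo (0:ℝ) 1))
    {c : ℝ} (hc : 1 ≤ c) (n : ℕ) :
    Var[∑ i ∈ Finset.range n, fun ω => tr c (U i ω)] ≤ n * (2 * c) := by
  have hYind : iIndepFun (fun i => fun ω => tr c (U i ω)) ℙ :=
    hindep.comp (fun _ => tr c) (fun _ => tr_meas c)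
  rw [IndepFun.variance_sum (fun i _ => memY hmeas hc i)
    (fun i _ j _ hij => hYind.indepFun hij)]
  calc ∑ i ∈ Finset.range n, Var[fun ω => tr c (U i ω)]
      ≤ ∑ _i ∈ Finset.range n, 2 * c :=
        Finset.sum_le_sum (fun i _ => varY hmeas hunif hc i)
    _ = n * (2 * c) := by simp [mul_comm]

lemma ET (hmeas : ∀ i, Measurable (U i))
    (hunif : ∀ i, Measure.map (U i) ℙ = volume.restrict (Set.Ioo (0:ℝ) 1))
    {c : ℝ} (hc : 1 ≤ c) (n : ℕ) :
    𝔼[∑ i ∈ Finset.range n, fun ω => tr c (U i ω)] = n * (1 + Real.log c) := by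
  have : 𝔼[∑ i ∈ Finset.range n, fun ω => tr c (U i ω)]
      = ∑ i ∈ Finset.range n, ∫ ω, tr c (U i ω) ∂ℙ := by
    rw [← MeasureTheory.integral_finset_sum _
      (fun i _ => (memY hmeas hc i).integrable one_le_two)]
    congr 1
    ext ω
    simp
  rw [this]
  simp only [EY hmeas hunif hc, Finset.sum_const, Finset.card_range, nsmul_eq_mul]

lemma cheb (hmeas : ∀ i, Measurable (U i))
    (hindep : iIndepFun U ℙ)
    (hunif : ∀ i, Measure.map (U i) ℙ = volume.restrict (Set.Ioo (0:ℝ) 1))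
    {c : ℝ} (hc : 1 ≤ c) (n : ℕ) {a : ℝ} (ha : 0 < a) :
    ℙ {ω | a ≤ |(∑ i ∈ Finset.range n, tr c (U i ω)) - n * (1 + Real.log c)|}
      ≤ ENNReal.ofReal (n * (2 * c) / a ^ 2) := by
  have hmem : MemLp (∑ i ∈ Finset.range n, fun ω => tr c (U i ω)) 2 ℙ :=
    memLp_finset_sum' _ (fun i _ => memY hmeas hc i)
  have h := meas_ge_le_variance_div_sq hmem ha
  rw [ET hmeas hunif hc n] at h
  refine le_trans (le_of_eq ?_) (le_trans h (ENNReal.ofReal_le_ofReal ?_))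
  · congr 1
    ext ω
    simp [Finset.sum_apply]
  · gcongr
    exact varT hmeas hindep hunif hc n

lemma lower_tail (hmeas : ∀ i, Measurable (U i))
    (hindep : iIndepFun U ℙ)
    (hunif : ∀ i, Measure.map (U i) ℙ = volume.restrict (Set.Ioo (0:ℝ) 1))
    {n : ℕ} (hn : 1 ≤ n) {ε : ℝ} (hε : 0 < ε) (hL : 0 < Real.log n) :
    ℙ {ω | (∑ i ∈ Finset.range n, tr n (U i ω)) < (1 - ε) * (n * Real.log n)}
      ≤ ENNReal.ofReal (2 / (ε ^ 2 * Real.log n ^ 2)) := by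
  set L := Real.log n with hLdef
  have hn0 : (0:ℝ) < n := by exact_mod_cast hn
  have hn1 : (1:ℝ) ≤ n := by exact_mod_cast hn
  have ha : (0:ℝ) < ε * (n * L) := by positivity
  have hsub : {ω | (∑ i ∈ Finset.range n, tr n (U i ω)) < (1 - ε) * (n * L)}
      ⊆ {ω | ε * (n * L) ≤ |(∑ i ∈ Finset.range n, tr (n:ℝ) (U i ω)) - n * (1 + Real.log n)|} := by
    intro ω hω
    simp only [Set.mem_setOf_eq] at hω ⊢
    have : ε * (n * L) ≤ n * (1 + L) - ∑ i ∈ Finset.range n, tr (n:ℝ) (U i ω) := by nlinarith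
    calc ε * (n * L) ≤ n * (1 + L) - ∑ i ∈ Finset.range n, tr (n:ℝ) (U i ω) := this
      _ ≤ |(∑ i ∈ Finset.range n, tr (n:ℝ) (U i ω)) - n * (1 + L)| := by
          rw [abs_sub_comm]; exact le_abs_self _
  refine le_trans (measure_mono hsub) (le_trans (cheb hmeas hindep hunif hn1 n ha) ?_)
  refine ENNReal.ofReal_le_ofReal (le_of_eq ?_)
  field_simp

lemma upper_tail (hmeas : ∀ i, Measurable (U i))
    (hindep : iIndepFun U ℙ)
    (hunif : ∀ i, Measure.map (U i) ℙ = volume.restrict (Set.Ioo (0:ℝ) 1))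
    {n : ℕ} (hn : 1 ≤ n) {ε : ℝ} (hε : 0 < ε) (hL : 1 ≤ Real.log n)
    (hcond : 1 + Real.log (Real.log n) ≤ (ε / 2) * Real.log n) :
    ℙ {ω | (1 + ε) * (n * Real.log n) < ∑ i ∈ Finset.range n, tr (n * Real.log n) (U i ω)}
      ≤ ENNReal.ofReal (8 / (ε ^ 2 * Real.log n)) := by
  set L := Real.log n with hLdef
  have hn0 : (0:ℝ) < n := by exact_mod_cast hn
  have hn1 : (1:ℝ) ≤ n := by exact_mod_cast hn
  have hc1 : (1:ℝ) ≤ n * L := le_trans hn1 (le_mul_of_one_le_right hn0.le hL)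
  have hL0 : (0:ℝ) < L := lt_of_lt_of_le zero_lt_one hL
  have ha : (0:ℝ) < (ε / 2) * (n * L) := by positivity
  have hlog : Real.log ((n:ℝ) * L) = L + Real.log L := Real.log_mul hn0.ne' hL0.ne'
  have hsub : {ω | (1 + ε) * (n * L) < ∑ i ∈ Finset.range n, tr (n * L) (U i ω)}
      ⊆ {ω | (ε / 2) * (n * L)
          ≤ |(∑ i ∈ Finset.range n, tr ((n:ℝ) * L) (U i ω)) - n * (1 + Real.log ((n:ℝ) * L))|} := by
    intro ω hω
    simp only [Set.mem_setOf_eq] at hω ⊢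
    rw [hlog]
    have : (ε / 2) * (n * L)
        ≤ (∑ i ∈ Finset.range n, tr ((n:ℝ) * L) (U i ω)) - n * (1 + (L + Real.log L)) := by
      nlinarith
    exact le_trans this (le_abs_self _)
  refine le_trans (measure_mono hsub) (le_trans (cheb hmeas hindep hunif hc1 n ha) ?_)
  refine ENNReal.ofReal_le_ofReal (le_of_eq ?_)
  field_simp
  ring

lemma prob_small (hmeas : ∀ i, Measurable (U i))
    (hunif : ∀ i, Measure.map (U i) ℙ = volume.restrict (Set.Ioo (0:ℝ) 1))
    {c : ℝ} (hc : 1 ≤ c) (i : ℕ) :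
    ℙ {ω | c < (U i ω)⁻¹} = ENNReal.ofReal c⁻¹ := by
  have hc0 : (0:ℝ) < c := lt_of_lt_of_le zero_lt_one hc
  have hset : {x : ℝ | c < x⁻¹} = Set.Ioo 0 c⁻¹ := by
    ext x
    simp only [Set.mem_setOf_eq, Set.mem_Ioo]
    constructor
    · intro h
      have hx0 : 0 < x⁻¹ := lt_trans hc0 h
      have hx : 0 < x := inv_pos.1 hx0
      exact ⟨hx, (lt_inv_comm₀ hc0 hx).1 h⟩
    · rintro ⟨hx0, hx⟩
      exact (lt_inv_comm₀ hx0 hc0).1 hx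
  have : {ω | c < (U i ω)⁻¹} = U i ⁻¹' {x | c < x⁻¹} := rfl
  rw [this, ← Measure.map_apply (hmeas i) (by rw [hset]; exact measurableSet_Ioo), hunif i,
    hset, Measure.restrict_apply measurableSet_Ioo]
  have hint : Set.Ioo (0:ℝ) c⁻¹ ∩ Set.Ioo 0 1 = Set.Ioo 0 c⁻¹ := by
    refine Set.inter_eq_self_of_subset_left (Set.Ioo_subset_Ioo le_rfl (inv_le_one_of_one_le₀ hc))
  rw [hint, Real.volume_Ioo, sub_zero]

lemma Smeas (hmeas : ∀ i, Measurable (U i)) (n : ℕ) :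
    Measurable (fun ω => ∑ i ∈ Finset.range n, (U i ω)⁻¹) :=
  Finset.measurable_sum _ (fun i _ => (hmeas i).inv)

lemma Tmeas (hmeas : ∀ i, Measurable (U i)) (c : ℝ) (n : ℕ) :
    Measurable (fun ω => ∑ i ∈ Finset.range n, tr c (U i ω)) :=
  Finset.measurable_sum _ (fun i _ => (tr_meas c).comp (hmeas i))

lemma int_f (hmeas : ∀ i, Measurable (U i))
    (hG : ℙ (⋂ i, U i ⁻¹' (Set.Ioo (0:ℝ) 1))ᶜ = 0) {n : ℕ} (hn : 1 ≤ n) :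
    Integrable (fun ω => (n:ℝ) / (∑ i ∈ Finset.range n, (U i ω)⁻¹)) ℙ := by
  have hae : ∀ᵐ ω ∂ℙ, ω ∈ ⋂ i, U i ⁻¹' (Set.Ioo (0:ℝ) 1) := by
    exact MeasureTheory.mem_ae_iff.2 hG
  have hfmeas : Measurable (fun ω => (n:ℝ) / (∑ i ∈ Finset.range n, (U i ω)⁻¹)) :=
    measurable_const.div (Smeas hmeas n)
  refine (MemLp.of_bound hfmeas.aestronglyMeasurable 1 ?_).integrable le_rfl
  filter_upwards [hae] with ω hω
  have hS : (n:ℝ) ≤ ∑ i ∈ Finset.range n, (U i ω)⁻¹ := by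
    calc (n:ℝ) = ∑ _i ∈ Finset.range n, (1:ℝ) := by simp
      _ ≤ _ := Finset.sum_le_sum (fun i _ => by
          have hi := Set.mem_iInter.1 hω i
          exact (one_le_inv_iff₀).2 ⟨hi.1, hi.2.le⟩)
  have hn0 : (0:ℝ) < n := by exact_mod_cast hn
  have hS0 : (0:ℝ) < ∑ i ∈ Finset.range n, (U i ω)⁻¹ := lt_of_lt_of_le hn0 hS
  rw [Real.norm_eq_abs, abs_of_nonneg (by positivity)]
  exact div_le_one_of_le₀ hS hS0.le

lemma int_upper (hmeas : ∀ i, Measurable (U i))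
    (hG : ℙ (⋂ i, U i ⁻¹' (Set.Ioo (0:ℝ) 1))ᶜ = 0)
    {n : ℕ} (hn : 1 ≤ n) {ε : ℝ} (hε : 0 < ε) (hε1 : ε < 1) (hL : 0 < Real.log n) :
    ∫ ω, (n:ℝ) / (∑ i ∈ Finset.range n, (U i ω)⁻¹) ∂ℙ
      ≤ 1 / ((1 - ε) * Real.log n)
        + (ℙ {ω | (∑ i ∈ Finset.range n, tr n (U i ω))
            < (1 - ε) * (n * Real.log n)}).toReal := by
  set L := Real.log n with hLdef
  set K := {ω | (∑ i ∈ Finset.range n, tr (n:ℝ) (U i ω)) < (1 - ε) * (n * L)} with hKdef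
  have hKmeas : MeasurableSet K := measurableSet_lt (Tmeas hmeas n n) measurable_const
  have hae : ∀ᵐ ω ∂ℙ, ω ∈ ⋂ i, U i ⁻¹' (Set.Ioo (0:ℝ) 1) := by
    exact MeasureTheory.mem_ae_iff.2 hG
  have hn0 : (0:ℝ) < n := by exact_mod_cast hn
  have hthr : (0:ℝ) < (1 - ε) * (n * L) := by
    have : 0 < 1 - ε := by linarith
    positivity
  have hg_int : Integrable (fun ω => 1 / ((1 - ε) * L) + K.indicator (fun _ => (1:ℝ)) ω) ℙ :=
    (integrable_const _).add ((integrable_const (1:ℝ)).indicator hKmeas)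
  have hmono : (fun ω => (n:ℝ) / (∑ i ∈ Finset.range n, (U i ω)⁻¹))
      ≤ᵐ[ℙ] fun ω => 1 / ((1 - ε) * L) + K.indicator (fun _ => (1:ℝ)) ω := by
    filter_upwards [hae] with ω hω
    have hptw : ∀ i, U i ω ∈ Set.Ioo (0:ℝ) 1 := fun i => Set.mem_iInter.1 hω i
    have hS : (n:ℝ) ≤ ∑ i ∈ Finset.range n, (U i ω)⁻¹ := by
      calc (n:ℝ) = ∑ _i ∈ Finset.range n, (1:ℝ) := by simp
        _ ≤ _ := Finset.sum_le_sum (fun i _ =>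
            (one_le_inv_iff₀).2 ⟨(hptw i).1, (hptw i).2.le⟩)
    have hS0 : (0:ℝ) < ∑ i ∈ Finset.range n, (U i ω)⁻¹ := lt_of_lt_of_le hn0 hS
    have hc0 : (0:ℝ) < 1 / ((1 - ε) * L) := by
      have : 0 < 1 - ε := by linarith
      positivity
    by_cases hcase : (1 - ε) * (n * L) ≤ ∑ i ∈ Finset.range n, (U i ω)⁻¹
    · have h1 : (n:ℝ) / (∑ i ∈ Finset.range n, (U i ω)⁻¹) ≤ n / ((1 - ε) * (n * L)) :=
        div_le_div_of_nonneg_left hn0.le hthr hcase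
      have h2 : (n:ℝ) / ((1 - ε) * (n * L)) = 1 / ((1 - ε) * L) := by
        have hne : (1:ℝ) - ε ≠ 0 := by intro h; rw [sub_eq_zero] at h; exact absurd h.symm hε1.ne
        have hLne : L ≠ 0 := hL.ne'
        have hnne : (n:ℝ) ≠ 0 := hn0.ne'
        field_simp
      calc (n:ℝ) / (∑ i ∈ Finset.range n, (U i ω)⁻¹) ≤ 1 / ((1 - ε) * L) := h2 ▸ h1
        _ ≤ _ := le_add_of_nonneg_right (Set.indicator_nonneg (fun _ _ => zero_le_one) ω)
    · push_neg at hcase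
      have hωK : ω ∈ K := by
        rw [hKdef, Set.mem_setOf_eq]
        refine lt_of_le_of_lt ?_ hcase
        exact Finset.sum_le_sum (fun i _ => tr_le_inv (hptw i).1)
      rw [Set.indicator_of_mem hωK]
      have : (n:ℝ) / (∑ i ∈ Finset.range n, (U i ω)⁻¹) ≤ 1 := div_le_one_of_le₀ hS hS0.le
      linarith
  calc ∫ ω, (n:ℝ) / (∑ i ∈ Finset.range n, (U i ω)⁻¹) ∂ℙ
      ≤ ∫ ω, (1 / ((1 - ε) * L) + K.indicator (fun _ => (1:ℝ)) ω) ∂ℙ :=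
        integral_mono_ae (int_f hmeas hG hn) hg_int hmono
    _ = 1 / ((1 - ε) * L) + (ℙ K).toReal := by
        rw [integral_add (integrable_const _) ((integrable_const (1:ℝ)).indicator hKmeas)]
        rw [MeasureTheory.integral_indicator_const (1:ℝ) hKmeas]
        simp [Measure.real]

lemma int_lower (hmeas : ∀ i, Measurable (U i))
    (hG : ℙ (⋂ i, U i ⁻¹' (Set.Ioo (0:ℝ) 1))ᶜ = 0)
    {n : ℕ} (hn : 1 ≤ n) {ε : ℝ} (hε : 0 < ε) (hL : 1 ≤ Real.log n) :
    (1 / ((1 + ε) * Real.log n))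
      * (ℙ ((⋂ i, U i ⁻¹' (Set.Ioo (0:ℝ) 1))
          ∩ {ω | (∑ i ∈ Finset.range n, tr ((n:ℝ) * Real.log n) (U i ω))
              ≤ (1 + ε) * (n * Real.log n)}
          ∩ ⋂ i ∈ Finset.range n, {ω | (U i ω)⁻¹ ≤ (n:ℝ) * Real.log n})).toReal
      ≤ ∫ ω, (n:ℝ) / (∑ i ∈ Finset.range n, (U i ω)⁻¹) ∂ℙ := by
  set L := Real.log n with hLdef
  have hL0 : (0:ℝ) < L := lt_of_lt_of_le zero_lt_one hL
  have hn0 : (0:ℝ) < n := by exact_mod_cast hn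
  set G : Set Ω := ⋂ i, U i ⁻¹' (Set.Ioo (0:ℝ) 1) with hGdef
  have hGmeas : MeasurableSet G :=
    MeasurableSet.iInter (fun i => (hmeas i) measurableSet_Ioo)
  set B : Set Ω := G ∩ {ω | (∑ i ∈ Finset.range n, tr ((n:ℝ) * L) (U i ω))
      ≤ (1 + ε) * (n * L)} ∩ ⋂ i ∈ Finset.range n, {ω | (U i ω)⁻¹ ≤ (n:ℝ) * L} with hBdef
  have hBmeas : MeasurableSet B := by
    refine (hGmeas.inter (measurableSet_le (Tmeas hmeas _ n) measurable_const)).inter ?_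
    exact MeasurableSet.biInter (Finset.range n).countable_toSet
      (fun i _ => measurableSet_le ((hmeas i).inv) measurable_const)
  have hae : ∀ᵐ ω ∂ℙ, ω ∈ G := MeasureTheory.mem_ae_iff.2 hG
  set c₂ : ℝ := 1 / ((1 + ε) * L) with hc₂def
  have hc₂0 : 0 < c₂ := by positivity
  have hmono : (fun ω => B.indicator (fun _ => c₂) ω)
      ≤ᵐ[ℙ] fun ω => (n:ℝ) / (∑ i ∈ Finset.range n, (U i ω)⁻¹) := by
    filter_upwards [hae] with ω hω
    have hptw : ∀ i, U i ω ∈ Set.Ioo (0:ℝ) 1 := fun i => Set.mem_iInter.1 hω i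
    have hS : (n:ℝ) ≤ ∑ i ∈ Finset.range n, (U i ω)⁻¹ := by
      calc (n:ℝ) = ∑ _i ∈ Finset.range n, (1:ℝ) := by simp
        _ ≤ _ := Finset.sum_le_sum (fun i _ =>
            (one_le_inv_iff₀).2 ⟨(hptw i).1, (hptw i).2.le⟩)
    have hS0 : (0:ℝ) < ∑ i ∈ Finset.range n, (U i ω)⁻¹ := lt_of_lt_of_le hn0 hS
    by_cases hωB : ω ∈ B
    · rw [Set.indicator_of_mem hωB]
      obtain ⟨⟨-, hT⟩, hD⟩ := hωB
      have hDi : ∀ i ∈ Finset.range n, (U i ω)⁻¹ ≤ (n:ℝ) * L := by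
        intro i hi
        have := Set.mem_iInter₂.1 hD i hi
        exact this
      have hSeq : ∑ i ∈ Finset.range n, (U i ω)⁻¹
          = ∑ i ∈ Finset.range n, tr ((n:ℝ) * L) (U i ω) := by
        refine Finset.sum_congr rfl (fun i hi => ?_)
        have h1 : (1:ℝ) ≤ (U i ω)⁻¹ := (one_le_inv_iff₀).2 ⟨(hptw i).1, (hptw i).2.le⟩
        rw [tr, min_eq_left (hDi i hi), max_eq_left (le_trans zero_le_one h1)]
      have hSle : ∑ i ∈ Finset.range n, (U i ω)⁻¹ ≤ (1 + ε) * (n * L) := by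
        rw [hSeq]; exact hT
      have : c₂ = (n:ℝ) / ((1 + ε) * (n * L)) := by
        rw [hc₂def]
        have h1 : (1:ℝ) + ε ≠ 0 := by positivity
        field_simp
      rw [this]
      exact div_le_div_of_nonneg_left hn0.le hS0 hSle
    · rw [Set.indicator_of_notMem hωB]
      positivity
  have hind_int : Integrable (fun ω => B.indicator (fun _ => c₂) ω) ℙ :=
    (integrable_const c₂).indicator hBmeas
  calc c₂ * (ℙ B).toReal = ∫ ω, B.indicator (fun _ => c₂) ω ∂ℙ := by
        rw [MeasureTheory.integral_indicator_const c₂ hBmeas]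
        simp [mul_comm, Measure.real]
    _ ≤ _ := integral_mono_ae hind_int (int_f hmeas hG hn) hmono

lemma PB (hmeas : ∀ i, Measurable (U i))
    (hindep : iIndepFun U ℙ)
    (hunif : ∀ i, Measure.map (U i) ℙ = volume.restrict (Set.Ioo (0:ℝ) 1))
    (hG : ℙ (⋂ i, U i ⁻¹' (Set.Ioo (0:ℝ) 1))ᶜ = 0)
    {n : ℕ} (hn : 1 ≤ n) {ε : ℝ} (hε : 0 < ε) (hL : 1 ≤ Real.log n)
    (hcond : 1 + Real.log (Real.log n) ≤ (ε / 2) * Real.log n) :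
    1 - (8 / (ε ^ 2 * Real.log n) + 1 / Real.log n)
      ≤ (ℙ ((⋂ i, U i ⁻¹' (Set.Ioo (0:ℝ) 1))
          ∩ {ω | (∑ i ∈ Finset.range n, tr ((n:ℝ) * Real.log n) (U i ω))
              ≤ (1 + ε) * (n * Real.log n)}
          ∩ ⋂ i ∈ Finset.range n, {ω | (U i ω)⁻¹ ≤ (n:ℝ) * Real.log n})).toReal := by
  set L := Real.log n with hLdef
  have hL0 : (0:ℝ) < L := lt_of_lt_of_le zero_lt_one hL
  have hn0 : (0:ℝ) < n := by exact_mod_cast hn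
  have hn1 : (1:ℝ) ≤ n := by exact_mod_cast hn
  have hc1 : (1:ℝ) ≤ (n:ℝ) * L := le_trans hn1 (le_mul_of_one_le_right hn0.le hL)
  set G : Set Ω := ⋂ i, U i ⁻¹' (Set.Ioo (0:ℝ) 1) with hGdef
  set A : Set Ω := {ω | (∑ i ∈ Finset.range n, tr ((n:ℝ) * L) (U i ω))
      ≤ (1 + ε) * (n * L)} with hAdef
  set C : Set Ω := ⋂ i ∈ Finset.range n, {ω | (U i ω)⁻¹ ≤ (n:ℝ) * L} with hCdef
  set B : Set Ω := G ∩ A ∩ C with hBdef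
  set q : ℝ := 8 / (ε ^ 2 * L) + 1 / L with hqdef
  have hq0 : 0 ≤ q := by positivity
  -- bound the complement
  have hcompl : ℙ Bᶜ ≤ ENNReal.ofReal q := by
    have hBc : Bᶜ = (Gᶜ ∪ Aᶜ) ∪ Cᶜ := by
      rw [hBdef, Set.compl_inter, Set.compl_inter]
    have h1 : ℙ Bᶜ ≤ ℙ Gᶜ + ℙ Aᶜ + ℙ Cᶜ := by
      rw [hBc]
      exact le_trans (measure_union_le _ _) (add_le_add (measure_union_le _ _) le_rfl)
    have hAc : ℙ Aᶜ ≤ ENNReal.ofReal (8 / (ε ^ 2 * L)) := by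
      have : Aᶜ = {ω | (1 + ε) * (n * L) < ∑ i ∈ Finset.range n, tr ((n:ℝ) * L) (U i ω)} := by
        ext ω; simp [hAdef, not_le]
      rw [this]
      exact upper_tail hmeas hindep hunif hn hε hL hcond
    have hCc : ℙ Cᶜ ≤ ENNReal.ofReal (1 / L) := by
      have : Cᶜ = ⋃ i ∈ Finset.range n, {ω | (n:ℝ) * L < (U i ω)⁻¹} := by
        rw [hCdef]
        simp only [Set.compl_iInter]
        refine Set.iUnion_congr (fun i => Set.iUnion_congr (fun hi => ?_))
        ext ω
        simp [not_le]
      rw [this]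
      refine le_trans (measure_biUnion_finset_le _ _) ?_
      have heach : ∀ i ∈ Finset.range n, ℙ {ω | (n:ℝ) * L < (U i ω)⁻¹}
          = ENNReal.ofReal (((n:ℝ) * L)⁻¹) := fun i _ => prob_small hmeas hunif hc1 i
      rw [Finset.sum_congr rfl heach]
      rw [Finset.sum_const, Finset.card_range, nsmul_eq_mul]
      rw [← ENNReal.ofReal_natCast n, ← ENNReal.ofReal_mul (by positivity)]
      refine ENNReal.ofReal_le_ofReal (le_of_eq ?_)
      rw [mul_inv, ← mul_assoc, mul_inv_cancel₀ hn0.ne', one_mul, one_div]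
    calc ℙ Bᶜ ≤ ℙ Gᶜ + ℙ Aᶜ + ℙ Cᶜ := h1
      _ ≤ 0 + ENNReal.ofReal (8 / (ε ^ 2 * L)) + ENNReal.ofReal (1 / L) := by
          rw [hG]; exact add_le_add (add_le_add le_rfl hAc) hCc
      _ = ENNReal.ofReal q := by
          rw [zero_add, ← ENNReal.ofReal_add (by positivity) (by positivity)]
  have hBmeas : MeasurableSet B := by
    refine ((MeasurableSet.iInter (fun i => (hmeas i) measurableSet_Ioo)).inter
      (measurableSet_le (Tmeas hmeas _ n) measurable_const)).inter ?_
    exact MeasurableSet.biInter (Finset.range n).countable_toSet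
      (fun i _ => measurableSet_le ((hmeas i).inv) measurable_const)
  have hsum : (ℙ B).toReal + (ℙ Bᶜ).toReal = 1 := by
    rw [← ENNReal.toReal_add (measure_ne_top _ _) (measure_ne_top _ _),
      measure_add_measure_compl hBmeas]
    simp
  have hcr : (ℙ Bᶜ).toReal ≤ q := by
    have := ENNReal.toReal_mono ENNReal.ofReal_ne_top hcompl
    rwa [ENNReal.toReal_ofReal hq0] at this
  linarith

lemma Gnull (hmeas : ∀ i, Measurable (U i))
    (hunif : ∀ i, Measure.map (U i) ℙ = volume.restrict (Set.Ioo (0:ℝ) 1)) :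
    ℙ (⋂ i, U i ⁻¹' (Set.Ioo (0:ℝ) 1))ᶜ = 0 := by
  rw [Set.compl_iInter]
  refine measure_iUnion_null (fun i => ?_)
  have : (U i ⁻¹' (Set.Ioo (0:ℝ) 1))ᶜ = U i ⁻¹' (Set.Ioo (0:ℝ) 1)ᶜ := rfl
  rw [this, ← Measure.map_apply (hmeas i) measurableSet_Ioo.compl, hunif i,
    Measure.restrict_apply measurableSet_Ioo.compl]
  simp

end main

set_option maxHeartbeats 1000000 in
/-- Let `U 0, U 1, …` be i.i.d. random variables uniformly distributed on
`(0,1)`. Then `(ln n) · E[n / (1/U_1 + ⋯ + 1/U_n)] → 1` as `n → ∞`. -/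
theorem stmt8 {Ω : Type*} [MeasureSpace Ω] [IsProbabilityMeasure (ℙ : Measure Ω)]
    (U : ℕ → Ω → ℝ) (hmeas : ∀ i, Measurable (U i))
    (hindep : iIndepFun U ℙ)
    (hunif : ∀ i, Measure.map (U i) ℙ = volume.restrict (Ioo (0:ℝ) 1)) :
    Tendsto (fun n : ℕ =>
      Real.log n * ∫ ω, (n : ℝ) / (∑ i ∈ Finset.range n, (U i ω)⁻¹) ∂ℙ) atTop (𝓝 1) := by
  have hGnull : ℙ (⋂ i, U i ⁻¹' (Set.Ioo (0:ℝ) 1))ᶜ = 0 := Gnull hmeas hunif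
  rw [Metric.tendsto_atTop]
  intro δ hδ
  set ε : ℝ := min (δ / 4) (1 / 4) with hεdef
  have hε0 : 0 < ε := lt_min (by linarith) (by norm_num)
  have hε14 : ε ≤ 1 / 4 := min_le_right _ _
  have hεδ : ε ≤ δ / 4 := min_le_left _ _
  set M : ℝ := max (max 1 (2 / ε ^ 3)) (max ((8 / ε ^ 2 + 1) / ε) (16 / ε ^ 2)) with hMdef
  have hLtend : Tendsto (fun n : ℕ => Real.log n) atTop atTop :=
    Real.tendsto_log_atTop.comp tendsto_natCast_atTop_atTop
  have hev : ∀ᶠ n : ℕ in atTop, M ≤ Real.log n ∧ 1 ≤ n :=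
    (hLtend.eventually_ge_atTop M).and (eventually_ge_atTop 1)
  rw [eventually_atTop] at hev
  obtain ⟨N, hN⟩ := hev
  refine ⟨N, fun n hn => ?_⟩
  obtain ⟨hM, hn1⟩ := hN n hn
  set L := Real.log n with hLdef
  have hL1 : 1 ≤ L := le_trans (le_trans (le_max_left _ _) (le_max_left _ _)) hM
  have hL0 : (0:ℝ) < L := lt_of_lt_of_le zero_lt_one hL1
  have hLa : 2 / ε ^ 3 ≤ L := le_trans (le_trans (le_max_right _ _) (le_max_left _ _)) hM
  have hLb : (8 / ε ^ 2 + 1) / ε ≤ L :=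
    le_trans (le_trans (le_max_left _ _) (le_max_right _ _)) hM
  have hLc : 16 / ε ^ 2 ≤ L := le_trans (le_trans (le_max_right _ _) (le_max_right _ _)) hM
  -- condition (d): 1 + log L ≤ (ε/2) L
  have hcond : 1 + Real.log L ≤ (ε / 2) * L := by
    have hsL : Real.log L = 2 * Real.log (Real.sqrt L) := by
      rw [Real.log_sqrt hL0.le]; ring
    have h1 : Real.log (Real.sqrt L) ≤ Real.sqrt L - 1 :=
      Real.log_le_sub_one_of_pos (Real.sqrt_pos.2 hL0)
    have hs4 : 4 / ε ≤ Real.sqrt L := by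
      rw [show (4:ℝ) / ε = Real.sqrt ((4 / ε) ^ 2) from
        (Real.sqrt_sq (by positivity)).symm]
      exact Real.sqrt_le_sqrt (by rw [div_pow]; norm_num; linarith [hLc])
    have hsq : Real.sqrt L * Real.sqrt L = L := Real.mul_self_sqrt hL0.le
    have h2 : 2 ≤ ε / 2 * Real.sqrt L := by
      have h := mul_le_mul_of_nonneg_left hs4 (by positivity : (0:ℝ) ≤ ε / 2)
      rwa [show ε / 2 * (4 / ε) = 2 by field_simp; ring] at h
    have h3 : 2 * Real.sqrt L ≤ ε / 2 * L := by
      calc 2 * Real.sqrt L ≤ (ε / 2 * Real.sqrt L) * Real.sqrt L := by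
            nlinarith [Real.sqrt_nonneg L]
        _ = ε / 2 * L := by rw [mul_assoc, hsq]
    linarith
  have hε1 : ε < 1 := lt_of_le_of_lt hε14 (by norm_num)
  -- upper bound
  have hKbound : (ℙ {ω | (∑ i ∈ Finset.range n, tr (n:ℝ) (U i ω))
      < (1 - ε) * (n * L)}).toReal ≤ 2 / (ε ^ 2 * L ^ 2) := by
    have h := lower_tail hmeas hindep hunif hn1 hε0 hL0
    have := ENNReal.toReal_mono ENNReal.ofReal_ne_top h
    rwa [ENNReal.toReal_ofReal (by positivity)] at this
  have hup : ∫ ω, (n:ℝ) / (∑ i ∈ Finset.range n, (U i ω)⁻¹) ∂ℙ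
      ≤ 1 / ((1 - ε) * L) + 2 / (ε ^ 2 * L ^ 2) :=
    le_trans (int_upper hmeas hGnull hn1 hε0 hε1 hL0) (by linarith)
  have hlow0 : 1 - (8 / (ε ^ 2 * L) + 1 / L) ≤ (ℙ ((⋂ i, U i ⁻¹' (Set.Ioo (0:ℝ) 1))
      ∩ {ω | (∑ i ∈ Finset.range n, tr ((n:ℝ) * L) (U i ω)) ≤ (1 + ε) * (n * L)}
      ∩ ⋂ i ∈ Finset.range n, {ω | (U i ω)⁻¹ ≤ (n:ℝ) * L})).toReal :=
    PB hmeas hindep hunif hGnull hn1 hε0 hL1 hcond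
  have hlow1 : (1 / ((1 + ε) * L))
      * (ℙ ((⋂ i, U i ⁻¹' (Set.Ioo (0:ℝ) 1))
      ∩ {ω | (∑ i ∈ Finset.range n, tr ((n:ℝ) * L) (U i ω)) ≤ (1 + ε) * (n * L)}
      ∩ ⋂ i ∈ Finset.range n, {ω | (U i ω)⁻¹ ≤ (n:ℝ) * L})).toReal
      ≤ ∫ ω, (n:ℝ) / (∑ i ∈ Finset.range n, (U i ω)⁻¹) ∂ℙ :=
    int_lower hmeas hGnull hn1 hε0 hL1
  -- numeric estimates
  have hεL : 8 / ε ^ 2 + 1 ≤ ε * L := by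
    have h := mul_le_mul_of_nonneg_left hLb hε0.le
    rwa [mul_div_cancel₀ _ hε0.ne'] at h
  have hq : 8 / (ε ^ 2 * L) + 1 / L ≤ ε := by
    rw [div_add_div _ _ (by positivity) (by positivity), div_le_iff₀ (by positivity)]
    have h8 : 8 / ε ^ 2 * ε ^ 2 = 8 := div_mul_cancel₀ _ (by positivity)
    nlinarith [mul_le_mul_of_nonneg_right hεL (by positivity : (0:ℝ) ≤ ε ^ 2 * L), h8]
  set P := (ℙ ((⋂ i, U i ⁻¹' (Set.Ioo (0:ℝ) 1))
      ∩ {ω | (∑ i ∈ Finset.range n, tr ((n:ℝ) * L) (U i ω)) ≤ (1 + ε) * (n * L)}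
      ∩ ⋂ i ∈ Finset.range n, {ω | (U i ω)⁻¹ ≤ (n:ℝ) * L})).toReal with hPdef
  have hPle : 1 - ε ≤ P := le_trans (by linarith) hlow0
  have hP1 : P ≤ 1 := by
    rw [hPdef]
    exact ENNReal.toReal_le_of_le_ofReal zero_le_one (by simpa using prob_le_one)
  set I := ∫ ω, (n:ℝ) / (∑ i ∈ Finset.range n, (U i ω)⁻¹) ∂ℙ with hIdef
  clear_value P I
  clear hlow0 hKbound hεL hq hM
  have hne1 : (1:ℝ) - ε ≠ 0 := by intro h; rw [sub_eq_zero] at h; exact absurd h.symm hε1.ne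
  have hne2 : (1:ℝ) + ε ≠ 0 := by positivity
  -- ε³ L ≥ 2
  have h2e : 2 ≤ ε ^ 3 * L := by
    have h := mul_le_mul_of_nonneg_left hLa (by positivity : (0:ℝ) ≤ ε ^ 3)
    rwa [show ε ^ 3 * (2 / ε ^ 3) = 2 by field_simp] at h
  have hL2 : 2 / (ε ^ 2 * L) ≤ ε := by
    rw [div_le_iff₀ (by positivity)]
    calc (2:ℝ) ≤ ε ^ 3 * L := h2e
      _ = ε * (ε ^ 2 * L) := by ring
  have hL2' : 2 / (ε ^ 2 * L ^ 2) ≤ ε := by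
    refine le_trans (div_le_div_of_nonneg_left (by norm_num) (by positivity) (by nlinarith)) hL2
  -- upper estimate
  have hupL : L * I ≤ 1 / (1 - ε) + L * (2 / (ε ^ 2 * L ^ 2)) := by
    have h := mul_le_mul_of_nonneg_left hup hL0.le
    have heq : L * (1 / ((1 - ε) * L) + 2 / (ε ^ 2 * L ^ 2))
        = 1 / (1 - ε) + L * (2 / (ε ^ 2 * L ^ 2)) := by
      field_simp
    rw [heq] at h
    linarith
  have hup2 : L * (2 / (ε ^ 2 * L ^ 2)) ≤ ε := by
    have heq : L * (2 / (ε ^ 2 * L ^ 2)) = 2 / (ε ^ 2 * L) := by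
      field_simp
    rw [heq]; exact hL2
  have h1e : 1 / (1 - ε) ≤ 1 + 2 * ε := by
    rw [div_le_iff₀ (by linarith)]
    nlinarith
  have hupfin : L * I ≤ 1 + 3 * ε := by linarith
  -- lower estimate
  have hlowL : (1 / (1 + ε)) * P ≤ L * I := by
    have h := mul_le_mul_of_nonneg_left hlow1 hL0.le
    have heq : L * (1 / ((1 + ε) * L) * P) = (1 / (1 + ε)) * P := by
      field_simp
    rw [heq] at h
    linarith
  have hlowfin : 1 - 2 * ε ≤ L * I := by
    refine le_trans ?_ hlowL
    have h1 : (1 - 2 * ε) * (1 + ε) ≤ 1 - ε := by nlinarith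
    have h2 : (1 - 2 * ε) ≤ (1 / (1 + ε)) * (1 - ε) := by
      rw [div_mul_eq_mul_div, le_div_iff₀ (by positivity)]
      linarith
    refine le_trans h2 ?_
    have : (0:ℝ) ≤ 1 / (1 + ε) := by positivity
    exact mul_le_mul_of_nonneg_left hPle this
  rw [Real.dist_eq]
  rw [abs_lt]
  constructor
  · linarith
  · linarith
end

section
/- Suppose the Δ_k have the discrete Pareto distribution P(Δ_1 = k) = k^{−2}/ζ(2) for k = 1, 2, 3, … (the case α = 1). Then the autocovariance function of the sampled process satisfies σ_Y(h) ∼ C̃_d (6/π²)^{2d−1} h^{2d−1} (log h)^{2d−1} as h → ∞. -/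
open MeasureTheory ProbabilityTheory Filter Set Topology Asymptotics
open scoped ENNReal ProbabilityTheory

namespace Stmt10Aux

/-- telescoping sum -/
lemma telescope_hasSum {m : ℕ} (hm : 1 ≤ m) :
    HasSum (fun k : ℕ => 1 / (((m : ℝ) + k) * ((m : ℝ) + k + 1))) (1 / (m : ℝ)) := by
  have hm' : (0:ℝ) < m := by exact_mod_cast hm
  rw [hasSum_iff_tendsto_nat_of_nonneg]
  · have key : ∀ n : ℕ, ∑ k ∈ Finset.range n, 1 / (((m : ℝ) + k) * ((m : ℝ) + k + 1))
        = 1 / (m : ℝ) - 1 / ((m : ℝ) + n) := by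
      intro n
      have h := Finset.sum_range_sub' (f := fun k : ℕ => 1 / ((m : ℝ) + k)) n
      push_cast at h
      rw [show (1:ℝ)/(m:ℝ) = 1/((m:ℝ)+0) by norm_num, ← h]
      apply Finset.sum_congr rfl
      intro k _
      have h1 : (0:ℝ) < (m : ℝ) + k := by positivity
      rw [div_sub_div _ _ h1.ne' (by linarith : (m:ℝ)+((k:ℝ)+1) ≠ 0),
        show (m:ℝ)+((k:ℝ)+1) = (m:ℝ)+k+1 by ring]
      congr 1
      ring
    simp_rw [key]
    have h2 : Tendsto (fun n : ℕ => 1 / ((m : ℝ) + n)) atTop (𝓝 0) := by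
      have ht : Tendsto (fun n : ℕ => (m : ℝ) + n) atTop atTop :=
        tendsto_atTop_add_const_left atTop (m:ℝ) tendsto_natCast_atTop_atTop
      rw [show (fun n : ℕ => 1 / ((m : ℝ) + n)) = (fun n : ℕ => (m:ℝ) + n)⁻¹ by funext n; simp [one_div]]
      exact ht.inv_tendsto_atTop
    simpa using tendsto_const_nhds.sub h2
  · intro k
    have h1 : (0:ℝ) < (m : ℝ) + k := by positivity
    have h2 : (0:ℝ) < (m : ℝ) + k + 1 := by linarith
    positivity

lemma sum_harmonic_ge (M : ℕ) :
    Real.log ((M : ℝ) + 1) ≤ ∑ j ∈ Finset.range M, 1 / ((j : ℝ) + 1) := by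
  have key := Finset.sum_range_sub (f := fun j : ℕ => Real.log ((j : ℝ) + 1)) M
  push_cast at key
  simp only [Real.log_one, sub_zero, add_zero, zero_add] at key
  have hterm : ∀ j ∈ Finset.range M,
      Real.log ((j:ℝ) + 1 + 1) - Real.log ((j:ℝ) + 1) ≤ 1 / ((j : ℝ) + 1) := by
    intro j _
    have h1 : (0:ℝ) < (j:ℝ) + 1 := by positivity
    rw [← Real.log_div (by linarith) (by linarith)]
    calc Real.log (((j:ℝ) + 1 + 1) / ((j:ℝ) + 1))
        ≤ ((j:ℝ) + 1 + 1) / ((j:ℝ) + 1) - 1 := Real.log_le_sub_one_of_pos (by positivity)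
      _ = 1 / ((j:ℝ) + 1) := by field_simp; ring
  calc Real.log ((M:ℝ) + 1)
      = ∑ j ∈ Finset.range M, (Real.log ((j:ℝ) + 1 + 1) - Real.log ((j:ℝ) + 1)) := by
        rw [key]
    _ ≤ _ := Finset.sum_le_sum hterm

lemma sum_harmonic_le (M : ℕ) (hM : 1 ≤ M) :
    ∑ j ∈ Finset.range M, 1 / ((j : ℝ) + 1) ≤ 1 + Real.log M := by
  obtain ⟨n, rfl⟩ : ∃ n, M = n + 1 := ⟨M - 1, (Nat.succ_pred_eq_of_pos hM).symm⟩
  rw [Finset.sum_range_succ']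
  have key := Finset.sum_range_sub (f := fun j : ℕ => Real.log ((j : ℝ) + 1)) n
  push_cast at key
  simp only [Real.log_one, sub_zero, add_zero, zero_add] at key
  have hterm : ∀ j ∈ Finset.range n,
      1 / ((j : ℝ) + 1 + 1) ≤ Real.log ((j:ℝ) + 1 + 1) - Real.log ((j:ℝ) + 1) := by
    intro j _
    have h1 : (0:ℝ) < (j:ℝ) + 1 := by positivity
    rw [← Real.log_div (by linarith) (by linarith)]
    have hx : (0:ℝ) < ((j:ℝ) + 1) / ((j:ℝ) + 1 + 1) := by positivity
    have h2 := Real.log_le_sub_one_of_pos hx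
    have hlog : Real.log (((j:ℝ)+1) / ((j:ℝ)+1+1)) = - Real.log (((j:ℝ)+1+1)/((j:ℝ)+1)) := by
      rw [← Real.log_inv]; congr 1; rw [inv_div]
    rw [hlog] at h2
    have h3 : ((j:ℝ)+1) / ((j:ℝ)+1+1) - 1 = -(1/((j:ℝ)+1+1)) := by field_simp; ring
    linarith
  have hsum : ∑ j ∈ Finset.range n, 1 / ((j:ℝ) + 1 + 1) ≤ Real.log ((n:ℝ) + 1) := by
    calc ∑ j ∈ Finset.range n, 1 / ((j:ℝ) + 1 + 1)
        ≤ ∑ j ∈ Finset.range n, (Real.log ((j:ℝ) + 1 + 1) - Real.log ((j:ℝ) + 1)) :=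
          Finset.sum_le_sum hterm
      _ = Real.log ((n:ℝ) + 1) := by rw [key]
  push_cast
  have : ∑ j ∈ Finset.range n, 1 / ((j:ℝ) + 1 + 1) ≤ Real.log ((n:ℝ) + 1) := hsum
  simp only [Nat.cast_zero, zero_add]
  linarith

end Stmt10Aux

namespace Stmt10Aux

lemma pi_sq_facts : (1:ℝ) ≤ Real.pi^2/6 ∧ Real.pi^2/6 ≤ 2 := by
  have h1 := Real.pi_gt_three
  have h2 := Real.pi_lt_d2
  constructor
  · nlinarith
  · nlinarith

/-- Bounds for the tails of the series `∑ 1/(L k²)`. -/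
lemma core_bounds (L : ℝ) (hL : 0 < L) (m : ℕ) (hm : 1 ≤ m) :
    Summable (fun k : ℕ => 1/(L*((m:ℝ)+k)^2)) ∧
    1/(L*(m:ℝ)) ≤ ∑' k : ℕ, 1/(L*((m:ℝ)+k)^2) ∧
    (∀ j : ℕ, 1 ≤ j → m = j + 1 → ∑' k : ℕ, 1/(L*((m:ℝ)+k)^2) ≤ 1/(L*(j:ℝ))) := by
  have hm' : (1:ℝ) ≤ (m:ℝ) := by exact_mod_cast hm
  have hmk : ∀ k : ℕ, (1:ℝ) ≤ (m:ℝ)+k := by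
    intro k; have : (0:ℝ) ≤ k := Nat.cast_nonneg k; linarith
  -- telescoping with base m
  have htel : HasSum (fun k : ℕ => 1/(L*(((m:ℝ)+k) * ((m:ℝ)+k+1)))) (1/(L*(m:ℝ))) := by
    have h0 := (telescope_hasSum hm).div_const L
    have hfe : (fun k : ℕ => 1/(((m:ℝ)+k)*((m:ℝ)+k+1)) / L)
        = (fun k : ℕ => 1/(L*(((m:ℝ)+k)*((m:ℝ)+k+1)))) := by
      funext k; rw [div_div, mul_comm]
    have hve : 1/(m:ℝ)/L = 1/(L*(m:ℝ)) := by rw [div_div, mul_comm]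
    rwa [hfe, hve] at h0
  have hsummable : Summable (fun k : ℕ => 1/(L*((m:ℝ)+k)^2)) := by
    apply Summable.of_nonneg_of_le (f := fun k : ℕ => 2 * (1/(L*(((m:ℝ)+k) * ((m:ℝ)+k+1)))))
    · intro k
      have := hmk k
      positivity
    · intro k
      have hk := hmk k
      have ha : (0:ℝ) < (m:ℝ)+k := by linarith
      have key := mul_le_mul_of_nonneg_left
        (show (m:ℝ)+k+1 ≤ 2*((m:ℝ)+k) by linarith) (mul_pos hL ha).le
      rw [mul_one_div, div_le_div_iff₀ (mul_pos hL (pow_pos ha 2))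
        (mul_pos hL (mul_pos ha (by linarith)))]
      nlinarith [key]
    · exact htel.summable.mul_left 2
  refine ⟨hsummable, ?_, ?_⟩
  · have hge : ∀ k : ℕ, 1/(L*(((m:ℝ)+k) * ((m:ℝ)+k+1))) ≤ 1/(L*((m:ℝ)+k)^2) := by
      intro k
      have hk := hmk k
      have ha : (0:ℝ) < (m:ℝ)+k := by linarith
      apply one_div_le_one_div_of_le
      · exact mul_pos hL (pow_pos ha 2)
      · exact mul_le_mul_of_nonneg_left (by nlinarith) hL.le
    rw [← htel.tsum_eq]
    exact htel.summable.tsum_le_tsum hge hsummable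
  · intro j hj hmj
    have hj' : (1:ℝ) ≤ (j:ℝ) := by exact_mod_cast hj
    have hcast : (m:ℝ) = (j:ℝ) + 1 := by rw [hmj]; push_cast; ring
    have htel2 : HasSum (fun k : ℕ => 1/(L*(((j:ℝ)+k) * ((j:ℝ)+k+1)))) (1/(L*(j:ℝ))) := by
      have h0 := (telescope_hasSum hj).div_const L
      have hfe : (fun k : ℕ => 1/(((j:ℝ)+k)*((j:ℝ)+k+1)) / L)
          = (fun k : ℕ => 1/(L*(((j:ℝ)+k)*((j:ℝ)+k+1)))) := by
        funext k; rw [div_div, mul_comm]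
      have hve : 1/(j:ℝ)/L = 1/(L*(j:ℝ)) := by rw [div_div, mul_comm]
      rwa [hfe, hve] at h0
    have hle : ∀ k : ℕ, 1/(L*((m:ℝ)+k)^2) ≤ 1/(L*(((j:ℝ)+k) * ((j:ℝ)+k+1))) := by
      intro k
      have hk0 : (0:ℝ) ≤ k := Nat.cast_nonneg k
      rw [hcast]
      have hjk : (0:ℝ) < (j:ℝ)+k := by linarith
      apply one_div_le_one_div_of_le
      · exact mul_pos hL (mul_pos hjk (by linarith))
      · exact mul_le_mul_of_nonneg_left (by nlinarith) hL.le
    rw [← htel2.tsum_eq]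
    exact hsummable.tsum_le_tsum hle htel2.summable

variable {Ω : Type*} [MeasureSpace Ω] [IsProbabilityMeasure (ℙ : Measure Ω)]

lemma tail_eq_tsum {D : Ω → ℕ} (hD : Measurable D) (j : ℕ) :
    (ℙ {ω | j < D ω}).toReal = ∑' k : ℕ, (ℙ {ω | D ω = j + 1 + k}).toReal := by
  have hset : {ω | j < D ω} = ⋃ k : ℕ, {ω | D ω = j + 1 + k} := by
    ext ω
    simp only [mem_setOf_eq, mem_iUnion]
    constructor
    · intro hlt; exact ⟨D ω - (j+1), by omega⟩
    · rintro ⟨k, hk⟩; omega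
  have hmeas : ∀ k : ℕ, MeasurableSet {ω | D ω = j + 1 + k} := by
    intro k
    exact hD (measurableSet_singleton (j+1+k))
  have hdisj : Pairwise (Function.onFun Disjoint (fun k : ℕ => {ω | D ω = j + 1 + k})) := by
    intro a b hab
    simp only [Function.onFun, Set.disjoint_left, mem_setOf_eq]
    intro ω ha hb
    omega
  rw [hset, measure_iUnion hdisj hmeas,
    ENNReal.tsum_toReal_eq (fun k => measure_ne_top _ _)]

lemma pval {D : Ω → ℕ}
    (hpareto : ∀ k : ℕ, 1 ≤ k →
      (ℙ {ω | D ω = k}).toReal = (k : ℝ) ^ (-(2:ℝ)) / (Real.pi ^ 2 / 6))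
    (m : ℕ) (hm : 1 ≤ m) :
    (ℙ {ω | D ω = m}).toReal = 1 / ((Real.pi^2/6) * (m:ℝ)^2) := by
  rw [hpareto m hm]
  have hm' : (0:ℝ) < m := by exact_mod_cast hm
  rw [show (-(2:ℝ)) = -((2:ℕ):ℝ) by norm_num, Real.rpow_neg hm'.le, Real.rpow_natCast]
  have hpi : (0:ℝ) < Real.pi^2/6 := by positivity
  field_simp

lemma tail_as_tsum {D : Ω → ℕ} (hD : Measurable D)
    (hpareto : ∀ k : ℕ, 1 ≤ k →
      (ℙ {ω | D ω = k}).toReal = (k : ℝ) ^ (-(2:ℝ)) / (Real.pi ^ 2 / 6))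
    (j : ℕ) :
    (ℙ {ω | j < D ω}).toReal
      = ∑' k : ℕ, 1 / ((Real.pi^2/6) * ((((j+1:ℕ)):ℝ)+k)^2) := by
  rw [tail_eq_tsum hD j]
  apply tsum_congr
  intro k
  rw [pval hpareto (j+1+k) (by omega)]
  push_cast
  ring_nf

lemma tail_le {D : Ω → ℕ} (hD : Measurable D)
    (hpareto : ∀ k : ℕ, 1 ≤ k →
      (ℙ {ω | D ω = k}).toReal = (k : ℝ) ^ (-(2:ℝ)) / (Real.pi ^ 2 / 6))
    (j : ℕ) (hj : 1 ≤ j) :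
    (ℙ {ω | j < D ω}).toReal ≤ 1 / ((Real.pi^2/6) * j) := by
  have hL : (0:ℝ) < Real.pi^2/6 := by positivity
  rw [tail_as_tsum hD hpareto j]
  exact (core_bounds _ hL (j+1) (by omega)).2.2 j hj rfl

lemma tail_ge {D : Ω → ℕ} (hD : Measurable D)
    (hpareto : ∀ k : ℕ, 1 ≤ k →
      (ℙ {ω | D ω = k}).toReal = (k : ℝ) ^ (-(2:ℝ)) / (Real.pi ^ 2 / 6))
    (j : ℕ) :
    1 / ((Real.pi^2/6) * ((j:ℝ)+1)) ≤ (ℙ {ω | j < D ω}).toReal := by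
  have hL : (0:ℝ) < Real.pi^2/6 := by positivity
  rw [tail_as_tsum hD hpareto j]
  have := (core_bounds _ hL (j+1) (by omega)).2.1
  have hc : (((j+1:ℕ)):ℝ) = (j:ℝ)+1 := by push_cast; ring
  rw [hc] at this ⊢
  exact this

lemma tail_le_one (s : Set Ω) : (ℙ s).toReal ≤ 1 := by
  have := prob_le_one (μ := (ℙ : Measure Ω)) (s := s)
  exact ENNReal.toReal_le_of_le_ofReal zero_le_one (by simpa using this)


lemma layer_min (n M : ℕ) :
    ((min n M : ℕ) : ℝ) = ∑ j ∈ Finset.range M, (if j < n then (1:ℝ) else 0) := by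
  rw [← Finset.sum_filter]
  have hfil : (Finset.range M).filter (fun j => j < n) = Finset.range (min n M) := by
    ext x
    simp [Nat.lt_min, and_comm]
  rw [hfil]
  simp

lemma sum_odd (m : ℕ) : ∑ j ∈ Finset.range m, (2*(j:ℝ)+1) = (m:ℝ)^2 := by
  induction m with
  | zero => simp
  | succ k ih => rw [Finset.sum_range_succ, ih]; push_cast; ring

lemma layer_min_sq (n M : ℕ) :
    (((min n M : ℕ) : ℝ))^2 = ∑ j ∈ Finset.range M, (if j < n then 2*(j:ℝ)+1 else 0) := by
  rw [← Finset.sum_filter]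
  have hfil : (Finset.range M).filter (fun j => j < n) = Finset.range (min n M) := by
    ext x
    simp [Nat.lt_min, and_comm]
  rw [hfil, sum_odd]

variable {Ω : Type*} [MeasureSpace Ω] [IsProbabilityMeasure (ℙ : Measure Ω)]

lemma ite_eq_indicator {D : Ω → ℕ} (j : ℕ) (c : ℝ) (ω : Ω) :
    (if j < D ω then c else 0) = Set.indicator {ω' | j < D ω'} (fun _ => c) ω := by
  simp [Set.indicator_apply, mem_setOf_eq]

lemma integral_ite {D : Ω → ℕ} (hD : Measurable D) (j : ℕ) (c : ℝ) :
    ∫ ω, (if j < D ω then c else 0) ∂ℙ = c * (ℙ {ω | j < D ω}).toReal := by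
  simp_rw [ite_eq_indicator j c]
  rw [integral_indicator_const c (show MeasurableSet {ω' | j < D ω'} from hD measurableSet_Ioi)]
  simp [mul_comm, measureReal_def]

lemma integrable_ite {D : Ω → ℕ} (hD : Measurable D) (j : ℕ) (c : ℝ) :
    Integrable (fun ω => if j < D ω then c else 0) (ℙ : Measure Ω) := by
  simp_rw [ite_eq_indicator j c]
  exact (integrable_const c).indicator (show MeasurableSet {ω' | j < D ω'} from hD measurableSet_Ioi)

lemma integral_min_eq {D : Ω → ℕ} (hD : Measurable D) (M : ℕ) :
    ∫ ω, ((min (D ω) M : ℕ) : ℝ) ∂ℙ = ∑ j ∈ Finset.range M, (ℙ {ω | j < D ω}).toReal := by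
  simp_rw [layer_min (D _) M]
  rw [integral_finset_sum _ (fun j _ => integrable_ite hD j 1)]
  exact Finset.sum_congr rfl (fun j _ => by rw [integral_ite hD j 1, one_mul])

lemma integral_min_sq_eq {D : Ω → ℕ} (hD : Measurable D) (M : ℕ) :
    ∫ ω, (((min (D ω) M : ℕ) : ℝ))^2 ∂ℙ
      = ∑ j ∈ Finset.range M, (2*(j:ℝ)+1) * (ℙ {ω | j < D ω}).toReal := by
  simp_rw [layer_min_sq (D _) M]
  rw [integral_finset_sum _ (fun j _ => integrable_ite hD j (2*(j:ℝ)+1))]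
  exact Finset.sum_congr rfl (fun j _ => by rw [integral_ite hD j (2*(j:ℝ)+1)])

variable {Ω : Type*} [MeasureSpace Ω] [IsProbabilityMeasure (ℙ : Measure Ω)]

lemma mean_lb {D : Ω → ℕ} (hD : Measurable D)
    (hpareto : ∀ k : ℕ, 1 ≤ k →
      (ℙ {ω | D ω = k}).toReal = (k : ℝ) ^ (-(2:ℝ)) / (Real.pi ^ 2 / 6))
    (M : ℕ) :
    Real.log ((M:ℝ)+1) / (Real.pi^2/6) ≤ ∫ ω, ((min (D ω) M : ℕ) : ℝ) ∂ℙ := by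
  have hL : (0:ℝ) < Real.pi^2/6 := by positivity
  rw [integral_min_eq hD M]
  have h1 : ∀ j ∈ Finset.range M,
      1/((Real.pi^2/6) * ((j:ℝ)+1)) ≤ (ℙ {ω | j < D ω}).toReal :=
    fun j _ => tail_ge hD hpareto j
  calc Real.log ((M:ℝ)+1) / (Real.pi^2/6)
      ≤ (∑ j ∈ Finset.range M, 1/((j:ℝ)+1)) / (Real.pi^2/6) := by
        gcongr
        exact sum_harmonic_ge M
    _ = ∑ j ∈ Finset.range M, 1/((Real.pi^2/6) * ((j:ℝ)+1)) := by
        rw [Finset.sum_div]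
        exact Finset.sum_congr rfl (fun j _ => by rw [div_div, mul_comm])
    _ ≤ _ := Finset.sum_le_sum h1

lemma mean_ub {D : Ω → ℕ} (hD : Measurable D)
    (hpareto : ∀ k : ℕ, 1 ≤ k →
      (ℙ {ω | D ω = k}).toReal = (k : ℝ) ^ (-(2:ℝ)) / (Real.pi ^ 2 / 6))
    (M : ℕ) (hM : 1 ≤ M) :
    ∫ ω, ((min (D ω) M : ℕ) : ℝ) ∂ℙ ≤ (Real.log M + 3) / (Real.pi^2/6) := by
  have hL : (0:ℝ) < Real.pi^2/6 := by positivity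
  have hLle := pi_sq_facts.2
  rw [integral_min_eq hD M]
  obtain ⟨n, rfl⟩ : ∃ n, M = n + 1 := ⟨M - 1, (Nat.succ_pred_eq_of_pos hM).symm⟩
  rw [Finset.sum_range_succ']
  have hM0 : (ℙ {ω | 0 < D ω}).toReal ≤ 1 := tail_le_one _
  have hstep : ∀ j ∈ Finset.range n,
      (ℙ {ω | (j+1) < D ω}).toReal ≤ 1/((Real.pi^2/6) * ((j:ℝ)+1)) := by
    intro j _
    have h := tail_le hD hpareto (j+1) (by omega)
    have hc : ((j+1:ℕ):ℝ) = (j:ℝ)+1 := by push_cast; ring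
    rwa [hc] at h
  set x := Real.log ((n:ℝ)+1) with hx
  have hxnn : 0 ≤ x := Real.log_nonneg (by linarith [Nat.cast_nonneg (α := ℝ) n])
  have hsum : ∑ j ∈ Finset.range n, (ℙ {ω | (j+1) < D ω}).toReal
      ≤ (1 + x) / (Real.pi^2/6) := by
    calc ∑ j ∈ Finset.range n, (ℙ {ω | (j+1) < D ω}).toReal
        ≤ ∑ j ∈ Finset.range n, 1/((Real.pi^2/6) * ((j:ℝ)+1)) := Finset.sum_le_sum hstep
      _ = (∑ j ∈ Finset.range n, 1/((j:ℝ)+1)) / (Real.pi^2/6) := by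
          rw [Finset.sum_div]
          exact Finset.sum_congr rfl (fun j _ => by rw [div_div, mul_comm])
      _ ≤ (1 + x) / (Real.pi^2/6) := by
          have hsum' : ∑ j ∈ Finset.range n, 1/((j:ℝ)+1) ≤ 1 + x := by
            rcases Nat.eq_zero_or_pos n with rfl | hn
            · simp only [Finset.range_zero, Finset.sum_empty]
              linarith
            · have h1 := sum_harmonic_le n hn
              have hlog : Real.log (n:ℝ) ≤ x :=
                Real.log_le_log (by exact_mod_cast hn) (by linarith)
              linarith
          exact div_le_div_of_nonneg_right hsum' hL.le
  have hcast : ((n+1:ℕ):ℝ) = (n:ℝ)+1 := by push_cast; ring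
  rw [hcast, ← hx]
  have h4 : (x+3)/(Real.pi^2/6) - (1+x)/(Real.pi^2/6) = 2/(Real.pi^2/6) := by
    rw [div_sub_div_same]
    congr 1
    ring
  have h3 : (1:ℝ) ≤ 2/(Real.pi^2/6) := (one_le_div hL).2 (by linarith)
  linarith

lemma sq_ub {D : Ω → ℕ} (hD : Measurable D)
    (hpareto : ∀ k : ℕ, 1 ≤ k →
      (ℙ {ω | D ω = k}).toReal = (k : ℝ) ^ (-(2:ℝ)) / (Real.pi ^ 2 / 6))
    (M : ℕ) (hM : 1 ≤ M) :
    ∫ ω, (((min (D ω) M : ℕ) : ℝ))^2 ∂ℙ ≤ 3 * (M:ℝ) := by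
  have hL : (0:ℝ) < Real.pi^2/6 := by positivity
  have hLge := pi_sq_facts.1
  rw [integral_min_sq_eq hD M]
  obtain ⟨n, rfl⟩ : ∃ n, M = n + 1 := ⟨M - 1, (Nat.succ_pred_eq_of_pos hM).symm⟩
  rw [Finset.sum_range_succ']
  have hM0 : (2*((0:ℕ):ℝ)+1) * (ℙ {ω | 0 < D ω}).toReal ≤ 1 := by
    have := tail_le_one (Ω := Ω) {ω | 0 < D ω}
    have h0 : (0:ℝ) ≤ (ℙ {ω | 0 < D ω}).toReal := ENNReal.toReal_nonneg
    push_cast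
    linarith
  have hstep : ∀ j ∈ Finset.range n,
      (2*(((j+1:ℕ)):ℝ)+1) * (ℙ {ω | (j+1) < D ω}).toReal ≤ 3 := by
    intro j _
    have h := tail_le hD hpareto (j+1) (by omega)
    have hc : ((j+1:ℕ):ℝ) = (j:ℝ)+1 := by push_cast; ring
    rw [hc] at h ⊢
    have hjp : (0:ℝ) < (j:ℝ)+1 := by positivity
    have h0 : (0:ℝ) ≤ (ℙ {ω | (j+1) < D ω}).toReal := ENNReal.toReal_nonneg
    calc (2*((j:ℝ)+1)+1) * (ℙ {ω | (j+1) < D ω}).toReal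
        ≤ (2*((j:ℝ)+1)+1) * (1/((Real.pi^2/6) * ((j:ℝ)+1))) := by
          apply mul_le_mul_of_nonneg_left h (by linarith)
      _ ≤ 3 := by
          rw [mul_one_div, div_le_iff₀ (by positivity)]
          nlinarith [mul_le_mul_of_nonneg_right hLge (le_of_lt hjp)]
  calc (∑ j ∈ Finset.range n, (2*(((j+1:ℕ)):ℝ)+1) * (ℙ {ω | (j+1) < D ω}).toReal)
        + (2*((0:ℕ):ℝ)+1) * (ℙ {ω | 0 < D ω}).toReal
      ≤ (∑ j ∈ Finset.range n, (3:ℝ)) + 1 := by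
        exact add_le_add (Finset.sum_le_sum hstep) hM0
    _ = 1 + 3*(n:ℝ) := by rw [Finset.sum_const, Finset.card_range]; push_cast; ring
    _ ≤ 3 * ((n+1:ℕ):ℝ) := by push_cast; linarith [Nat.cast_nonneg (α := ℝ) n]

variable {Ω : Type*} [MeasureSpace Ω] [IsProbabilityMeasure (ℙ : Measure Ω)]

lemma ev_log_cond (ε : ℝ) (hε0 : 0 < ε) :
    ∀ᶠ h : ℕ in atTop, Real.log 2 + Real.log (Real.log h) + 3 ≤ (ε/2) * Real.log h := by
  have hx : ∀ᶠ x : ℝ in atTop, Real.log 2 + Real.log x + 3 ≤ (ε/2) * x := by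
    have h1 := (Real.isLittleO_log_id_atTop.def (show (0:ℝ) < ε/4 by positivity))
    filter_upwards [h1, eventually_ge_atTop ((Real.log 2 + 3) * (4/ε)), eventually_ge_atTop (0:ℝ)]
      with x h1x h2x h0x
    simp only [Real.norm_eq_abs, id] at h1x
    rw [abs_of_nonneg h0x] at h1x
    have hlog : Real.log x ≤ (ε/4) * x := le_trans (le_abs_self _) h1x
    have h2 : Real.log 2 + 3 ≤ (ε/4) * x := by
      have hmul := mul_le_mul_of_nonneg_left h2x (le_of_lt (show (0:ℝ) < ε/4 by positivity))
      calc Real.log 2 + 3 = (ε/4) * ((Real.log 2 + 3) * (4/ε)) := by field_simp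
        _ ≤ (ε/4) * x := hmul
    linarith
  exact (Real.tendsto_log_atTop.comp tendsto_natCast_atTop_atTop).eventually hx

set_option maxHeartbeats 2000000 in
lemma dev_bounds
    (Δ : ℕ → Ω → ℕ) (hmeas : ∀ i, Measurable (Δ i))
    (hindep : iIndepFun Δ ℙ)
    (hident : ∀ i, IdentDistrib (Δ i) (Δ 0) ℙ ℙ)
    (hpos : ∀ i ω, 0 < Δ i ω)
    (hpareto : ∀ k : ℕ, 1 ≤ k →
      (ℙ {ω | Δ 0 ω = k}).toReal = (k : ℝ) ^ (-(2:ℝ)) / (Real.pi ^ 2 / 6))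
    (T : ℕ → Ω → ℕ) (hT : ∀ k ω, T k ω = ∑ i ∈ Finset.range k, Δ i ω)
    (ε : ℝ) (hε0 : 0 < ε) (hε1 : ε < 1) :
    ∀ᶠ h : ℕ in atTop,
      (ℙ {ω | ((T h ω : ℝ)) < (1-ε) * ((h:ℝ) * Real.log h) / (Real.pi^2/6)}).toReal
        ≤ 400/(ε^2 * Real.log h)
      ∧ (ℙ {ω | (1+ε) * ((h:ℝ) * Real.log h) / (Real.pi^2/6) < (T h ω : ℝ)}).toReal
        ≤ 400/(ε^2 * Real.log h) := by
  have hL : (0:ℝ) < Real.pi^2/6 := by positivity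
  have hLge := pi_sq_facts.1
  have hLle := pi_sq_facts.2
  filter_upwards [eventually_ge_atTop 3, ev_log_cond ε hε0,
    (Real.tendsto_log_atTop.comp tendsto_natCast_atTop_atTop).eventually_ge_atTop 1]
    with h hh3 hev3 hlog1
  -- basic facts about h
  have hh1 : (1:ℝ) ≤ (h:ℝ) := by exact_mod_cast (by omega : 1 ≤ h)
  have hhpos : (0:ℝ) < (h:ℝ) := by linarith
  have hlogpos : (0:ℝ) < Real.log h := by
    simp only [Function.comp] at hlog1
    linarith [hlog1]
  have hlog1' : (1:ℝ) ≤ Real.log h := hlog1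
  have hhl1 : (1:ℝ) ≤ (h:ℝ) * Real.log h := by nlinarith
  -- the truncation level
  set M : ℕ := ⌈(h:ℝ) * Real.log h⌉₊ with hMdef
  have hM_ge : (h:ℝ) * Real.log h ≤ (M:ℝ) := Nat.le_ceil _
  have hM_le : (M:ℝ) ≤ (h:ℝ) * Real.log h + 1 :=
    (Nat.ceil_lt_add_one (by positivity)).le
  have hM1 : 1 ≤ M := by
    rw [hMdef]
    exact_mod_cast Nat.one_le_ceil_iff.2 (by nlinarith)
  have hM1' : (1:ℝ) ≤ (M:ℝ) := by exact_mod_cast hM1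
  have hM2 : (M:ℝ) ≤ 2 * ((h:ℝ) * Real.log h) := by linarith
  -- truncated variables
  set g : ℕ → ℝ := fun n => ((min n M : ℕ) : ℝ) with hgdef
  have hg : Measurable g := measurable_from_nat
  set X : ℕ → Ω → ℝ := fun i ω => g (Δ i ω) with hXdef
  have hXmeas : ∀ i, Measurable (X i) := fun i => hg.comp (hmeas i)
  have hXbdd : ∀ i ω, X i ω ∈ Set.Icc (1:ℝ) (M:ℝ) := by
    intro i ω
    simp only [hXdef, hgdef, Set.mem_Icc]
    constructor
    · exact_mod_cast le_min (hpos i ω) hM1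
    · exact_mod_cast min_le_right (Δ i ω) M
  have hXmem : ∀ i, MemLp (X i) 2 (ℙ : Measure Ω) := fun i =>
    memLp_of_bounded (ae_of_all _ (hXbdd i)) (hXmeas i).aestronglyMeasurable 2
  have hXint : ∀ i, Integrable (X i) (ℙ : Measure Ω) := fun i =>
    (hXmem i).integrable one_le_two
  have hXid : ∀ i, IdentDistrib (X i) (X 0) ℙ ℙ := fun i => (hident i).comp hg
  -- the truncated sum
  set S : Ω → ℝ := fun ω => ∑ i ∈ Finset.range h, X i ω with hSdef
  have hSsum : S = ∑ i ∈ Finset.range h, X i := by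
    funext ω
    rw [hSdef]
    simp [Finset.sum_apply]
  -- mean of one truncated variable
  set μM : ℝ := ∫ ω, X 0 ω ∂ℙ with hμMdef
  have hμM_lb : Real.log ((M:ℝ)+1) / (Real.pi^2/6) ≤ μM := mean_lb (hmeas 0) hpareto M
  have hμM_ub : μM ≤ (Real.log M + 3) / (Real.pi^2/6) := mean_ub (hmeas 0) hpareto M hM1
  -- expectation of S
  have hES : ∫ ω, S ω ∂ℙ = (h:ℝ) * μM := by
    rw [hSdef]
    rw [integral_finset_sum _ (fun i _ => hXint i)]
    rw [Finset.sum_congr rfl (fun i _ => (hXid i).integral_eq)]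
    rw [Finset.sum_const, Finset.card_range, nsmul_eq_mul]
  -- variance of S
  have hpairwise : Set.Pairwise ↑(Finset.range h) (fun i j => IndepFun (X i) (X j) ℙ) := by
    intro i _ j _ hij
    exact (hindep.comp (fun _ => g) (fun _ => hg)).indepFun hij
  have hVarS : variance S ℙ ≤ 3 * (h:ℝ) * (M:ℝ) := by
    rw [hSsum, IndepFun.variance_sum (fun i _ => hXmem i) hpairwise]
    have hvar_one : ∀ i ∈ Finset.range h, variance (X i) ℙ ≤ 3 * (M:ℝ) := by
      intro i _
      rw [(hXid i).variance_eq]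
      calc variance (X 0) ℙ ≤ ∫ ω, (X 0 ω)^2 ∂ℙ := by
            have := variance_le_expectation_sq (μ := (ℙ : Measure Ω)) (X := X 0)
              (hXmeas 0).aestronglyMeasurable
            simpa [Pi.pow_apply] using this
        _ ≤ 3 * (M:ℝ) := sq_ub (hmeas 0) hpareto M hM1
    calc ∑ i ∈ Finset.range h, variance (X i) ℙ ≤ ∑ _i ∈ Finset.range h, 3 * (M:ℝ) :=
          Finset.sum_le_sum hvar_one
      _ = 3 * (h:ℝ) * (M:ℝ) := by rw [Finset.sum_const, Finset.card_range, nsmul_eq_mul]; ring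
  -- Chebyshev
  set c : ℝ := (ε/2) * ((h:ℝ) * Real.log h) / (Real.pi^2/6) with hcdef
  have hc : 0 < c := by
    apply div_pos _ hL
    positivity
  have hSmem : MemLp S 2 (ℙ : Measure Ω) := by
    rw [hSsum]; exact memLp_finset_sum' _ (fun i _ => hXmem i)
  have hcheb := meas_ge_le_variance_div_sq (μ := (ℙ : Measure Ω)) hSmem hc
  have hchebR : (ℙ {ω | c ≤ |S ω - (h:ℝ) * μM|}).toReal ≤ 96/(ε^2 * Real.log h) := by
    have hbound : variance S ℙ / c^2 ≤ 96/(ε^2 * Real.log h) := by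
      rw [hcdef, div_pow, div_div_eq_mul_div, div_le_div_iff₀ (by positivity) (by positivity)]
      have e1 : variance S ℙ ≤ 6*(h:ℝ)^2*Real.log h := by nlinarith [hVarS, hM2, hhpos]
      have e2 : (Real.pi^2/6)^2 ≤ 4 := by nlinarith [hL, hLle]
      have step1 : variance S ℙ * (Real.pi^2/6)^2 ≤ 6*(h:ℝ)^2*Real.log h * 4 :=
        mul_le_mul e1 e2 (sq_nonneg _) (by positivity)
      have p1 : (0:ℝ) ≤ ε^2 * Real.log h := by positivity
      have step2 := mul_le_mul_of_nonneg_right step1 p1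
      have e3 : 6*(h:ℝ)^2*Real.log h * 4 * (ε^2 * Real.log h)
          = 96 * ((ε/2) * ((h:ℝ) * Real.log h))^2 := by ring
      linarith [step2, e3.le, e3.ge]
    calc (ℙ {ω | c ≤ |S ω - (h:ℝ) * μM|}).toReal
        ≤ variance S ℙ / c^2 := by
          apply ENNReal.toReal_le_of_le_ofReal
            (div_nonneg (variance_nonneg _ _) (sq_nonneg c))
          have : {ω | c ≤ |S ω - (h:ℝ) * μM|} = {ω | c ≤ |S ω - ∫ ω', S ω' ∂ℙ|} := by
            rw [hES]
          rw [this]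
          exact hcheb
      _ ≤ 96/(ε^2 * Real.log h) := hbound
  -- pointwise comparison S ≤ T
  have hST : ∀ ω, S ω ≤ ((T h ω : ℕ) : ℝ) := by
    intro ω
    rw [hT h ω, hSdef]
    push_cast
    apply Finset.sum_le_sum
    intro i _
    simp only [hXdef, hgdef]
    exact_mod_cast min_le_left (Δ i ω) M
  have hd : (0:ℝ) < ε^2 * Real.log h := by positivity
  have h96 : (96:ℝ)/(ε^2 * Real.log h) ≤ 400/(ε^2 * Real.log h) := by
    apply div_le_div_of_nonneg_right ?_ hd.le
    norm_num
  constructor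
  · -- lower deviation
    have hWle : ((h:ℝ) * Real.log h) / (Real.pi^2/6) ≤ (h:ℝ) * μM := by
      have hlogM : Real.log h ≤ Real.log ((M:ℝ)+1) :=
        Real.log_le_log hhpos (by nlinarith [hM_ge])
      have h1 : Real.log h / (Real.pi^2/6) ≤ μM :=
        le_trans (div_le_div_of_nonneg_right hlogM hL.le) hμM_lb
      calc ((h:ℝ) * Real.log h) / (Real.pi^2/6) = (h:ℝ) * (Real.log h / (Real.pi^2/6)) := by
            ring
        _ ≤ (h:ℝ) * μM := mul_le_mul_of_nonneg_left h1 hhpos.le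
    have hsub : {ω | ((T h ω : ℝ)) < (1-ε) * ((h:ℝ) * Real.log h) / (Real.pi^2/6)}
        ⊆ {ω | c ≤ |S ω - (h:ℝ) * μM|} := by
      intro ω hω
      simp only [mem_setOf_eq] at hω ⊢
      have h1 : S ω < (1-ε) * ((h:ℝ) * Real.log h) / (Real.pi^2/6) :=
        lt_of_le_of_lt (hST ω) hω
      have e1 : (1-ε) * ((h:ℝ) * Real.log h) / (Real.pi^2/6)
          = ((h:ℝ) * Real.log h) / (Real.pi^2/6) - ε * (((h:ℝ) * Real.log h) / (Real.pi^2/6)) := by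
        ring
      have e2 : c = (ε/2) * (((h:ℝ) * Real.log h) / (Real.pi^2/6)) := by rw [hcdef]; ring
      have hWpos : (0:ℝ) ≤ ((h:ℝ) * Real.log h) / (Real.pi^2/6) := by positivity
      have h2 : c ≤ (h:ℝ)*μM - S ω := by
        rw [e2]
        nlinarith [hWle, h1, hWpos]
      calc c ≤ (h:ℝ)*μM - S ω := h2
        _ ≤ |S ω - (h:ℝ)*μM| := by rw [abs_sub_comm]; exact le_abs_self _
    calc (ℙ {ω | ((T h ω : ℝ)) < (1-ε) * ((h:ℝ) * Real.log h) / (Real.pi^2/6)}).toReal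
        ≤ (ℙ {ω | c ≤ |S ω - (h:ℝ) * μM|}).toReal :=
          (ENNReal.toReal_le_toReal (measure_ne_top _ _) (measure_ne_top _ _)).2
            (measure_mono hsub)
      _ ≤ 96/(ε^2 * Real.log h) := hchebR
      _ ≤ 400/(ε^2 * Real.log h) := h96
  · -- upper deviation
    set bad : Set Ω := ⋃ i ∈ Finset.range h, {ω | M < Δ i ω} with hbaddef
    have hgoodeq : ∀ ω, ω ∉ bad → ((T h ω : ℕ) : ℝ) = S ω := by
      intro ω hω
      simp only [hbaddef, mem_iUnion, mem_setOf_eq, not_exists] at hω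
      rw [hT h ω, hSdef]
      push_cast
      apply Finset.sum_congr rfl
      intro i hi
      have hnot : ¬ M < Δ i ω := hω i hi
      simp only [hXdef, hgdef]
      rw [min_eq_left (not_lt.mp hnot)]
    have hESub : (h:ℝ) * μM ≤ (1+ε/2) * (((h:ℝ) * Real.log h) / (Real.pi^2/6)) := by
      have hlogM : Real.log M ≤ Real.log 2 + Real.log h + Real.log (Real.log h) := by
        calc Real.log M ≤ Real.log (2*((h:ℝ)*Real.log h)) :=
              Real.log_le_log (by positivity) hM2
          _ = Real.log 2 + Real.log h + Real.log (Real.log h) := by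
              rw [Real.log_mul two_ne_zero (by positivity),
                Real.log_mul (ne_of_gt hhpos) (ne_of_gt hlogpos)]
              ring
      have hnum : Real.log M + 3 ≤ (1+ε/2) * Real.log h := by
        have := hev3
        nlinarith [hlogM]
      have h1 : μM ≤ ((1+ε/2) * Real.log h)/(Real.pi^2/6) :=
        le_trans hμM_ub (div_le_div_of_nonneg_right hnum hL.le)
      calc (h:ℝ) * μM ≤ (h:ℝ) * (((1+ε/2) * Real.log h)/(Real.pi^2/6)) :=
            mul_le_mul_of_nonneg_left h1 hhpos.le
        _ = (1+ε/2) * (((h:ℝ) * Real.log h) / (Real.pi^2/6)) := by ring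
    have hsub : {ω | (1+ε) * ((h:ℝ) * Real.log h) / (Real.pi^2/6) < ((T h ω : ℕ) : ℝ)}
        ⊆ bad ∪ {ω | c ≤ |S ω - (h:ℝ) * μM|} := by
      intro ω hω
      by_cases hb : ω ∈ bad
      · exact mem_union_left _ hb
      · right
        simp only [mem_setOf_eq] at hω ⊢
        have hTS := hgoodeq ω hb
        have h1 : (1+ε) * ((h:ℝ) * Real.log h) / (Real.pi^2/6) < S ω := by
          rw [← hTS]; exact hω
        have e2 : c = (ε/2) * (((h:ℝ) * Real.log h) / (Real.pi^2/6)) := by rw [hcdef]; ring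
        have e3 : (1+ε) * ((h:ℝ) * Real.log h) / (Real.pi^2/6)
            = (1+ε/2) * (((h:ℝ) * Real.log h) / (Real.pi^2/6))
              + (ε/2) * (((h:ℝ) * Real.log h) / (Real.pi^2/6)) := by ring
        have h2 : c ≤ S ω - (h:ℝ)*μM := by
          rw [e2]
          linarith [hESub, h1, e3.le, e3.ge]
        exact le_trans h2 (le_abs_self _)
    have hbadR : (ℙ bad).toReal ≤ 1/Real.log h := by
      have hmb : ℙ bad ≤ ∑ i ∈ Finset.range h, ℙ {ω | M < Δ i ω} :=
        measure_biUnion_finset_le _ _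
      have heach : ∀ i, ℙ {ω | M < Δ i ω} = ℙ {ω | M < Δ 0 ω} := by
        intro i
        exact (hident i).measure_mem_eq (measurableSet_Ioi (a := M))
      have hsum_eq : ∑ i ∈ Finset.range h, ℙ {ω | M < Δ i ω}
          = (h : ℝ≥0∞) * ℙ {ω | M < Δ 0 ω} := by
        rw [Finset.sum_congr rfl (fun i _ => heach i), Finset.sum_const, Finset.card_range,
          nsmul_eq_mul]
      have h2 : ℙ bad ≤ (h : ℝ≥0∞) * ℙ {ω | M < Δ 0 ω} := hsum_eq ▸ hmb
      have hfin : (h : ℝ≥0∞) * ℙ {ω | M < Δ 0 ω} ≠ ⊤ :=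
        ENNReal.mul_ne_top (ENNReal.natCast_ne_top h) (measure_ne_top _ _)
      have h3 : (ℙ bad).toReal ≤ (h:ℝ) * (ℙ {ω | M < Δ 0 ω}).toReal := by
        have := (ENNReal.toReal_le_toReal (measure_ne_top _ _) hfin).2 h2
        rwa [ENNReal.toReal_mul, ENNReal.toReal_natCast] at this
      have htail : (ℙ {ω | M < Δ 0 ω}).toReal ≤ 1/((Real.pi^2/6)*(M:ℝ)) :=
        tail_le (hmeas 0) hpareto M hM1
      calc (ℙ bad).toReal ≤ (h:ℝ) * (1/((Real.pi^2/6)*(M:ℝ))) :=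
            le_trans h3 (mul_le_mul_of_nonneg_left htail hhpos.le)
        _ ≤ 1/Real.log h := by
            rw [mul_one_div, div_le_div_iff₀ (by positivity) hlogpos]
            nlinarith [hM_ge, hLge, hM1', hhl1, hlogpos, hhpos]
    have hmeasure : (ℙ {ω | (1+ε) * ((h:ℝ) * Real.log h) / (Real.pi^2/6) < ((T h ω : ℕ) : ℝ)}).toReal
        ≤ (ℙ bad).toReal + (ℙ {ω | c ≤ |S ω - (h:ℝ) * μM|}).toReal := by
      have hle : ℙ {ω | (1+ε) * ((h:ℝ) * Real.log h) / (Real.pi^2/6) < ((T h ω : ℕ) : ℝ)}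
          ≤ ℙ bad + ℙ {ω | c ≤ |S ω - (h:ℝ) * μM|} :=
        le_trans (measure_mono hsub) (measure_union_le _ _)
      calc (ℙ {ω | (1+ε) * ((h:ℝ) * Real.log h) / (Real.pi^2/6) < ((T h ω : ℕ) : ℝ)}).toReal
          ≤ (ℙ bad + ℙ {ω | c ≤ |S ω - (h:ℝ) * μM|}).toReal :=
            (ENNReal.toReal_le_toReal (measure_ne_top _ _)
              (ENNReal.add_ne_top.2 ⟨measure_ne_top _ _, measure_ne_top _ _⟩)).2 hle
        _ = (ℙ bad).toReal + (ℙ {ω | c ≤ |S ω - (h:ℝ) * μM|}).toReal :=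
            ENNReal.toReal_add (measure_ne_top _ _) (measure_ne_top _ _)
    have h1d : 1/Real.log h ≤ 1/(ε^2*Real.log h) :=
      one_div_le_one_div_of_le hd (by
        nlinarith [mul_nonneg (show (0:ℝ) ≤ 1-ε^2 by nlinarith [sq_nonneg (1-ε)]) hlogpos.le])
    have hfinal : 1/(ε^2*Real.log h) + 96/(ε^2*Real.log h) ≤ 400/(ε^2*Real.log h) := by
      rw [← add_div]
      apply div_le_div_of_nonneg_right ?_ hd.le
      norm_num
    calc (ℙ {ω | (1+ε) * ((h:ℝ) * Real.log h) / (Real.pi^2/6) < ((T h ω : ℕ) : ℝ)}).toReal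
        ≤ (ℙ bad).toReal + (ℙ {ω | c ≤ |S ω - (h:ℝ) * μM|}).toReal := hmeasure
      _ ≤ 1/Real.log h + 96/(ε^2 * Real.log h) := add_le_add hbadR hchebR
      _ ≤ 400/(ε^2 * Real.log h) := by linarith

end Stmt10Aux


open Stmt10Aux in
set_option maxHeartbeats 4000000 in
/-- Suppose `σ_X(h) ∼ C̃_d h^{2d-1}` (`0 < d < 1/2`) and the i.i.d.
inter-arrival times have the discrete Pareto distribution `P(Δ = k) = k⁻²/ζ(2)`,
`k = 1, 2, …`, with `ζ(2) = π²/6` (the case `α = 1`). Then the autocovariance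
`σ_Y(h) = E[σ_X(T_h)]` of the sampled process satisfies
`σ_Y(h) ∼ C̃_d (6/π²)^{2d-1} h^{2d-1} (log h)^{2d-1}` as `h → ∞`. -/
theorem stmt10 {Ω : Type*} [MeasureSpace Ω] [IsProbabilityMeasure (ℙ : Measure Ω)]
    (d : ℝ) (hd0 : 0 < d) (hd1 : d < 1/2) (Cd : ℝ) (hCd : 0 < Cd)
    (σX : ℝ → ℝ)
    (hσX : σX ~[atTop] fun h : ℝ => Cd * h ^ (2*d - 1))
    (Δ : ℕ → Ω → ℕ) (hmeas : ∀ i, Measurable (Δ i))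
    (hindep : iIndepFun Δ ℙ)
    (hident : ∀ i, IdentDistrib (Δ i) (Δ 0) ℙ ℙ)
    (hpos : ∀ i ω, 0 < Δ i ω)
    (hpareto : ∀ k : ℕ, 1 ≤ k →
      (ℙ {ω | Δ 0 ω = k}).toReal = (k : ℝ) ^ (-(2:ℝ)) / (Real.pi ^ 2 / 6))
    (T : ℕ → Ω → ℕ) (hT : ∀ k ω, T k ω = ∑ i ∈ Finset.range k, Δ i ω)
    (σY : ℕ → ℝ) (hσY : ∀ h : ℕ, σY h = ∫ ω, σX (T h ω) ∂ℙ) :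
    σY ~[atTop] fun h : ℕ =>
      Cd * (6 / Real.pi ^ 2) ^ (2*d - 1) * (h : ℝ) ^ (2*d - 1)
        * Real.log h ^ (2*d - 1) := by
  have hπ : (0:ℝ) < Real.pi := Real.pi_pos
  have hL : (0:ℝ) < Real.pi^2/6 := by positivity
  set β : ℝ := 2*d - 1 with hβdef
  have hβneg : β < 0 := by rw [hβdef]; linarith
  have hβgt : -1 < β := by rw [hβdef]; linarith
  set c0 : ℝ := (6 / Real.pi ^ 2) ^ β with hc0def
  have hc0pos : 0 < c0 := Real.rpow_pos_of_pos (by positivity) β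
  have hlogev : ∀ᶠ h : ℕ in atTop, (1:ℝ) ≤ Real.log h :=
    (Real.tendsto_log_atTop.comp tendsto_natCast_atTop_atTop).eventually_ge_atTop 1
  have hgne : ∀ᶠ h : ℕ in atTop,
      (Cd * c0 * (h : ℝ) ^ β * Real.log h ^ β) ≠ 0 := by
    filter_upwards [eventually_ge_atTop 3, hlogev] with h hh3 hlog1
    have hhpos : (0:ℝ) < (h:ℝ) := by positivity
    have hlogpos : (0:ℝ) < Real.log h := by linarith
    exact ne_of_gt (mul_pos (mul_pos (mul_pos hCd hc0pos)
      (Real.rpow_pos_of_pos hhpos _)) (Real.rpow_pos_of_pos hlogpos _))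
  rw [isEquivalent_iff_tendsto_one hgne]
  rw [Metric.tendsto_nhds]
  intro δ hδ
  -- choose a small parameter ε using continuity at 0
  have hF1cont : ContinuousAt (fun t : ℝ => (1+t)*((1-t) ^ β + t)) 0 := by
    apply ContinuousAt.mul
    · exact (continuous_const.add continuous_id).continuousAt
    · apply ContinuousAt.add
      · have hrc : ContinuousAt (fun x : ℝ => x ^ β) ((fun t:ℝ => 1-t) 0) := by
          simp only [sub_zero]
          exact Real.continuousAt_rpow_const 1 β (Or.inl one_ne_zero)
        exact hrc.comp ((continuous_const.sub continuous_id).continuousAt)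
      · exact continuousAt_id
  have hF2cont : ContinuousAt (fun t : ℝ => (1-t)*(1-t)*((1+t) ^ β)) 0 := by
    apply ContinuousAt.mul
    · exact ((continuous_const.sub continuous_id).mul
        (continuous_const.sub continuous_id)).continuousAt
    · have hrc : ContinuousAt (fun x : ℝ => x ^ β) ((fun t:ℝ => 1+t) 0) := by
        simp only [add_zero]
        exact Real.continuousAt_rpow_const 1 β (Or.inl one_ne_zero)
      exact hrc.comp ((continuous_const.add continuous_id).continuousAt)
  have hT1 : Tendsto (fun t : ℝ => (1+t)*((1-t) ^ β + t)) (𝓝[>] 0) (𝓝 1) := by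
    have hF1val : (1+(0:ℝ))*((1-(0:ℝ)) ^ β + 0) = 1 := by simp [Real.one_rpow]
    have := hF1cont.continuousWithinAt (s := Ioi (0:ℝ))
    rw [ContinuousWithinAt] at this
    rwa [hF1val] at this
  have hT2 : Tendsto (fun t : ℝ => (1-t)*(1-t)*((1+t) ^ β)) (𝓝[>] 0) (𝓝 1) := by
    have hF2val : (1-(0:ℝ))*(1-(0:ℝ))*((1+(0:ℝ)) ^ β) = 1 := by simp [Real.one_rpow]
    have := hF2cont.continuousWithinAt (s := Ioi (0:ℝ))
    rw [ContinuousWithinAt] at this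
    rwa [hF2val] at this
  have hev1 : ∀ᶠ t in 𝓝[>] (0:ℝ), |(1+t)*((1-t) ^ β + t) - 1| < δ/2 := by
    have := (Metric.tendsto_nhds.1 hT1) (δ/2) (by linarith)
    filter_upwards [this] with t ht
    rwa [Real.dist_eq] at ht
  have hev2 : ∀ᶠ t in 𝓝[>] (0:ℝ), |(1-t)*(1-t)*((1+t) ^ β) - 1| < δ/2 := by
    have := (Metric.tendsto_nhds.1 hT2) (δ/2) (by linarith)
    filter_upwards [this] with t ht
    rwa [Real.dist_eq] at ht
  have hev3 : ∀ᶠ t in 𝓝[>] (0:ℝ), t < 1/2 :=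
    eventually_nhdsWithin_of_eventually_nhds (eventually_lt_nhds (by norm_num))
  have hev4 : ∀ᶠ t in 𝓝[>] (0:ℝ), 0 < t := eventually_mem_nhdsWithin
  obtain ⟨ε, ⟨⟨hF1ε, hF2ε⟩, hεhalf⟩, hε0⟩ :=
    (((hev1.and hev2).and hev3).and hev4).exists
  have hε1 : ε < 1 := by linarith
  -- bound on σX from the equivalence hypothesis
  have hσb : ∀ᶠ x : ℝ in atTop, |σX x - Cd * x ^ β| ≤ ε * (Cd * x ^ β) := by
    have h1 := (Asymptotics.isLittleO_iff.1 hσX.isLittleO) hε0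
    filter_upwards [h1, eventually_ge_atTop (1:ℝ)] with x hx hx1
    have hxpos : (0:ℝ) < x := by linarith
    have hrpos : (0:ℝ) < Cd * x ^ β := mul_pos hCd (Real.rpow_pos_of_pos hxpos β)
    simp only [Pi.sub_apply, Real.norm_eq_abs] at hx
    rwa [abs_of_pos hrpos] at hx
  obtain ⟨x₀, hx₀⟩ := eventually_atTop.1 hσb
  -- deviation bounds
  have hdev := dev_bounds Δ hmeas hindep hident hpos hpareto T hT ε hε0 hε1
  -- smallness of the probability error terms
  have hsm1 : ∀ᶠ h : ℕ in atTop, 400/(ε^2*Real.log h) ≤ ε := by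
    filter_upwards [(Real.tendsto_log_atTop.comp
      tendsto_natCast_atTop_atTop).eventually_ge_atTop (400/(ε^3)), hlogev] with h hge hlog1
    have hlogpos : (0:ℝ) < Real.log h := by linarith
    rw [div_le_iff₀ (by positivity)]
    have hmul := mul_le_mul_of_nonneg_right hge (show (0:ℝ) ≤ ε^3 by positivity)
    have he : (400/(ε^3))*(ε^3) = 400 := by field_simp
    simp only [Function.comp] at hmul
    nlinarith [hmul]
  have hsm2 : ∀ᶠ h : ℕ in atTop,
      400/(ε^2*Real.log h) ≤ ε * (c0 * Real.log h ^ β) := by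
    filter_upwards [((tendsto_rpow_atTop (show (0:ℝ) < 1+β by linarith)).comp
      (Real.tendsto_log_atTop.comp tendsto_natCast_atTop_atTop)).eventually_ge_atTop
      (400/(ε^3*c0)), hlogev] with h hge hlog1
    have hlogpos : (0:ℝ) < Real.log h := by linarith
    simp only [Function.comp] at hge
    have hlβpos : (0:ℝ) < Real.log h ^ β := Real.rpow_pos_of_pos hlogpos β
    rw [div_le_iff₀ (by positivity)]
    have hid : Real.log h ^ ((1:ℝ)+β) = Real.log h * Real.log h ^ β := by
      rw [Real.rpow_add hlogpos, Real.rpow_one]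
    have hmul := mul_le_mul_of_nonneg_right hge (show (0:ℝ) ≤ ε^3*c0 by positivity)
    have he : (400/(ε^3*c0))*(ε^3*c0) = 400 := by field_simp
    rw [he, hid] at hmul
    nlinarith [hmul]
  -- main eventual statement
  filter_upwards [eventually_ge_atTop 3, hlogev, hdev, hsm1, hsm2,
    tendsto_natCast_atTop_atTop.eventually_ge_atTop x₀,
    tendsto_natCast_atTop_atTop.eventually_ge_atTop (1:ℝ), hgne]
    with h hh3 hlog1 hdevh hsm1h hsm2h hx₀h hh1 hgneh
  have hhpos : (0:ℝ) < (h:ℝ) := by linarith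
  have hlogpos : (0:ℝ) < Real.log h := by linarith
  -- measurability
  have hThmeas : Measurable (T h) := by
    have hTfun : T h = fun ω => ∑ i ∈ Finset.range h, Δ i ω := funext (hT h)
    rw [hTfun]
    exact Finset.measurable_sum _ (fun i _ => hmeas i)
  have hTcast : Measurable (fun ω => ((T h ω : ℕ) : ℝ)) :=
    (measurable_from_nat (f := fun n : ℕ => (n:ℝ))).comp hThmeas
  set q : Ω → ℝ := fun ω => ((T h ω : ℕ) : ℝ) ^ β with hqdef
  have hq_meas : Measurable q :=
    (measurable_from_nat (f := fun n : ℕ => ((n:ℝ)) ^ β)).comp hThmeas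
  have hf_meas : Measurable (fun ω => σX (T h ω)) :=
    (measurable_from_nat (f := fun n : ℕ => σX n)).comp hThmeas
  -- T is at least h
  have hTge : ∀ ω, (h:ℝ) ≤ ((T h ω : ℕ) : ℝ) := by
    intro ω
    have h1 : h ≤ T h ω := by
      rw [hT h ω]
      calc h = ∑ _i ∈ Finset.range h, 1 := by simp
        _ ≤ ∑ i ∈ Finset.range h, Δ i ω := Finset.sum_le_sum (fun i _ => hpos i ω)
    exact_mod_cast h1
  have hTpos : ∀ ω, (0:ℝ) < ((T h ω : ℕ) : ℝ) := fun ω => lt_of_lt_of_le hhpos (hTge ω)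
  -- pointwise σX bound
  have hσpt : ∀ ω, |σX (T h ω) - Cd * q ω| ≤ ε * (Cd * q ω) :=
    fun ω => hx₀ _ (le_trans hx₀h (hTge ω))
  have hqpos : ∀ ω, 0 < q ω := fun ω => Real.rpow_pos_of_pos (hTpos ω) β
  have hqle : ∀ ω, q ω ≤ (h:ℝ) ^ β :=
    fun ω => Real.rpow_le_rpow_of_nonpos hhpos (hTge ω) hβneg.le
  have hhβle1 : (h:ℝ) ^ β ≤ 1 := Real.rpow_le_one_of_one_le_of_nonpos hh1 hβneg.le
  -- integrability
  have hq_int : Integrable q (ℙ : Measure Ω) := by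
    apply Integrable.mono' (integrable_const (1:ℝ)) hq_meas.aestronglyMeasurable
    apply ae_of_all
    intro ω
    rw [Real.norm_eq_abs, abs_of_pos (hqpos ω)]
    exact le_trans (hqle ω) hhβle1
  have hf_int : Integrable (fun ω => σX (T h ω)) (ℙ : Measure Ω) := by
    apply Integrable.mono' (integrable_const ((1+ε)*Cd)) hf_meas.aestronglyMeasurable
    apply ae_of_all
    intro ω
    have h1 := hσpt ω
    have h2 : 0 < Cd * q ω := mul_pos hCd (hqpos ω)
    have h3 : Cd * q ω ≤ Cd := by
      calc Cd * q ω ≤ Cd * 1 := by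
            apply mul_le_mul_of_nonneg_left _ hCd.le
            exact le_trans (hqle ω) hhβle1
        _ = Cd := mul_one Cd
    rw [Real.norm_eq_abs]
    calc |σX (T h ω)| = |(σX (T h ω) - Cd * q ω) + Cd * q ω| := by ring_nf
      _ ≤ |σX (T h ω) - Cd * q ω| + |Cd * q ω| := abs_add_le _ _
      _ ≤ ε * (Cd * q ω) + Cd * q ω := by
          rw [abs_of_pos h2]; linarith [h1]
      _ = (1+ε) * (Cd * q ω) := by ring
      _ ≤ (1+ε)*Cd := by nlinarith [h3, h2]
  -- integral sandwich for σY
  have hIub : σY h ≤ (1+ε)*Cd*∫ ω, q ω ∂ℙ := by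
    rw [hσY h]
    calc ∫ ω, σX (T h ω) ∂ℙ ≤ ∫ ω, (1+ε)*Cd*q ω ∂ℙ := by
          apply integral_mono hf_int (by exact (hq_int.const_mul ((1+ε)*Cd)))
          intro ω
          have h1 := (abs_le.1 (hσpt ω)).2
          have h2 := (abs_le.1 (hσpt ω)).1
          simp only
          nlinarith [h1]
      _ = (1+ε)*Cd*∫ ω, q ω ∂ℙ := by rw [integral_const_mul]
  have hIlb : (1-ε)*Cd*∫ ω, q ω ∂ℙ ≤ σY h := by
    rw [hσY h]
    calc (1-ε)*Cd*∫ ω, q ω ∂ℙ = ∫ ω, (1-ε)*Cd*q ω ∂ℙ := by rw [integral_const_mul]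
      _ ≤ ∫ ω, σX (T h ω) ∂ℙ := by
          apply integral_mono (by exact (hq_int.const_mul ((1-ε)*Cd))) hf_int
          intro ω
          have h2 := (abs_le.1 (hσpt ω)).1
          simp only
          nlinarith [h2]
  -- the events
  have h1ε : (0:ℝ) < 1 - ε := by linarith
  have haneg_pos : (0:ℝ) < (1-ε) * ((h:ℝ) * Real.log h) / (Real.pi^2/6) := by
    apply div_pos _ hL
    apply mul_pos h1ε (mul_pos hhpos hlogpos)
  have hapos_pos : (0:ℝ) < (1+ε) * ((h:ℝ) * Real.log h) / (Real.pi^2/6) := by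
    apply div_pos _ hL
    apply mul_pos (by linarith) (mul_pos hhpos hlogpos)
  set alo : ℝ := (1-ε) * ((h:ℝ) * Real.log h) / (Real.pi^2/6) with halodef
  set ahi : ℝ := (1+ε) * ((h:ℝ) * Real.log h) / (Real.pi^2/6) with hahidef
  have hAmeas : MeasurableSet {ω | ((T h ω : ℕ) : ℝ) < alo} :=
    hTcast measurableSet_Iio
  have hCmeas : MeasurableSet {ω | ((T h ω : ℕ) : ℝ) ≤ ahi} :=
    hTcast measurableSet_Iic
  -- upper bound on ∫ q
  have hub_pt : ∀ ω, q ω ≤ alo ^ β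
      + Set.indicator {ω' | ((T h ω' : ℕ) : ℝ) < alo} (fun _ => (h:ℝ) ^ β) ω := by
    intro ω
    by_cases hω : ω ∈ {ω' | ((T h ω' : ℕ) : ℝ) < alo}
    · rw [Set.indicator_of_mem hω]
      have := Real.rpow_nonneg haneg_pos.le β
      linarith [le_trans (hqle ω) (le_refl ((h:ℝ)^β))]
    · rw [Set.indicator_of_notMem hω, add_zero]
      have hge : alo ≤ ((T h ω : ℕ) : ℝ) := not_lt.mp hω
      exact Real.rpow_le_rpow_of_nonpos haneg_pos hge hβneg.le
  have hub_I : ∫ ω, q ω ∂ℙ ≤ alo ^ β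
      + (ℙ {ω' | ((T h ω' : ℕ) : ℝ) < alo}).toReal * (h:ℝ) ^ β := by
    have hint2 : Integrable (fun ω => alo ^ β
        + Set.indicator {ω' | ((T h ω' : ℕ) : ℝ) < alo} (fun _ => (h:ℝ) ^ β) ω)
        (ℙ : Measure Ω) :=
      (integrable_const _).add ((integrable_const _).indicator hAmeas)
    calc ∫ ω, q ω ∂ℙ ≤ ∫ ω, (alo ^ β
        + Set.indicator {ω' | ((T h ω' : ℕ) : ℝ) < alo} (fun _ => (h:ℝ) ^ β) ω) ∂ℙ :=
          integral_mono hq_int hint2 hub_pt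
      _ = alo ^ β + (ℙ {ω' | ((T h ω' : ℕ) : ℝ) < alo}).toReal * (h:ℝ) ^ β := by
          rw [integral_add (integrable_const _) ((integrable_const _).indicator hAmeas),
            integral_const, integral_indicator_const _ hAmeas]
          simp [smul_eq_mul, measureReal_def]
  -- lower bound on ∫ q
  have hlb_pt : ∀ ω, Set.indicator {ω' | ((T h ω' : ℕ) : ℝ) ≤ ahi}
      (fun _ => ahi ^ β) ω ≤ q ω := by
    intro ω
    by_cases hω : ω ∈ {ω' | ((T h ω' : ℕ) : ℝ) ≤ ahi}
    · rw [Set.indicator_of_mem hω]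
      exact Real.rpow_le_rpow_of_nonpos (hTpos ω) hω hβneg.le
    · rw [Set.indicator_of_notMem hω]
      exact (hqpos ω).le
  have hlb_I : ahi ^ β * (ℙ {ω' | ((T h ω' : ℕ) : ℝ) ≤ ahi}).toReal ≤ ∫ ω, q ω ∂ℙ := by
    calc ahi ^ β * (ℙ {ω' | ((T h ω' : ℕ) : ℝ) ≤ ahi}).toReal
        = ∫ ω, Set.indicator {ω' | ((T h ω' : ℕ) : ℝ) ≤ ahi} (fun _ => ahi ^ β) ω ∂ℙ := by
          rw [integral_indicator_const _ hCmeas]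
          simp [smul_eq_mul, mul_comm, measureReal_def]
      _ ≤ ∫ ω, q ω ∂ℙ := integral_mono ((integrable_const _).indicator hCmeas) hq_int hlb_pt
  -- probability estimates
  have hplo : (ℙ {ω' | ((T h ω' : ℕ) : ℝ) < alo}).toReal ≤ 400/(ε^2 * Real.log h) := hdevh.1
  have hphi : (ℙ {ω' | ahi < ((T h ω' : ℕ) : ℝ)}).toReal ≤ 400/(ε^2 * Real.log h) := hdevh.2
  have hCc_ge : 1 - ε ≤ (ℙ {ω' | ((T h ω' : ℕ) : ℝ) ≤ ahi}).toReal := by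
    have hcover : (univ : Set Ω) ⊆ {ω' | ((T h ω' : ℕ) : ℝ) ≤ ahi}
        ∪ {ω' | ahi < ((T h ω' : ℕ) : ℝ)} := by
      intro ω _
      rcases le_or_gt ((T h ω : ℕ) : ℝ) ahi with hc | hc
      · exact Or.inl hc
      · exact Or.inr hc
    have h1 : (1:ℝ≥0∞) ≤ ℙ {ω' | ((T h ω' : ℕ) : ℝ) ≤ ahi}
        + ℙ {ω' | ahi < ((T h ω' : ℕ) : ℝ)} := by
      calc (1:ℝ≥0∞) = ℙ (univ : Set Ω) := (measure_univ).symm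
        _ ≤ _ := le_trans (measure_mono hcover) (measure_union_le _ _)
    have h2 : (1:ℝ) ≤ (ℙ {ω' | ((T h ω' : ℕ) : ℝ) ≤ ahi}).toReal
        + (ℙ {ω' | ahi < ((T h ω' : ℕ) : ℝ)}).toReal := by
      have h3 := ENNReal.toReal_mono
        (ENNReal.add_ne_top.2 ⟨measure_ne_top _ _, measure_ne_top _ _⟩) h1
      rwa [ENNReal.toReal_one, ENNReal.toReal_add (measure_ne_top _ _) (measure_ne_top _ _)]
        at h3
    have h4 : (ℙ {ω' | ahi < ((T h ω' : ℕ) : ℝ)}).toReal ≤ ε := le_trans hphi hsm1h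
    linarith
  -- rpow algebra
  have hloglognn : (0:ℝ) ≤ Real.log h := hlogpos.le
  have hALβ : (((h:ℝ) * Real.log h) / (Real.pi^2/6)) ^ β
      = c0 * ((h:ℝ) ^ β * Real.log h ^ β) := by
    have e1 : ((h:ℝ) * Real.log h) / (Real.pi^2/6) = ((h:ℝ) * Real.log h) * (6/Real.pi^2) := by
      rw [div_eq_mul_inv, inv_div]
    rw [e1, Real.mul_rpow (by positivity) (by positivity),
      Real.mul_rpow hhpos.le hloglognn, hc0def]
    ring
  have haloβ : alo ^ β = (1-ε) ^ β * (c0 * ((h:ℝ) ^ β * Real.log h ^ β)) := by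
    rw [halodef, mul_div_assoc, Real.mul_rpow h1ε.le (by positivity), hALβ]
  have hahiβ : ahi ^ β = (1+ε) ^ β * (c0 * ((h:ℝ) ^ β * Real.log h ^ β)) := by
    rw [hahidef, mul_div_assoc, Real.mul_rpow (by linarith) (by positivity), hALβ]
  set G : ℝ := c0 * ((h:ℝ) ^ β * Real.log h ^ β) with hGdef
  have hGpos : 0 < G :=
    mul_pos hc0pos (mul_pos (Real.rpow_pos_of_pos hhpos β) (Real.rpow_pos_of_pos hlogpos β))
  -- error term smallness
  have herr : (ℙ {ω' | ((T h ω' : ℕ) : ℝ) < alo}).toReal * (h:ℝ) ^ β ≤ ε * G := by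
    have h1 : (ℙ {ω' | ((T h ω' : ℕ) : ℝ) < alo}).toReal ≤ ε * (c0 * Real.log h ^ β) :=
      le_trans hplo hsm2h
    have h2 : (0:ℝ) ≤ (h:ℝ) ^ β := (Real.rpow_pos_of_pos hhpos β).le
    calc (ℙ {ω' | ((T h ω' : ℕ) : ℝ) < alo}).toReal * (h:ℝ) ^ β
        ≤ (ε * (c0 * Real.log h ^ β)) * (h:ℝ) ^ β :=
          mul_le_mul_of_nonneg_right h1 h2
      _ = ε * G := by rw [hGdef]; ring
  -- final bounds for σY h
  have hqI_nonneg : 0 ≤ ∫ ω, q ω ∂ℙ := integral_nonneg (fun ω => (hqpos ω).le)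
  have hfinal_ub : σY h ≤ ((1+ε)*((1-ε) ^ β + ε)) * (Cd * G) := by
    calc σY h ≤ (1+ε)*Cd*∫ ω, q ω ∂ℙ := hIub
      _ ≤ (1+ε)*Cd*((1-ε) ^ β * G + ε * G) := by
          apply mul_le_mul_of_nonneg_left _ (by nlinarith [hCd, hε0] : (0:ℝ) ≤ (1+ε)*Cd)
          calc ∫ ω, q ω ∂ℙ ≤ alo ^ β
              + (ℙ {ω' | ((T h ω' : ℕ) : ℝ) < alo}).toReal * (h:ℝ) ^ β := hub_I
            _ ≤ (1-ε) ^ β * G + ε * G := by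
                rw [haloβ]
                linarith [herr]
      _ = ((1+ε)*((1-ε) ^ β + ε)) * (Cd * G) := by ring
  have hfinal_lb : ((1-ε)*(1-ε)*((1+ε) ^ β)) * (Cd * G) ≤ σY h := by
    calc ((1-ε)*(1-ε)*((1+ε) ^ β)) * (Cd * G)
        = (1-ε)*Cd*(((1+ε) ^ β * G) * (1-ε)) := by ring
      _ ≤ (1-ε)*Cd*(∫ ω, q ω ∂ℙ) := by
          apply mul_le_mul_of_nonneg_left _ (by nlinarith [hCd, h1ε] : (0:ℝ) ≤ (1-ε)*Cd)
          calc ((1+ε) ^ β * G) * (1-ε)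
              ≤ ((1+ε) ^ β * G) * (ℙ {ω' | ((T h ω' : ℕ) : ℝ) ≤ ahi}).toReal := by
                apply mul_le_mul_of_nonneg_left hCc_ge
                exact mul_nonneg (Real.rpow_nonneg (by linarith) β) hGpos.le
            _ = ahi ^ β * (ℙ {ω' | ((T h ω' : ℕ) : ℝ) ≤ ahi}).toReal := by rw [hahiβ]
            _ ≤ ∫ ω, q ω ∂ℙ := hlb_I
      _ ≤ σY h := hIlb
  -- conclude
  have hgval : Cd * c0 * (h:ℝ) ^ β * Real.log h ^ β = Cd * G := by rw [hGdef]; ring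
  have hgpos : (0:ℝ) < Cd * c0 * (h:ℝ) ^ β * Real.log h ^ β := by
    rw [hgval]; exact mul_pos hCd hGpos
  rw [Pi.div_apply, Real.dist_eq]
  have hdiv_ub : σY h / (Cd * c0 * (h:ℝ) ^ β * Real.log h ^ β)
      ≤ (1+ε)*((1-ε) ^ β + ε) := by
    rw [div_le_iff₀ hgpos, hgval]
    exact hfinal_ub
  have hdiv_lb : (1-ε)*(1-ε)*((1+ε) ^ β)
      ≤ σY h / (Cd * c0 * (h:ℝ) ^ β * Real.log h ^ β) := by
    rw [le_div_iff₀ hgpos, hgval]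
    exact hfinal_lb
  have habs1 := abs_lt.1 hF1ε
  have habs2 := abs_lt.1 hF2ε
  rw [abs_lt]
  constructor
  · linarith [hdiv_lb, habs2.1]
  · linarith [hdiv_ub, habs1.2]
end
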